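/- arXiv:0707.0362 — 7 statements merged into one kernel-verified Lean document; each statement's English description precedes it below -/
import Mathlib

section
/- Let G be a group and H, K subgroups with H ∩ K = {1}. Then the multiplication map μ : I(K) ⊗_Z I(H) → I(K)·I(H) ⊆ Z[G], given by (k−1) ⊗ (h−1) ↦ (k−1)(h−1), is an isomorphism of abelian groups. -/
open MonoidAlgebra TensorProduct

set_option maxHeartbeats 1000000
set_option synthInstance.maxHeartbeats 400000

/-- The ℤ-submodule of `ℤ[G]` generated by the elements `h - 1`, `h ∈ H`. -/
noncomputable def relAug (G : Type*) [Group G] (H : Subgroup G) :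
    Submodule ℤ (MonoidAlgebra ℤ G) :=
  Submodule.span ℤ {x | ∃ h ∈ H, x = MonoidAlgebra.of ℤ G h - 1}

/-- The multiplication map `μ : I(K) ⊗_ℤ I(H) → ℤ[G]`, `x ⊗ y ↦ x·y`. -/
noncomputable def mulMap (G : Type*) [Group G] (H K : Subgroup G) :
    (↥(relAug G K) ⊗[ℤ] ↥(relAug G H)) →ₗ[ℤ] MonoidAlgebra ℤ G :=
  TensorProduct.lift
    (((LinearMap.mul ℤ (MonoidAlgebra ℤ G)).comp (relAug G K).subtype).compl₂
      (relAug G H).subtype)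

lemma mem_relAug {G : Type*} [Group G] {S : Subgroup G} {s : G} (hs : s ∈ S) :
    MonoidAlgebra.of ℤ G s - 1 ∈ relAug G S :=
  Submodule.subset_span ⟨s, hs, rfl⟩

open scoped Classical in
/-- retraction on basis elements -/
noncomputable def dec (G : Type*) [Group G] (H K : Subgroup G) (g : G) :
    ↥(relAug G K) ⊗[ℤ] ↥(relAug G H) :=
  if hg : ∃ p : K × H, (p.1 : G) * (p.2 : G) = g then
    (⟨_, mem_relAug hg.choose.1.2⟩ : ↥(relAug G K)) ⊗ₜ
      (⟨_, mem_relAug hg.choose.2.2⟩ : ↥(relAug G H))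
  else 0

lemma dec_spec {G : Type*} [Group G] {H K : Subgroup G} (hdisj : H ⊓ K = ⊥)
    (k : K) (h : H) :
    dec G H K ((k : G) * (h : G)) =
      (⟨_, mem_relAug k.2⟩ : ↥(relAug G K)) ⊗ₜ
        (⟨_, mem_relAug h.2⟩ : ↥(relAug G H)) := by
  have hg : ∃ p : K × H, (p.1 : G) * (p.2 : G) = (k : G) * (h : G) := ⟨(k, h), rfl⟩
  have hp := hg.choose_spec
  have e1 : (hg.choose.1 : G) = (k : G) := by
    have hx : (k : G)⁻¹ * (hg.choose.1 : G) ∈ H ⊓ K := by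
      constructor
      · have e : (k : G)⁻¹ * (hg.choose.1 : G) = (h : G) * (hg.choose.2 : G)⁻¹ := by
          rw [inv_mul_eq_iff_eq_mul, ← mul_assoc, eq_mul_inv_iff_mul_eq]
          exact hp
        rw [e]
        exact H.mul_mem h.2 (H.inv_mem hg.choose.2.2)
      · exact K.mul_mem (K.inv_mem k.2) hg.choose.1.2
    rw [hdisj] at hx
    exact (inv_mul_eq_one.mp (Subgroup.mem_bot.mp hx)).symm
  have e2 : (hg.choose.2 : G) = (h : G) := by
    have hp' := hp
    rw [e1] at hp'
    exact mul_left_cancel hp'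
  rw [dec, dif_pos hg]
  congr 1
  · exact Subtype.ext (by show MonoidAlgebra.of ℤ G _ - 1 = _; rw [e1])
  · exact Subtype.ext (by show MonoidAlgebra.of ℤ G _ - 1 = _; rw [e2])

lemma dec_one_right {G : Type*} [Group G] {H K : Subgroup G} (hdisj : H ⊓ K = ⊥) (k : K) :
    dec G H K (k : G) = 0 := by
  have h1 := dec_spec hdisj k (1 : H)
  simp only [OneMemClass.coe_one, mul_one] at h1
  rw [h1]
  have h2 : (⟨MonoidAlgebra.of ℤ G (1 : G) - 1, mem_relAug H.one_mem⟩ : ↥(relAug G H)) = 0 :=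
    Subtype.ext (by simp [MonoidAlgebra.one_def])
  rw [h2, tmul_zero]

lemma dec_one_left {G : Type*} [Group G] {H K : Subgroup G} (hdisj : H ⊓ K = ⊥) (h : H) :
    dec G H K (h : G) = 0 := by
  have h1 := dec_spec hdisj (1 : K) h
  simp only [OneMemClass.coe_one, one_mul] at h1
  rw [h1]
  have h2 : (⟨MonoidAlgebra.of ℤ G (1 : G) - 1, mem_relAug K.one_mem⟩ : ↥(relAug G K)) = 0 :=
    Subtype.ext (by simp [MonoidAlgebra.one_def])
  rw [h2, zero_tmul]

/-- the retraction -/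
noncomputable def retr (G : Type*) [Group G] (H K : Subgroup G) :
    MonoidAlgebra ℤ G →ₗ[ℤ] (↥(relAug G K) ⊗[ℤ] ↥(relAug G H)) :=
  (Finsupp.linearCombination ℤ (dec G H K)).comp (MonoidAlgebra.coeffLinearEquiv ℤ).toLinearMap

lemma retr_of {G : Type*} [Group G] (H K : Subgroup G) (g : G) :
    retr G H K (MonoidAlgebra.of ℤ G g) = dec G H K g := by
  show Finsupp.linearCombination ℤ (dec G H K) (Finsupp.single g 1) = dec G H K g
  simp

lemma mulMap_tmul {G : Type*} [Group G] (H K : Subgroup G) (x : ↥(relAug G K))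
    (y : ↥(relAug G H)) : mulMap G H K (x ⊗ₜ[ℤ] y) = (x : MonoidAlgebra ℤ G) * y := by
  exact TensorProduct.lift.tmul _ _

lemma retr_mul {G : Type*} [Group G] {H K : Subgroup G} (hdisj : H ⊓ K = ⊥) :
    ∀ (a : MonoidAlgebra ℤ G) (ha : a ∈ relAug G K) (b : MonoidAlgebra ℤ G)
      (hb : b ∈ relAug G H),
      retr G H K (a * b) = (⟨a, ha⟩ : ↥(relAug G K)) ⊗ₜ[ℤ] (⟨b, hb⟩ : ↥(relAug G H)) := by
  have key : ∀ (k : K) (b : MonoidAlgebra ℤ G) (hb : b ∈ relAug G H),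
      retr G H K ((MonoidAlgebra.of ℤ G (k : G) - 1) * b)
        = (⟨_, mem_relAug k.2⟩ : ↥(relAug G K)) ⊗ₜ[ℤ] (⟨b, hb⟩ : ↥(relAug G H)) := by
    intro k b hb
    refine Submodule.span_induction (p := fun b hb =>
      retr G H K ((MonoidAlgebra.of ℤ G (k : G) - 1) * b)
        = (⟨_, mem_relAug k.2⟩ : ↥(relAug G K)) ⊗ₜ[ℤ] (⟨b, hb⟩ : ↥(relAug G H)))
      ?_ ?_ ?_ ?_ hb
    · rintro x ⟨h, hh, rfl⟩
      have expand : (MonoidAlgebra.of ℤ G (k : G) - 1) * (MonoidAlgebra.of ℤ G h - 1)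
          = MonoidAlgebra.of ℤ G ((k : G) * h) - MonoidAlgebra.of ℤ G (k : G)
            - MonoidAlgebra.of ℤ G h + MonoidAlgebra.of ℤ G (1 : G) := by
        rw [map_mul, map_one]; noncomm_ring
      rw [expand, map_add, map_sub, map_sub, retr_of, retr_of, retr_of, retr_of]
      have d1 : dec G H K ((k : G) * h)
          = (⟨MonoidAlgebra.of ℤ G (k : G) - 1, mem_relAug k.2⟩ : ↥(relAug G K)) ⊗ₜ[ℤ]
            (⟨MonoidAlgebra.of ℤ G h - 1, mem_relAug hh⟩ : ↥(relAug G H)) :=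
        dec_spec hdisj k ⟨h, hh⟩
      have d2 : dec G H K (k : G) = 0 := dec_one_right hdisj k
      have d3 : dec G H K h = 0 := dec_one_left hdisj ⟨h, hh⟩
      have d4 : dec G H K (1 : G) = 0 := by
        simpa using dec_one_right hdisj (1 : K)
      rw [d1, d2, d3, d4]
      simp
    · simp only [mul_zero, map_zero]
      exact (tmul_zero _ _).symm
    · intro x y hx hy ihx ihy
      rw [mul_add, map_add, ihx, ihy]
      exact (tmul_add _ _ _).symm
    · intro n x hx ih
      rw [mul_smul_comm, map_smul, ih]
      exact (tmul_smul _ _ _).symm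
  intro a ha b hb
  refine Submodule.span_induction (p := fun a ha =>
    retr G H K (a * b) = (⟨a, ha⟩ : ↥(relAug G K)) ⊗ₜ[ℤ] (⟨b, hb⟩ : ↥(relAug G H)))
    ?_ ?_ ?_ ?_ ha
  · rintro x ⟨kk, hk, rfl⟩
    exact key ⟨kk, hk⟩ b hb
  · simp only [zero_mul, map_zero]
    exact (zero_tmul _ _).symm
  · intro x y hx hy ihx ihy
    rw [add_mul, map_add, ihx, ihy]
    exact (add_tmul _ _ _).symm
  · intro n x hx ih
    rw [smul_mul_assoc, map_smul, ih]
    exact (smul_tmul' _ _ _).symm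

/-- if `H ∩ K = 1`, the multiplication map
`I(K) ⊗_ℤ I(H) → ℤ[G]` is injective with image `I(K)·I(H)`, i.e. it is an isomorphism
of abelian groups onto `I(K)·I(H)`. -/
theorem stmt1 (G : Type*) [Group G] (H K : Subgroup G) (hdisj : H ⊓ K = ⊥) :
    Function.Injective (mulMap G H K) ∧
    LinearMap.range (mulMap G H K) = relAug G K * relAug G H := by
  have hcomp : ∀ t, retr G H K (mulMap G H K t) = t := by
    intro t
    induction t using TensorProduct.induction_on with
    | zero => simp
    | tmul x y =>
        rw [mulMap_tmul]
        exact retr_mul hdisj x x.2 y y.2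
    | add x y ihx ihy => rw [map_add, map_add, ihx, ihy]
  constructor
  · intro t1 t2 h12
    rw [← hcomp t1, ← hcomp t2, h12]
  · apply le_antisymm
    · rintro z ⟨t, rfl⟩
      induction t using TensorProduct.induction_on with
      | zero => simp
      | tmul x y =>
          rw [mulMap_tmul]
          exact Submodule.mul_mem_mul x.2 y.2
      | add x y ihx ihy =>
          rw [map_add]
          exact add_mem ihx ihy
    · rw [Submodule.mul_le]
      intro a ha b hb
      exact ⟨(⟨a, ha⟩ : ↥(relAug G K)) ⊗ₜ[ℤ] (⟨b, hb⟩ : ↥(relAug G H)), mulMap_tmul H K _ _⟩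
end

section
/- Let G be a group, H and K subgroups with H ∩ K = {1}, and let J be a left ideal of Z[H] contained in I(H), viewed inside Z[G]. Then there is a short exact sequence of abelian groups 0 → I(K)·I(H)·J → I(K)·J → I(K) ⊗_Z (J/I(H)J) → 0, where the right-hand map sends (k−1)x to (k−1) ⊗ (x + I(H)J) for k ∈ K, x ∈ J. -/
open MonoidAlgebra TensorProduct

namespace Stmt2Aux

variable {G : Type*} [Group G]

lemma mem_relAug {H : Subgroup G} {h : G} (hh : h ∈ H) :
    MonoidAlgebra.of ℤ G h - 1 ∈ relAug G H :=
  Submodule.subset_span ⟨h, hh, rfl⟩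

lemma relAug_apply_eq_zero {H : Subgroup G} {x : MonoidAlgebra ℤ G}
    (hx : x ∈ relAug G H) {g : G} (hg : g ∉ H) : x.coeff g = 0 := by
  have hle : relAug G H ≤ LinearMap.ker ((Finsupp.lapply g).comp (MonoidAlgebra.coeffLinearEquiv ℤ).toLinearMap : MonoidAlgebra ℤ G →ₗ[ℤ] ℤ) := by
    rw [relAug, Submodule.span_le]
    rintro _ ⟨h, hh, rfl⟩
    have h1 : (MonoidAlgebra.of ℤ G h).coeff = Finsupp.single h (1:ℤ) := rfl
    have h2 : (1 : MonoidAlgebra ℤ G).coeff = Finsupp.single (1:G) (1:ℤ) := rfl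
    classical
    have hz : (Finsupp.single h (1:ℤ) - Finsupp.single (1:G) (1:ℤ)) g = 0 := by
      rw [Finsupp.sub_apply, Finsupp.single_apply, Finsupp.single_apply,
        if_neg (fun e : h = g => hg (e ▸ hh)), if_neg (fun e : (1:G) = g => hg (e ▸ H.one_mem)), sub_zero]
    simpa [MonoidAlgebra.coeff_sub, h1, h2] using hz
  exact hle hx

lemma key (H K : Subgroup G) (hdisj : H ⊓ K = ⊥)
    (f : {k : ↥K // k ≠ 1} →₀ MonoidAlgebra ℤ G)
    (hsupp : ∀ i g, g ∉ H → (f i).coeff g = 0)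
    (hsum : (f.sum fun i x => (MonoidAlgebra.of ℤ G ((i : ↥K) : G) - 1) * x) = 0) :
    f = 0 := by
  classical
  have hHK : ∀ g : G, g ∈ H → g ∈ K → g = 1 := by
    intro g hgH hgK
    have : g ∈ H ⊓ K := ⟨hgH, hgK⟩
    rwa [hdisj, Subgroup.mem_bot] at this
  ext i g
  simp only [MonoidAlgebra.coeff_zero, Finsupp.coe_zero, Pi.zero_apply]
  by_cases hgH : g ∈ H
  swap
  · exact hsupp i g hgH
  set k : G := ((i : ↥K) : G) with hkdef
  have hkK : k ∈ K := (i : ↥K).2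
  have hk1 : k ≠ 1 := fun e =>
    i.2 (Subtype.ext (by rw [OneMemClass.coe_one]; exact e))
  -- k * g is not in H
  have hkg : k * g ∉ H := by
    intro hmem
    exact hk1 (hHK k (by simpa using H.mul_mem hmem (H.inv_mem hgH)) hkK)
  have heval := congrArg (fun z : MonoidAlgebra ℤ G => z.coeff (k * g)) hsum
  simp only [MonoidAlgebra.coeff_zero, Finsupp.coe_zero, Pi.zero_apply] at heval
  rw [MonoidAlgebra.coeff_finsuppSum, Finsupp.sum_apply] at heval
  -- identify each term
  have hterm : ∀ j : {k : ↥K // k ≠ 1},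
      ((MonoidAlgebra.of ℤ G ((j : ↥K) : G) - 1) * f j).coeff (k * g)
        = (f j).coeff (((j : ↥K) : G)⁻¹ * (k * g)) := by
    intro j
    have : (MonoidAlgebra.of ℤ G ((j : ↥K) : G) - 1) * f j
        = MonoidAlgebra.single ((j : ↥K) : G) (1:ℤ) * f j - f j := by
      rw [sub_mul, one_mul]; rfl
    rw [this, MonoidAlgebra.coeff_sub, Finsupp.sub_apply, MonoidAlgebra.coeff_single_mul_apply, one_mul,
      hsupp j (k * g) hkg, sub_zero]
  have hz : ∀ j ∈ f.support, j ≠ i →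
      ((MonoidAlgebra.of ℤ G ((j : ↥K) : G) - 1) * f j).coeff (k * g) = 0 := by
    intro j _ hji
    rw [hterm j]
    apply hsupp
    intro hmem
    set kj : G := ((j : ↥K) : G)
    have h1 : kj⁻¹ * k ∈ H := by
      have := H.mul_mem hmem (H.inv_mem hgH)
      simpa [mul_assoc] using this
    have h2 : kj⁻¹ * k ∈ K := K.mul_mem (K.inv_mem (j : ↥K).2) hkK
    have h3 : kj⁻¹ * k = 1 := hHK _ h1 h2
    rw [inv_mul_eq_one] at h3
    exact hji (Subtype.ext (Subtype.ext h3))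
  rw [Finsupp.sum, Finset.sum_eq_single i hz (by
    intro hi
    simp [Finsupp.notMem_support_iff.mp hi])] at heval
  rw [hterm i, inv_mul_cancel_left] at heval
  exact heval

lemma relAug_li (K : Subgroup G) :
    LinearIndependent ℤ
      (fun i : {k : ↥K // k ≠ 1} => MonoidAlgebra.of ℤ G ((i : ↥K) : G) - 1) := by
  classical
  rw [linearIndependent_iff]
  intro l hl
  ext i
  set k : G := ((i : ↥K) : G) with hkdef
  have hk1 : k ≠ 1 := fun e =>
    i.2 (Subtype.ext (by rw [OneMemClass.coe_one]; exact e))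
  have heval := congrArg (fun z : MonoidAlgebra ℤ G => z.coeff k) hl
  rw [Finsupp.linearCombination_apply] at heval
  simp only [MonoidAlgebra.coeff_zero, Finsupp.coe_zero, Pi.zero_apply] at heval
  rw [MonoidAlgebra.coeff_finsuppSum, Finsupp.sum_apply] at heval
  have hterm : ∀ j c, (c • (MonoidAlgebra.of ℤ G ((j : ↥K) : G) - 1)).coeff k
      = c * ((MonoidAlgebra.single ((j : ↥K) : G) (1:ℤ)).coeff k) := by
    intro j c
    have h2 : (1 : MonoidAlgebra ℤ G).coeff = Finsupp.single (1:G) (1:ℤ) := rfl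
    rw [MonoidAlgebra.coeff_smul, Finsupp.smul_apply, MonoidAlgebra.coeff_sub, Finsupp.sub_apply]
    have : (MonoidAlgebra.of ℤ G ((j : ↥K) : G)).coeff k
        = (MonoidAlgebra.single ((j : ↥K) : G) (1:ℤ)).coeff k := rfl
    rw [this, h2, Finsupp.single_apply (a := (1:G)), if_neg (fun e : (1:G) = k => hk1 e.symm),
      sub_zero, smul_eq_mul]
  have hz : ∀ j ∈ l.support, j ≠ i →
      (l j • (MonoidAlgebra.of ℤ G ((j : ↥K) : G) - 1)).coeff k = 0 := by
    intro j _ hji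
    rw [hterm j, MonoidAlgebra.coeff_single_apply, if_neg, mul_zero]
    intro e
    exact hji (Subtype.ext (Subtype.ext e))
  rw [Finsupp.sum, Finset.sum_eq_single i hz (by
    intro hi
    simp [Finsupp.notMem_support_iff.mp hi])] at heval
  rw [hterm i, MonoidAlgebra.coeff_single_apply, if_pos rfl, mul_one] at heval
  exact heval

lemma relAug_span (K : Subgroup G) :
    Submodule.span ℤ
      (Set.range fun i : {k : ↥K // k ≠ 1} => MonoidAlgebra.of ℤ G ((i : ↥K) : G) - 1)
      = relAug G K := by
  apply le_antisymm
  · rw [Submodule.span_le]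
    rintro _ ⟨i, rfl⟩
    exact mem_relAug (i : ↥K).2
  · rw [relAug, Submodule.span_le]
    rintro _ ⟨h, hh, rfl⟩
    by_cases h1 : h = 1
    · subst h1
      rw [show MonoidAlgebra.of ℤ G (1:G) - 1 = 0 from by rw [map_one, sub_self]]
      exact zero_mem _
    · have hne : (⟨h, hh⟩ : ↥K) ≠ 1 := by
        intro e
        exact h1 (congrArg Subtype.val e)
      exact Submodule.subset_span ⟨⟨⟨h, hh⟩, hne⟩, rfl⟩

noncomputable def relAugBasis (K : Subgroup G) :
    Module.Basis {k : ↥K // k ≠ 1} ℤ ↥(relAug G K) :=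
  (Module.Basis.span (relAug_li K)).map (LinearEquiv.ofEq _ _ (relAug_span K))

lemma relAugBasis_coe (K : Subgroup G) (i : {k : ↥K // k ≠ 1}) :
    ((relAugBasis K i : ↥(relAug G K)) : MonoidAlgebra ℤ G)
      = MonoidAlgebra.of ℤ G ((i : ↥K) : G) - 1 := by
  rw [relAugBasis, Module.Basis.map_apply]
  have := Module.Basis.span_apply (relAug_li (G := G) K) i
  simpa using this

lemma mulMap_inj (H K : Subgroup G) (hdisj : H ⊓ K = ⊥)
    (J : Submodule ℤ (MonoidAlgebra ℤ G)) (hJle : J ≤ relAug G H) :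
    Function.Injective (Submodule.mulMap (relAug G K) J) := by
  classical
  let b := relAugBasis (G := G) K
  let e :=
    (TensorProduct.congr b.repr (LinearEquiv.refl ℤ ↥J)).trans
      (TensorProduct.finsuppScalarLeft ℤ ↥J {k : ↥K // k ≠ 1})
  let L : ({k : ↥K // k ≠ 1} →₀ ↥J) →ₗ[ℤ] MonoidAlgebra ℤ G :=
    Finsupp.lsum ℤ fun i =>
      (LinearMap.mulLeft ℤ (MonoidAlgebra.of ℤ G ((i : ↥K) : G) - 1)).comp J.subtype
  have hcomp : (Submodule.mulMap (relAug G K) J).comp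
      (e.symm.toLinearMap : ({k : ↥K // k ≠ 1} →₀ ↥J) →ₗ[ℤ] _) = L := by
    apply Finsupp.lhom_ext
    intro i x
    have he : e.symm (Finsupp.single i x) = b i ⊗ₜ[ℤ] x := by
      simp only [e, LinearEquiv.trans_symm, LinearEquiv.trans_apply,
        TensorProduct.finsuppScalarLeft_symm_apply_single, TensorProduct.congr_symm_tmul,
        LinearEquiv.refl_symm, LinearEquiv.refl_apply, Module.Basis.repr_symm_single_one]
    simp only [LinearMap.comp_apply, LinearEquiv.coe_coe, he, Submodule.mulMap_tmul,
      b, relAugBasis_coe, L, Finsupp.lsum_single, LinearMap.mulLeft_apply, Submodule.coe_subtype]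
  have hLker : ∀ f, L f = 0 → f = 0 := by
    intro f hf
    let F : {k : ↥K // k ≠ 1} →₀ MonoidAlgebra ℤ G :=
      f.mapRange (Subtype.val : ↥J → MonoidAlgebra ℤ G) rfl
    have hFapp : ∀ i, F i = ((f i : ↥J) : MonoidAlgebra ℤ G) := by
      intro i; simp [F, Finsupp.mapRange_apply]
    have hFsum : (F.sum fun i x => (MonoidAlgebra.of ℤ G ((i : ↥K) : G) - 1) * x) = L f := by
      rw [Finsupp.sum_mapRange_index (fun i => mul_zero _)]
      simp [L, Finsupp.lsum_apply, Finsupp.sum]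
    have hF0 : F = 0 := by
      refine key H K hdisj F ?_ (by rw [hFsum, hf])
      intro i g hg
      rw [hFapp i]
      exact relAug_apply_eq_zero (hJle (f i).2) hg
    refine Finsupp.ext fun i => ?_
    have : F i = 0 := by rw [hF0]; rfl
    rw [hFapp i] at this
    exact Subtype.ext this
  have hm : ∀ t, Submodule.mulMap (relAug G K) J t = L (e t) := by
    intro t
    have := LinearMap.congr_fun hcomp (e t)
    simpa using this
  intro a c hac
  apply e.injective
  have : L (e a) = L (e c) := by rw [← hm a, ← hm c]; exact hac
  have hd : L (e a - e c) = 0 := by rw [map_sub, this, sub_self]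
  have := hLker _ hd
  exact sub_eq_zero.mp this

end Stmt2Aux

set_option synthInstance.maxHeartbeats 1000000
set_option maxHeartbeats 1600000

/-- for `H ∩ K = 1` and `J` a left ideal of `ℤ[H]` contained in `I(H)`
(viewed inside `ℤ[G]`), there is a short exact sequence
`0 → I(K)·I(H)·J → I(K)·J → I(K) ⊗_ℤ (J/I(H)J) → 0`, the right-hand map sending
`(k−1)x ↦ (k−1) ⊗ (x + I(H)J)`. We state this as: there is a surjective map `s` with
kernel `I(K)I(H)J` satisfying this formula. -/
theorem stmt2 (G : Type*) [Group G] (H K : Subgroup G) (hdisj : H ⊓ K = ⊥)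
    (J : Submodule ℤ (MonoidAlgebra ℤ G)) (hJle : J ≤ relAug G H)
    (hJideal : ∀ h ∈ H, ∀ x ∈ J, MonoidAlgebra.of ℤ G h * x ∈ J) :
    ∃ s : ↥(relAug G K * J) →ₗ[ℤ]
        (↥(relAug G K) ⊗[ℤ] (↥J ⧸ (relAug G H * J).comap J.subtype)),
      Function.Surjective s ∧
      LinearMap.ker s =
        (relAug G K * (relAug G H * J)).comap (relAug G K * J).subtype ∧
      ∀ (k : G) (hk : k ∈ K) (x : MonoidAlgebra ℤ G) (hx : x ∈ J)
        (hmem : (MonoidAlgebra.of ℤ G k - 1) * x ∈ relAug G K * J)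
        (hk' : MonoidAlgebra.of ℤ G k - 1 ∈ relAug G K),
        s ⟨(MonoidAlgebra.of ℤ G k - 1) * x, hmem⟩ =
          (⟨MonoidAlgebra.of ℤ G k - 1, hk'⟩ : ↥(relAug G K)) ⊗ₜ[ℤ]
            Submodule.Quotient.mk (⟨x, hx⟩ : ↥J) := by
  classical
  set N : Submodule ℤ ↥J := (relAug G H * J).comap J.subtype with hN
  set m := Submodule.mulMap (relAug G K) J with hm
  have hinj : Function.Injective m := Stmt2Aux.mulMap_inj H K hdisj J hJle
  let ee : (↥(relAug G K) ⊗[ℤ] ↥J) ≃ₗ[ℤ] ↥(relAug G K * J) :=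
    (LinearEquiv.ofInjective m hinj).trans
      (LinearEquiv.ofEq _ _ (Submodule.mulMap_range _ _))
  let T : (↥(relAug G K) ⊗[ℤ] ↥J) →ₗ[ℤ] (↥(relAug G K) ⊗[ℤ] (↥J ⧸ N)) :=
    LinearMap.lTensor _ N.mkQ
  have hcoe : ∀ t, ((ee t : ↥(relAug G K * J)) : MonoidAlgebra ℤ G) = m t := by
    intro t
    rfl
  have hcoe' : ∀ y : ↥(relAug G K * J), m (ee.symm y) = (y : MonoidAlgebra ℤ G) := by
    intro y
    rw [← hcoe (ee.symm y), LinearEquiv.apply_symm_apply]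
  have hHJle : relAug G H * J ≤ J := by
    rw [Submodule.mul_le]
    intro a ha x hx
    have hle : relAug G H ≤ J.comap (LinearMap.mulRight ℤ x) := by
      rw [relAug, Submodule.span_le]
      rintro _ ⟨h, hh, rfl⟩
      simp only [SetLike.mem_coe, Submodule.mem_comap, LinearMap.mulRight_apply, sub_mul,
        one_mul]
      exact sub_mem (hJideal h hh x hx) hx
    simpa using hle ha
  have hker : LinearMap.ker T
      = LinearMap.range (LinearMap.lTensor ↥(relAug G K) N.subtype) :=
    (lTensor_exact ↥(relAug G K) (LinearMap.exact_subtype_mkQ N)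
      (Submodule.mkQ_surjective N)).linearMap_ker_eq
  have hr2 : LinearMap.range (m ∘ₗ LinearMap.lTensor ↥(relAug G K) N.subtype)
      = relAug G K * (relAug G H * J) := by
    apply le_antisymm
    · rintro _ ⟨t, rfl⟩
      induction t with
      | zero =>
          rw [map_zero]
          exact zero_mem _
      | tmul c n =>
          have : (m ∘ₗ LinearMap.lTensor ↥(relAug G K) N.subtype) (c ⊗ₜ[ℤ] n)
              = (c : MonoidAlgebra ℤ G) * ((n : ↥J) : MonoidAlgebra ℤ G) := by
            simp [m, LinearMap.lTensor_tmul]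
          rw [this]
          exact Submodule.mul_mem_mul c.2 n.2
      | add a b ha hb =>
          rw [map_add]
          exact add_mem ha hb
    · rw [Submodule.mul_le]
      intro a ha z hz
      exact ⟨(⟨a, ha⟩ : ↥(relAug G K)) ⊗ₜ[ℤ] (⟨⟨z, hHJle hz⟩, hz⟩ : ↥N),
        by simp [m, LinearMap.lTensor_tmul]⟩
  refine ⟨T ∘ₗ (ee.symm : ↥(relAug G K * J) →ₗ[ℤ] _), ?_, ?_, ?_⟩
  · exact (LinearMap.lTensor_surjective _ (Submodule.mkQ_surjective N)).comp
      ee.symm.surjective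
  · ext y
    simp only [LinearMap.mem_ker, LinearMap.comp_apply, LinearEquiv.coe_coe,
      Submodule.mem_comap, Submodule.coe_subtype]
    constructor
    · intro h0
      have hmem : ee.symm y ∈ LinearMap.ker T := h0
      rw [hker] at hmem
      obtain ⟨t, ht⟩ := hmem
      have : (m ∘ₗ LinearMap.lTensor ↥(relAug G K) N.subtype) t = (y : MonoidAlgebra ℤ G) := by
        rw [LinearMap.comp_apply, ht, hcoe']
      rw [← hr2]
      exact ⟨t, this⟩
    · intro hy
      rw [← hr2] at hy
      obtain ⟨t, ht⟩ := hy
      have heq : LinearMap.lTensor ↥(relAug G K) N.subtype t = ee.symm y := by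
        apply hinj
        rw [hcoe']
        exact ht
      have : ee.symm y ∈ LinearMap.ker T := by
        rw [hker]
        exact ⟨t, heq⟩
      exact this
  · intro k hk x hx hmem hk'
    have h1 : ee.symm ⟨(MonoidAlgebra.of ℤ G k - 1) * x, hmem⟩
        = (⟨MonoidAlgebra.of ℤ G k - 1, hk'⟩ : ↥(relAug G K)) ⊗ₜ[ℤ] (⟨x, hx⟩ : ↥J) := by
      rw [LinearEquiv.symm_apply_eq]
      apply Subtype.ext
      rw [hcoe]
      simp [m]
    rw [LinearMap.comp_apply, LinearEquiv.coe_coe, h1]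
    simp only [T, LinearMap.lTensor_tmul, Submodule.mkQ_apply]
    exact LinearMap.lTensor_tmul _ _ _ _
end

section
/- Let G = N ⋊ T be a semidirect product of a normal subgroup N and a subgroup T. Then I(G) = I(N) ⊕ I(T) ⊕ I(N)I(T) as abelian groups (internal direct sum of additive subgroups of Z[G]). -/
open MonoidAlgebra

/-- The augmentation ideal `I(G)` of `ℤ[G]`, as a ℤ-submodule. -/
noncomputable def augI (G : Type*) [Group G] : Submodule ℤ (MonoidAlgebra ℤ G) :=
  Submodule.span ℤ {x | ∃ g : G, x = MonoidAlgebra.of ℤ G g - 1}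

/-- for `G = N ⋊ T` (internal semidirect product),
`I(G) = I(N) ⊕ I(T) ⊕ I(N)I(T)` as abelian groups: the three additive subgroups sum
to `I(G)` and form an internal direct sum. -/
theorem stmt3 (G : Type*) [Group G] (N T : Subgroup G) [N.Normal]
    (hdisj : N ⊓ T = ⊥) (hjoin : N ⊔ T = ⊤) :
    relAug G N ⊔ relAug G T ⊔ relAug G N * relAug G T = augI G ∧
    relAug G N ⊓ (relAug G T ⊔ relAug G N * relAug G T) = ⊥ ∧
    relAug G T ⊓ (relAug G N ⊔ relAug G N * relAug G T) = ⊥ ∧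
    (relAug G N * relAug G T) ⊓ (relAug G N ⊔ relAug G T) = ⊥ := by
  classical
  -- existence of the decomposition g = n * t
  have hex : ∀ g : G, ∃ n t : G, n ∈ N ∧ t ∈ T ∧ g = n * t := by
    intro g
    have hg : g ∈ ((N ⊔ T : Subgroup G) : Set G) := by rw [hjoin]; trivial
    rw [Subgroup.normal_mul] at hg
    obtain ⟨n, hn, t, ht, h⟩ := hg
    exact ⟨n, t, hn, ht, h.symm⟩
  choose ν τ hνmem hτmem hdec using hex
  -- uniqueness of the decomposition
  have huniq : ∀ n t : G, n ∈ N → t ∈ T → ν (n * t) = n ∧ τ (n * t) = t := by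
    intro n t hn ht
    have h := hdec (n * t)
    have e : n⁻¹ * ν (n * t) = t * (τ (n * t))⁻¹ := by
      apply mul_left_cancel (a := n)
      apply mul_right_cancel (b := τ (n * t))
      calc n * (n⁻¹ * ν (n * t)) * τ (n * t) = ν (n * t) * τ (n * t) := by group
        _ = n * t := h.symm
        _ = n * (t * (τ (n * t))⁻¹) * τ (n * t) := by group
    have h1 : n⁻¹ * ν (n * t) ∈ N := mul_mem (inv_mem hn) (hνmem _)
    have h2 : n⁻¹ * ν (n * t) ∈ T := e ▸ mul_mem ht (inv_mem (hτmem _))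
    have h3 : n⁻¹ * ν (n * t) ∈ N ⊓ T := ⟨h1, h2⟩
    rw [hdisj, Subgroup.mem_bot] at h3
    have hν : ν (n * t) = n := by
      have := h3; group at this ⊢
      calc ν (n * t) = n * (n⁻¹ * ν (n * t)) := by group
        _ = n := by rw [h3, mul_one]
    refine ⟨hν, ?_⟩
    have := h
    rw [hν] at this
    exact (mul_left_cancel this).symm
  have hν1 : ν 1 = 1 := by
    have := (huniq 1 1 (one_mem N) (one_mem T)).1; rwa [mul_one] at this
  have hτ1 : τ 1 = 1 := by
    have := (huniq 1 1 (one_mem N) (one_mem T)).2; rwa [mul_one] at this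
  have hνn : ∀ n ∈ N, ν n = n ∧ τ n = 1 := by
    intro n hn
    have := huniq n 1 hn (one_mem T); rwa [mul_one] at this
  have hνt : ∀ t ∈ T, ν t = 1 ∧ τ t = t := by
    intro t ht
    have := huniq 1 t (one_mem N) ht; rwa [one_mul] at this
  -- the two linear projections
  set φN : MonoidAlgebra ℤ G →ₗ[ℤ] MonoidAlgebra ℤ G := MonoidAlgebra.mapDomainLinearMap ℤ ℤ ν with hφN
  set φT : MonoidAlgebra ℤ G →ₗ[ℤ] MonoidAlgebra ℤ G := MonoidAlgebra.mapDomainLinearMap ℤ ℤ τ with hφT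
  have φNof : ∀ g : G, φN (of ℤ G g) = of ℤ G (ν g) := fun g => MonoidAlgebra.mapDomainLinearMap_single ν 1 g
  have φTof : ∀ g : G, φT (of ℤ G g) = of ℤ G (τ g) := fun g => MonoidAlgebra.mapDomainLinearMap_single τ 1 g
  have hone : (1 : MonoidAlgebra ℤ G) = of ℤ G 1 := (map_one (of ℤ G)).symm
  have φN1 : φN 1 = 1 := by rw [hone, φNof, hν1]
  have φT1 : φT 1 = 1 := by rw [hone, φTof, hτ1]
  -- values on the generators
  have genN : ∀ n ∈ N, φN (of ℤ G n - 1) = of ℤ G n - 1 ∧ φT (of ℤ G n - 1) = 0 := by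
    intro n hn
    rw [map_sub, map_sub, φN1, φT1, φNof, φTof, (hνn n hn).1, (hνn n hn).2, hone]
    exact ⟨rfl, sub_self _⟩
  have genT : ∀ t ∈ T, φN (of ℤ G t - 1) = 0 ∧ φT (of ℤ G t - 1) = of ℤ G t - 1 := by
    intro t ht
    rw [map_sub, map_sub, φN1, φT1, φNof, φTof, (hνt t ht).1, (hνt t ht).2, hone]
    exact ⟨sub_self _, rfl⟩
  have genNT : ∀ n ∈ N, ∀ t ∈ T, ∀ φ : MonoidAlgebra ℤ G →ₗ[ℤ] MonoidAlgebra ℤ G,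
      (∀ g : G, φ (of ℤ G g) = of ℤ G (ν g)) ∨ (∀ g : G, φ (of ℤ G g) = of ℤ G (τ g)) →
      φ ((of ℤ G n - 1) * (of ℤ G t - 1)) = 0 := by
    intro n hn t ht φ hφ
    have hexp : (of ℤ G n - 1) * (of ℤ G t - 1)
        = of ℤ G (n * t) - of ℤ G n - of ℤ G t + of ℤ G 1 := by
      rw [map_mul (of ℤ G), map_one (of ℤ G)]; noncomm_ring
    rw [hexp]
    rcases hφ with hφ | hφ <;>
      rw [map_add, map_sub, map_sub, hφ, hφ, hφ, hφ]
    · rw [(huniq n t hn ht).1, (hνn n hn).1, (hνt t ht).1, hν1]; abel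
    · rw [(huniq n t hn ht).2, (hνn n hn).2, (hνt t ht).2, hτ1]; abel
  -- behaviour on the three submodules
  have spanN : ∀ x ∈ relAug G N, φN x = x ∧ φT x = 0 := by
    intro x hx
    induction hx using Submodule.span_induction with
    | mem x hx =>
      obtain ⟨n, hn, rfl⟩ := hx
      exact genN n hn
    | zero => simp
    | add x y hx hy ihx ihy =>
      rw [map_add, map_add, ihx.1, ihy.1, ihx.2, ihy.2]; exact ⟨rfl, by abel⟩
    | smul a x hx ih =>
      rw [map_smul, map_smul, ih.1, ih.2]; exact ⟨rfl, smul_zero a⟩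
  have spanT : ∀ x ∈ relAug G T, φN x = 0 ∧ φT x = x := by
    intro x hx
    induction hx using Submodule.span_induction with
    | mem x hx =>
      obtain ⟨t, ht, rfl⟩ := hx
      exact genT t ht
    | zero => simp
    | add x y hx hy ihx ihy =>
      rw [map_add, map_add, ihx.1, ihy.1, ihx.2, ihy.2]; exact ⟨by abel, rfl⟩
    | smul a x hx ih =>
      rw [map_smul, map_smul, ih.1, ih.2]; exact ⟨smul_zero a, rfl⟩
  have spanNT : ∀ φ : MonoidAlgebra ℤ G →ₗ[ℤ] MonoidAlgebra ℤ G,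
      (∀ g : G, φ (of ℤ G g) = of ℤ G (ν g)) ∨ (∀ g : G, φ (of ℤ G g) = of ℤ G (τ g)) →
      ∀ x ∈ relAug G N * relAug G T, φ x = 0 := by
    intro φ hφ x hx
    refine Submodule.mul_induction_on hx ?_ ?_
    · intro m hm q hq
      induction hm using Submodule.span_induction with
      | mem m hm =>
        obtain ⟨n, hn, rfl⟩ := hm
        induction hq using Submodule.span_induction with
        | mem q hq =>
          obtain ⟨t, ht, rfl⟩ := hq
          exact genNT n hn t ht φ hφ
        | zero => simp
        | add x y hx hy ihx ihy => rw [mul_add, map_add, ihx, ihy, add_zero]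
        | smul a x hx ih => rw [mul_smul_comm, map_smul, ih, smul_zero]
      | zero => simp
      | add x y hx hy ihx ihy => rw [add_mul, map_add, ihx, ihy, add_zero]
      | smul a x hx ih => rw [smul_mul_assoc, map_smul, ih, smul_zero]
    · intro x y hx hy; rw [map_add, hx, hy, add_zero]
  -- the augmentation map
  set ε : MonoidAlgebra ℤ G →ₐ[ℤ] ℤ := MonoidAlgebra.lift ℤ ℤ G 1 with hε
  have εof : ∀ g : G, ε (of ℤ G g) = 1 := by
    intro g; rw [hε, MonoidAlgebra.lift_of]; rfl
  have εgen : ∀ g : G, ε (of ℤ G g - 1) = 0 := by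
    intro g; rw [map_sub, map_one, εof, sub_self]
  have haugker : ∀ x ∈ augI G, ε x = 0 := by
    intro x hx
    induction hx using Submodule.span_induction with
    | mem x hx => obtain ⟨g, rfl⟩ := hx; exact εgen g
    | zero => simp
    | add x y hx hy ihx ihy => rw [map_add, ihx, ihy, add_zero]
    | smul a x hx ih => rw [map_smul, ih, smul_zero]
  have hkeraug : ∀ x : MonoidAlgebra ℤ G, ε x = 0 → x ∈ augI G := by
    have key : ∀ x : MonoidAlgebra ℤ G, x - (ε x) • (1 : MonoidAlgebra ℤ G) ∈ augI G := by
      intro x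
      induction x using MonoidAlgebra.induction_on with
      | of g => rw [εof, one_smul]; exact Submodule.subset_span ⟨g, rfl⟩
      | add f g hf hg =>
        have : f + g - ε (f + g) • (1 : MonoidAlgebra ℤ G)
            = (f - ε f • (1 : MonoidAlgebra ℤ G)) + (g - ε g • (1 : MonoidAlgebra ℤ G)) := by
          rw [map_add, add_smul]; abel
        rw [this]; exact add_mem hf hg
      | smul r f hf =>
        have : r • f - ε (r • f) • (1 : MonoidAlgebra ℤ G)
            = r • (f - ε f • (1 : MonoidAlgebra ℤ G)) := by
          rw [map_smul, smul_sub, smul_smul, smul_eq_mul]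
        rw [this]; exact Submodule.smul_mem _ _ hf
    intro x hx
    have := key x
    rwa [hx, zero_smul, sub_zero] at this
  -- the three submodules are contained in augI
  have hNle : relAug G N ≤ augI G :=
    Submodule.span_mono (fun x hx => by obtain ⟨n, _, rfl⟩ := hx; exact ⟨n, rfl⟩)
  have hTle : relAug G T ≤ augI G :=
    Submodule.span_mono (fun x hx => by obtain ⟨t, _, rfl⟩ := hx; exact ⟨t, rfl⟩)
  have hNTle : relAug G N * relAug G T ≤ augI G := by
    rw [Submodule.mul_le]
    intro m hm q hq
    apply hkeraug
    rw [map_mul, haugker m (hNle hm), zero_mul]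
  refine ⟨?_, ?_, ?_, ?_⟩
  · -- sum equals augI
    apply le_antisymm
    · exact sup_le (sup_le hNle hTle) hNTle
    · rw [augI, Submodule.span_le]
      rintro x ⟨g, rfl⟩
      have hgd := hdec g
      have hN' : of ℤ G (ν g) - 1 ∈ relAug G N :=
        Submodule.subset_span ⟨ν g, hνmem g, rfl⟩
      have hT' : of ℤ G (τ g) - 1 ∈ relAug G T :=
        Submodule.subset_span ⟨τ g, hτmem g, rfl⟩
      have hprod : (of ℤ G (ν g) - 1) * (of ℤ G (τ g) - 1) ∈ relAug G N * relAug G T :=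
        Submodule.mul_mem_mul hN' hT'
      have hid : of ℤ G g - 1 = (of ℤ G (ν g) - 1) + (of ℤ G (τ g) - 1)
          + (of ℤ G (ν g) - 1) * (of ℤ G (τ g) - 1) := by
        have : of ℤ G g = of ℤ G (ν g) * of ℤ G (τ g) := by
          rw [← map_mul (of ℤ G), ← hgd]
        rw [this]; noncomm_ring
      rw [SetLike.mem_coe, hid]
      exact add_mem (add_mem
        (Submodule.mem_sup_left (Submodule.mem_sup_left hN'))
        (Submodule.mem_sup_left (Submodule.mem_sup_right hT')))
        (Submodule.mem_sup_right hprod)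
  · -- relAug N ⊓ (relAug T ⊔ NT) = ⊥
    rw [eq_bot_iff]
    rintro x ⟨hx1, hx2⟩
    obtain ⟨y, hy, z, hz, rfl⟩ := Submodule.mem_sup.mp hx2
    have h1 : φN (y + z) = y + z := (spanN _ hx1).1
    have h2 : φN (y + z) = 0 := by
      rw [map_add, (spanT y hy).1, spanNT φN (Or.inl φNof) z hz, add_zero]
    rw [Submodule.mem_bot, ← h1, h2]
  · -- relAug T ⊓ (relAug N ⊔ NT) = ⊥
    rw [eq_bot_iff]
    rintro x ⟨hx1, hx2⟩
    obtain ⟨y, hy, z, hz, rfl⟩ := Submodule.mem_sup.mp hx2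
    have h1 : φT (y + z) = y + z := (spanT _ hx1).2
    have h2 : φT (y + z) = 0 := by
      rw [map_add, (spanN y hy).2, spanNT φT (Or.inr φTof) z hz, add_zero]
    rw [Submodule.mem_bot, ← h1, h2]
  · -- NT ⊓ (relAug N ⊔ relAug T) = ⊥
    rw [eq_bot_iff]
    rintro x ⟨hx1, hx2⟩
    obtain ⟨y, hy, z, hz, rfl⟩ := Submodule.mem_sup.mp hx2
    have hyz : y = 0 := by
      have h1 : φN (y + z) = 0 := spanNT φN (Or.inl φNof) _ hx1
      rwa [map_add, (spanN y hy).1, (spanT z hz).1, add_zero] at h1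
    have hzz : z = 0 := by
      have h1 : φT (y + z) = 0 := spanNT φT (Or.inr φTof) _ hx1
      rwa [map_add, (spanN y hy).2, (spanT z hz).2, zero_add] at h1
    rw [Submodule.mem_bot, hyz, hzz, add_zero]
end

section
/- Let G = N ⋊ T. Then I(G) = I(T) ⊕ I(N) ⊕ I(T)I(N) as abelian groups. -/
open MonoidAlgebra Pointwise

/-- for `G = N ⋊ T` (internal semidirect product),
`I(G) = I(T) ⊕ I(N) ⊕ I(T)I(N)` as abelian groups: the three additive subgroups sum
to `I(G)` and form an internal direct sum. -/
theorem stmt4 (G : Type*) [Group G] (N T : Subgroup G) [N.Normal]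
    (hdisj : N ⊓ T = ⊥) (hjoin : N ⊔ T = ⊤) :
    relAug G T ⊔ relAug G N ⊔ relAug G T * relAug G N = augI G ∧
    relAug G T ⊓ (relAug G N ⊔ relAug G T * relAug G N) = ⊥ ∧
    relAug G N ⊓ (relAug G T ⊔ relAug G T * relAug G N) = ⊥ ∧
    (relAug G T * relAug G N) ⊓ (relAug G T ⊔ relAug G N) = ⊥ := by
  classical
  have expand : ∀ a b : MonoidAlgebra ℤ G, (a - 1) * (b - 1) = a * b - a - b + 1 := by
    intro a b; noncomm_ring
  -- decomposition g = t * n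
  have hdec : ∀ g : G, ∃ p : G × G, p.1 ∈ T ∧ p.2 ∈ N ∧ g = p.1 * p.2 := by
    intro g
    have hg : g ∈ ((N : Set G) * (T : Set G)) := by
      rw [← Subgroup.normal_mul, hjoin]; trivial
    obtain ⟨n, hn, t, ht, rfl⟩ := hg
    exact ⟨(t, t⁻¹ * n * t), ht, by simpa using ‹N.Normal›.conj_mem n hn t⁻¹, by group⟩
  have huniq : ∀ t n t' n' : G, t ∈ T → n ∈ N → t' ∈ T → n' ∈ N →
      t * n = t' * n' → t = t' ∧ n = n' := by
    intro t n t' n' ht hn ht' hn' h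
    have key : t'⁻¹ * t = n' * n⁻¹ := by
      have := congrArg (fun x => t'⁻¹ * x * n⁻¹) h
      simpa [mul_assoc] using this
    have hmem : t'⁻¹ * t ∈ N ⊓ T := by
      refine Subgroup.mem_inf.mpr ⟨?_, mul_mem (inv_mem ht') ht⟩
      rw [key]; exact mul_mem hn' (inv_mem hn)
    rw [hdisj, Subgroup.mem_bot] at hmem
    have h1 : t = t' := (inv_mul_eq_one.mp hmem).symm
    subst h1
    exact ⟨rfl, mul_left_cancel h⟩
  let φT : G → G := fun g => (hdec g).choose.1
  let φN : G → G := fun g => (hdec g).choose.2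
  have hφ : ∀ g, φT g ∈ T ∧ φN g ∈ N ∧ g = φT g * φN g := fun g => (hdec g).choose_spec
  have hφmul : ∀ t n : G, t ∈ T → n ∈ N → φT (t * n) = t ∧ φN (t * n) = n := by
    intro t n ht hn
    obtain ⟨h1, h2, h3⟩ := hφ (t * n)
    exact huniq _ _ _ _ h1 h2 ht hn h3.symm
  have hφT : ∀ t : G, t ∈ T → φT t = t ∧ φN t = 1 := fun t ht => by
    simpa using hφmul t 1 ht (one_mem N)
  have hφN : ∀ n : G, n ∈ N → φT n = 1 ∧ φN n = n := fun n hn => by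
    simpa using hφmul 1 n (one_mem T) hn
  let A : MonoidAlgebra ℤ G →ₗ[ℤ] MonoidAlgebra ℤ G := MonoidAlgebra.mapDomainLinearMap ℤ ℤ φT
  let B : MonoidAlgebra ℤ G →ₗ[ℤ] MonoidAlgebra ℤ G := MonoidAlgebra.mapDomainLinearMap ℤ ℤ φN
  have hAof : ∀ g : G, A (MonoidAlgebra.of ℤ G g) = MonoidAlgebra.of ℤ G (φT g) := by
    intro g
    rw [MonoidAlgebra.of_apply, MonoidAlgebra.of_apply]
    exact MonoidAlgebra.mapDomainLinearMap_single ..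
  have hBof : ∀ g : G, B (MonoidAlgebra.of ℤ G g) = MonoidAlgebra.of ℤ G (φN g) := by
    intro g
    rw [MonoidAlgebra.of_apply, MonoidAlgebra.of_apply]
    exact MonoidAlgebra.mapDomainLinearMap_single ..
  have hA1 : A 1 = 1 := by
    rw [show (1 : MonoidAlgebra ℤ G) = MonoidAlgebra.of ℤ G 1 from (map_one _).symm, hAof,
      (hφT 1 (one_mem T)).1]
  have hB1 : B 1 = 1 := by
    rw [show (1 : MonoidAlgebra ℤ G) = MonoidAlgebra.of ℤ G 1 from (map_one _).symm, hBof,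
      (hφN 1 (one_mem N)).2]
  -- generator computations
  have hTgenA : ∀ t : G, t ∈ T → A (MonoidAlgebra.of ℤ G t - 1) = MonoidAlgebra.of ℤ G t - 1 := by
    intro t ht; rw [map_sub, hAof, hA1, (hφT t ht).1]
  have hTgenB : ∀ t : G, t ∈ T → B (MonoidAlgebra.of ℤ G t - 1) = 0 := by
    intro t ht; rw [map_sub, hBof, hB1, (hφT t ht).2, map_one, sub_self]
  have hNgenA : ∀ n : G, n ∈ N → A (MonoidAlgebra.of ℤ G n - 1) = 0 := by
    intro n hn; rw [map_sub, hAof, hA1, (hφN n hn).1, map_one, sub_self]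
  have hNgenB : ∀ n : G, n ∈ N → B (MonoidAlgebra.of ℤ G n - 1) = MonoidAlgebra.of ℤ G n - 1 := by
    intro n hn; rw [map_sub, hBof, hB1, (hφN n hn).2]
  have hPgenA : ∀ t n : G, t ∈ T → n ∈ N →
      A ((MonoidAlgebra.of ℤ G t - 1) * (MonoidAlgebra.of ℤ G n - 1)) = 0 := by
    intro t n ht hn
    rw [expand, ← map_mul, map_add, map_sub, map_sub, hAof, hAof, hAof, hA1,
      (hφmul t n ht hn).1, (hφT t ht).1, (hφN n hn).1, map_one]
    abel
  have hPgenB : ∀ t n : G, t ∈ T → n ∈ N →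
      B ((MonoidAlgebra.of ℤ G t - 1) * (MonoidAlgebra.of ℤ G n - 1)) = 0 := by
    intro t n ht hn
    rw [expand, ← map_mul, map_add, map_sub, map_sub, hBof, hBof, hBof, hB1,
      (hφmul t n ht hn).2, (hφT t ht).2, (hφN n hn).2, map_one]
    abel
  -- nested induction principle for the product submodule
  have nested : ∀ (Q : Submodule ℤ (MonoidAlgebra ℤ G)),
      (∀ t ∈ T, ∀ n ∈ N, (MonoidAlgebra.of ℤ G t - 1) * (MonoidAlgebra.of ℤ G n - 1) ∈ Q) →
      relAug G T * relAug G N ≤ Q := by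
    intro Q hQ
    have step0 : ∀ t ∈ T, relAug G N ≤ Q.comap (LinearMap.mulLeft ℤ (MonoidAlgebra.of ℤ G t - 1)) := by
      intro t ht
      rw [relAug, Submodule.span_le]
      rintro x ⟨n, hn, rfl⟩
      simpa using hQ t ht n hn
    have step1 : ∀ y ∈ relAug G N, relAug G T ≤ Q.comap (LinearMap.mulRight ℤ y) := by
      intro y hy
      rw [relAug, Submodule.span_le]
      rintro x ⟨t, ht, rfl⟩
      simpa using step0 t ht hy
    exact Submodule.mul_le.mpr fun x hx y hy => by simpa using step1 y hy hx
  -- the three key submodule bounds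
  have hRT : relAug G T ≤ LinearMap.eqLocus A LinearMap.id ⊓ LinearMap.ker B := by
    rw [relAug, Submodule.span_le]
    rintro x ⟨t, ht, rfl⟩
    exact Submodule.mem_inf.mpr ⟨LinearMap.mem_eqLocus.mpr (by simpa using hTgenA t ht),
      LinearMap.mem_ker.mpr (hTgenB t ht)⟩
  have hRN : relAug G N ≤ LinearMap.ker A ⊓ LinearMap.eqLocus B LinearMap.id := by
    rw [relAug, Submodule.span_le]
    rintro x ⟨n, hn, rfl⟩
    exact Submodule.mem_inf.mpr ⟨LinearMap.mem_ker.mpr (hNgenA n hn),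
      LinearMap.mem_eqLocus.mpr (by simpa using hNgenB n hn)⟩
  have hRP : relAug G T * relAug G N ≤ LinearMap.ker A ⊓ LinearMap.ker B := by
    refine nested _ fun t ht n hn => Submodule.mem_inf.mpr
      ⟨LinearMap.mem_ker.mpr (hPgenA t n ht hn), LinearMap.mem_ker.mpr (hPgenB t n ht hn)⟩
  -- Part 1: the sum
  have hTaug : relAug G T ≤ augI G := by
    rw [relAug, Submodule.span_le]
    rintro x ⟨t, ht, rfl⟩
    exact Submodule.subset_span ⟨t, rfl⟩
  have hNaug : relAug G N ≤ augI G := by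
    rw [relAug, Submodule.span_le]
    rintro x ⟨n, hn, rfl⟩
    exact Submodule.subset_span ⟨n, rfl⟩
  have hPaug : relAug G T * relAug G N ≤ augI G := by
    refine nested _ fun t ht n hn => ?_
    have hid : (MonoidAlgebra.of ℤ G t - 1) * (MonoidAlgebra.of ℤ G n - 1) =
        (MonoidAlgebra.of ℤ G (t * n) - 1) - (MonoidAlgebra.of ℤ G t - 1)
          - (MonoidAlgebra.of ℤ G n - 1) := by
      rw [map_mul]; noncomm_ring
    rw [hid]
    exact sub_mem (sub_mem (Submodule.subset_span ⟨t * n, rfl⟩)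
      (Submodule.subset_span ⟨t, rfl⟩)) (Submodule.subset_span ⟨n, rfl⟩)
  have hsum : relAug G T ⊔ relAug G N ⊔ relAug G T * relAug G N = augI G := by
    apply le_antisymm
    · exact sup_le (sup_le hTaug hNaug) hPaug
    · rw [augI, Submodule.span_le]
      rintro x ⟨g, rfl⟩
      obtain ⟨⟨t, n⟩, ht, hn, rfl⟩ := hdec g
      have hTmem : MonoidAlgebra.of ℤ G t - 1 ∈ relAug G T := Submodule.subset_span ⟨t, ht, rfl⟩
      have hNmem : MonoidAlgebra.of ℤ G n - 1 ∈ relAug G N := Submodule.subset_span ⟨n, hn, rfl⟩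
      have hid : MonoidAlgebra.of ℤ G (t * n) - 1 =
          (MonoidAlgebra.of ℤ G t - 1) + (MonoidAlgebra.of ℤ G n - 1)
            + (MonoidAlgebra.of ℤ G t - 1) * (MonoidAlgebra.of ℤ G n - 1) := by
        rw [map_mul]; noncomm_ring
      rw [hid]
      exact add_mem (add_mem (Submodule.mem_sup_left (Submodule.mem_sup_left hTmem))
        (Submodule.mem_sup_left (Submodule.mem_sup_right hNmem)))
        (Submodule.mem_sup_right (Submodule.mul_mem_mul hTmem hNmem))
  refine ⟨hsum, ?_, ?_, ?_⟩
  · rw [eq_bot_iff]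
    intro x hx
    obtain ⟨hx1, hx2⟩ := Submodule.mem_inf.mp hx
    have e1 : A x = x := by
      have := (Submodule.mem_inf.mp (hRT hx1)).1
      simpa using LinearMap.mem_eqLocus.mp this
    have e2 : A x = 0 := by
      have h : relAug G N ⊔ relAug G T * relAug G N ≤ LinearMap.ker A :=
        sup_le (hRN.trans inf_le_left) (hRP.trans inf_le_left)
      exact LinearMap.mem_ker.mp (h hx2)
    exact Submodule.mem_bot ℤ |>.mpr (by rw [← e1, e2])
  · rw [eq_bot_iff]
    intro x hx
    obtain ⟨hx1, hx2⟩ := Submodule.mem_inf.mp hx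
    have e1 : B x = x := by
      have := (Submodule.mem_inf.mp (hRN hx1)).2
      simpa using LinearMap.mem_eqLocus.mp this
    have e2 : B x = 0 := by
      have h : relAug G T ⊔ relAug G T * relAug G N ≤ LinearMap.ker B :=
        sup_le (hRT.trans inf_le_right) (hRP.trans inf_le_right)
      exact LinearMap.mem_ker.mp (h hx2)
    exact Submodule.mem_bot ℤ |>.mpr (by rw [← e1, e2])
  · rw [eq_bot_iff]
    intro x hx
    obtain ⟨hxP, hxS⟩ := Submodule.mem_inf.mp hx
    obtain ⟨a, ha, b, hb, hab⟩ := Submodule.mem_sup.mp hxS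
    have hA0 : A x = 0 := LinearMap.mem_ker.mp (Submodule.mem_inf.mp (hRP hxP)).1
    have hB0 : B x = 0 := LinearMap.mem_ker.mp (Submodule.mem_inf.mp (hRP hxP)).2
    have hAa : A a = a := by
      have := (Submodule.mem_inf.mp (hRT ha)).1
      simpa using LinearMap.mem_eqLocus.mp this
    have hBb : B b = b := by
      have := (Submodule.mem_inf.mp (hRN hb)).2
      simpa using LinearMap.mem_eqLocus.mp this
    have hAb : A b = 0 := LinearMap.mem_ker.mp (Submodule.mem_inf.mp (hRN hb)).1
    have hBa : B a = 0 := LinearMap.mem_ker.mp (Submodule.mem_inf.mp (hRT ha)).2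
    have ha0 : a = 0 := by
      have : A x = a := by rw [← hab, map_add, hAa, hAb, add_zero]
      rw [hA0] at this; exact this.symm
    have hb0 : b = 0 := by
      have : B x = b := by rw [← hab, map_add, hBa, hBb, zero_add]
      rw [hB0] at this; exact this.symm
    refine Submodule.mem_bot ℤ |>.mpr ?_
    rw [← hab, ha0, hb0, add_zero]
end

section
/- Let f : 𝔤 → 𝔤' be an injective homomorphism of Lie algebras over a field K. Then the induced map U(f) : U(𝔤) → U(𝔤') of universal enveloping algebras is injective. -/
set_option linter.unusedSectionVars false
set_option linter.unusedVariables false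
attribute [local instance] LieRing.ofAssociativeRing

noncomputable section PBW

open Finsupp UniversalEnvelopingAlgebra

variable {K : Type*} [Field K] {L : Type*} [LieRing L] [LieAlgebra K L]
variable {Λ : Type*} [LinearOrder Λ]

/-- The "polynomial" space: free module on multisets of basis indices. -/
abbrev PM (K : Type*) [Field K] (Λ : Type*) : Type _ := (Multiset Λ) →₀ K

/-- monomial -/
def zz (m : Multiset Λ) : PM K Λ := Finsupp.single m 1

/-- filtration by degree -/
def QQ (K : Type*) [Field K] (Λ : Type*) (n : ℕ) : Submodule K (PM K Λ) where
  carrier := {p | ∀ ν ∈ p.support, Multiset.card ν ≤ n}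
  add_mem' := by
    classical
    intro a b ha hb ν hν
    rcases Finset.mem_union.mp (Finsupp.support_add hν) with h | h
    · exact ha ν h
    · exact hb ν h
  zero_mem' := by intro ν hν; simp at hν
  smul_mem' := by
    intro c p hp ν hν
    exact hp ν (Finsupp.support_smul hν)

lemma mem_QQ_iff {p : PM K Λ} {n : ℕ} :
    p ∈ QQ K Λ n ↔ ∀ ν ∈ p.support, Multiset.card ν ≤ n := Iff.rfl

lemma QQ_mono {n n' : ℕ} (h : n ≤ n') : QQ K Λ n ≤ QQ K Λ n' := fun p hp =>
  mem_QQ_iff.mpr fun ν hν => le_trans (mem_QQ_iff.mp hp ν hν) h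

lemma zz_mem_QQ {m : Multiset Λ} {n : ℕ} (h : Multiset.card m ≤ n) :
    (zz m : PM K Λ) ∈ QQ K Λ n := by
  rw [mem_QQ_iff]
  intro ν hν
  have := Finsupp.support_single_subset hν
  simp at this; subst this; exact h

lemma mem_QQ_card {p : PM K Λ} {n : ℕ} (hp : p ∈ QQ K Λ n) {ν : Multiset Λ}
    (hν : ν ∈ p.support) : Multiset.card ν ≤ n := mem_QQ_iff.mp hp ν hν

lemma List_eq_of_perm_of_sorted {α : Type*} {r : α → α → Prop} [Std.Antisymm r]
    {l₁ l₂ : List α} (hp : l₁.Perm l₂) (h1 : l₁.Pairwise r) (h2 : l₂.Pairwise r) : l₁ = l₂ :=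
  hp.eq_of_pairwise' h1 h2

variable (b : Module.Basis Λ K L)

/-- the approximations to the PBW representation operators -/
def Gaux : ℕ → Λ → Multiset Λ → PM K Λ
  | 0, i, m => zz (i ::ₘ m)
  | (d+1), i, m =>
    match Multiset.sort m (· ≤ ·) with
    | [] => zz (i ::ₘ m)
    | j :: t =>
      if i ≤ j then zz (i ::ₘ m)
      else
        zz (i ::ₘ m)
        + (Gaux d i ↑t - zz (i ::ₘ ↑t)).sum (fun ν c => c • Gaux d j ν)
        + (b.repr ⁅b i, b j⁆).sum (fun k c => c • Gaux d k ↑t)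

lemma Gaux_zero (i : Λ) (m : Multiset Λ) : Gaux b 0 i m = zz (i ::ₘ m) := rfl

lemma Gaux_succ_nil {m : Multiset Λ} (hs : Multiset.sort m (· ≤ ·) = []) (d : ℕ) (i : Λ) :
    Gaux b (d+1) i m = zz (i ::ₘ m) := by
  rw [Gaux, hs]

lemma Gaux_succ_pos {m : Multiset Λ} {j : Λ} {t : List Λ}
    (hs : Multiset.sort m (· ≤ ·) = j :: t) {i : Λ} (hij : i ≤ j) (d : ℕ) :
    Gaux b (d+1) i m = zz (i ::ₘ m) := by
  rw [Gaux, hs]; simp [hij]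

lemma Gaux_succ_neg {m : Multiset Λ} {j : Λ} {t : List Λ}
    (hs : Multiset.sort m (· ≤ ·) = j :: t) {i : Λ} (hij : ¬ i ≤ j) (d : ℕ) :
    Gaux b (d+1) i m = zz (i ::ₘ m)
        + (Gaux b d i ↑t - zz (i ::ₘ ↑t)).sum (fun ν c => c • Gaux b d j ν)
        + (b.repr ⁅b i, b j⁆).sum (fun k c => c • Gaux b d k ↑t) := by
  rw [Gaux, hs]; simp [hij]


-- facts about sort decomposition
lemma sort_decomp {m : Multiset Λ} {j : Λ} {t : List Λ}
    (hs : Multiset.sort m (· ≤ ·) = j :: t) :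
    m = j ::ₘ (↑t : Multiset Λ) := by
  conv_lhs => rw [← Multiset.sort_eq m (· ≤ ·)]
  rw [hs]; rfl

lemma sort_head_le {m : Multiset Λ} {j : Λ} {t : List Λ}
    (hs : Multiset.sort m (· ≤ ·) = j :: t) :
    ∀ a ∈ (↑t : Multiset Λ), j ≤ a := by
  intro a ha
  have hsort := Multiset.pairwise_sort m (· ≤ ·)
  rw [hs, List.pairwise_cons] at hsort
  exact hsort.1 a (by exact_mod_cast ha)

lemma sort_card {m : Multiset Λ} {j : Λ} {t : List Λ}
    (hs : Multiset.sort m (· ≤ ·) = j :: t) :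
    Multiset.card m = Multiset.card (↑t : Multiset Λ) + 1 := by
  rw [sort_decomp hs]; simp

/-- (Bd): G d i m = z (i ::ₘ m) + lower order terms -/
lemma Gaux_sub_mem : ∀ d : ℕ, ∀ (i : Λ) (m : Multiset Λ), Multiset.card m ≤ d →
    Gaux b d i m - zz (i ::ₘ m) ∈ QQ K Λ (Multiset.card m) := by
  intro d
  induction d with
  | zero => intro i m hm; rw [Gaux_zero]; simp
  | succ d ih =>
    intro i m hm
    rcases hs : Multiset.sort m (· ≤ ·) with _ | ⟨j, t⟩
    · rw [Gaux_succ_nil b hs]; simp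
    · by_cases hij : i ≤ j
      · rw [Gaux_succ_pos b hs hij]; simp
      · rw [Gaux_succ_neg b hs hij]
        have hct : Multiset.card (↑t : Multiset Λ) + 1 = Multiset.card m := (sort_card hs).symm
        have hctd : Multiset.card (↑t : Multiset Λ) ≤ d := by omega
        have key : ∀ (k : Λ) (ν : Multiset Λ), Multiset.card ν ≤ d →
            Multiset.card ν + 1 ≤ Multiset.card m → Gaux b d k ν ∈ QQ K Λ (Multiset.card m) := by
          intro k ν h1 h2
          have := ih k ν h1
          have : Gaux b d k ν = (Gaux b d k ν - zz (k ::ₘ ν)) + zz (k ::ₘ ν) := by abel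
          rw [this]
          exact (QQ K Λ _).add_mem (QQ_mono (by omega) (ih k ν h1))
            (zz_mem_QQ (by simp; omega))
        have h2 : (Gaux b d i ↑t - zz (i ::ₘ ↑t)).sum (fun ν c => c • Gaux b d j ν)
            ∈ QQ K Λ (Multiset.card m) := by
          apply Submodule.finsuppSum_mem
          intro ν hν
          apply Submodule.smul_mem
          have hνs : ν ∈ (Gaux b d i ↑t - zz (i ::ₘ ↑t)).support := Finsupp.mem_support_iff.mpr hν
          have hcν : Multiset.card ν ≤ Multiset.card (↑t : Multiset Λ) :=
            mem_QQ_card (ih i ↑t hctd) hνs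
          exact key j ν (by omega) (by omega)
        have h3 : (b.repr ⁅b i, b j⁆).sum (fun k c => c • Gaux b d k ↑t)
            ∈ QQ K Λ (Multiset.card m) := by
          apply Submodule.finsuppSum_mem
          intro k hk
          exact Submodule.smul_mem _ _ (key k ↑t hctd (by omega))
        have : zz (i ::ₘ m) + (Gaux b d i ↑t - zz (i ::ₘ ↑t)).sum (fun ν c => c • Gaux b d j ν)
            + (b.repr ⁅b i, b j⁆).sum (fun k c => c • Gaux b d k ↑t) - zz (i ::ₘ m)
            = (Gaux b d i ↑t - zz (i ::ₘ ↑t)).sum (fun ν c => c • Gaux b d j ν)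
            + (b.repr ⁅b i, b j⁆).sum (fun k c => c • Gaux b d k ↑t) := by abel
        rw [this]
        exact (QQ K Λ _).add_mem h2 h3

/-- (St): stability of the approximations -/
lemma Gaux_stable : ∀ d : ℕ, ∀ (i : Λ) (m : Multiset Λ), Multiset.card m ≤ d →
    Gaux b (d+1) i m = Gaux b d i m := by
  intro d
  induction d with
  | zero =>
    intro i m hm
    have : m = 0 := by simpa using hm
    subst this
    rw [Gaux_succ_nil b (by simp), Gaux_zero]
  | succ d ih =>
    intro i m hm
    rcases hs : Multiset.sort m (· ≤ ·) with _ | ⟨j, t⟩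
    · rw [Gaux_succ_nil b hs, Gaux_succ_nil b hs]
    · by_cases hij : i ≤ j
      · rw [Gaux_succ_pos b hs hij, Gaux_succ_pos b hs hij]
      · rw [Gaux_succ_neg b hs hij, Gaux_succ_neg b hs hij]
        have hct : Multiset.card (↑t : Multiset Λ) + 1 = Multiset.card m := (sort_card hs).symm
        have hctd : Multiset.card (↑t : Multiset Λ) ≤ d := by omega
        have e1 : Gaux b (d+1) i ↑t = Gaux b d i ↑t := ih i ↑t hctd
        rw [e1]
        congr 1
        · congr 1
          apply Finsupp.sum_congr
          intro ν hν
          have hcν : Multiset.card ν ≤ Multiset.card (↑t : Multiset Λ) :=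
            mem_QQ_card (Gaux_sub_mem b d i ↑t hctd) hν
          rw [ih j ν (by omega)]
        · apply Finsupp.sum_congr
          intro k hk
          rw [ih k ↑t hctd]

lemma Gaux_eq_card {d : ℕ} {m : Multiset Λ} (h : Multiset.card m ≤ d) (i : Λ) :
    Gaux b d i m = Gaux b (Multiset.card m) i m := by
  induction d with
  | zero =>
    have : Multiset.card m = 0 := by omega
    rw [this]
  | succ d ih =>
    rcases Nat.eq_or_lt_of_le h with h' | h'
    · rw [h']
    · have hd : Multiset.card m ≤ d := by omega
      rw [Gaux_stable b d i m hd, ih hd]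


/-- the PBW representation operator for a basis index -/
def rho (i : Λ) : PM K Λ →ₗ[K] PM K Λ :=
  Finsupp.lsum K fun m => LinearMap.toSpanSingleton K _ (Gaux b (Multiset.card m) i m)

lemma rho_zz (i : Λ) (m : Multiset Λ) :
    rho b i (zz m) = Gaux b (Multiset.card m) i m := by
  simp [rho, zz, LinearMap.toSpanSingleton]

lemma rho_apply (i : Λ) (p : PM K Λ) :
    rho b i p = p.sum fun m c => c • rho b i (zz m) := by
  rw [rho, Finsupp.lsum_apply]
  apply Finsupp.sum_congr
  intro m hm
  simp [zz, LinearMap.toSpanSingleton_apply]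

/-- sort of a cons with minimal head -/
lemma sort_cons_min {j : Λ} {m : Multiset Λ} (h : ∀ a ∈ m, j ≤ a) :
    Multiset.sort (j ::ₘ m) (· ≤ ·) = j :: Multiset.sort m (· ≤ ·) := by
  apply List_eq_of_perm_of_sorted (r := (· ≤ · : Λ → Λ → Prop))
  · rw [← Multiset.coe_eq_coe]
    rw [Multiset.sort_eq]
    show j ::ₘ m = (↑(j :: Multiset.sort m (· ≤ ·)) : Multiset Λ)
    rw [← Multiset.cons_coe, Multiset.sort_eq]
  · exact Multiset.pairwise_sort _ _
  · rw [List.pairwise_cons]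
    exact ⟨fun a ha => h a (by rw [← Multiset.sort_eq m (· ≤ ·)]; exact_mod_cast ha),
      Multiset.pairwise_sort _ _⟩

/-- (RA): action on a monomial dominated by i -/
lemma rho_zz_min {i : Λ} {m : Multiset Λ} (h : ∀ a ∈ m, i ≤ a) :
    rho b i (zz m) = zz (i ::ₘ m) := by
  rw [rho_zz]
  rcases hs : Multiset.sort m (· ≤ ·) with _ | ⟨j, t⟩
  · have : m = 0 := by
      have := Multiset.sort_eq m (· ≤ ·)
      rw [hs] at this; exact this.symm
    subst this; rw [show Multiset.card (0 : Multiset Λ) = 0 from rfl, Gaux_zero]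
  · have hjm : j ∈ m := by
      rw [← Multiset.sort_eq m (· ≤ ·), hs]; exact_mod_cast List.mem_cons_self
    rw [sort_card hs, Gaux_succ_pos b hs (h j hjm)]

/-- (RB) -/
lemma rho_sub_mem (i : Λ) (m : Multiset Λ) :
    rho b i (zz m) - zz (i ::ₘ m) ∈ QQ K Λ (Multiset.card m) := by
  rw [rho_zz]; exact Gaux_sub_mem b _ i m le_rfl

/-- the representation operators, linearly in L -/
def rhoL : L →ₗ[K] PM K Λ →ₗ[K] PM K Λ :=
  (Finsupp.lsum K fun i => LinearMap.toSpanSingleton K _ (rho b i)).comp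
    (b.repr : L ≃ₗ[K] (Λ →₀ K)).toLinearMap

lemma rhoL_basis (i : Λ) : rhoL b (b i) = rho b i := by
  simp [rhoL, LinearMap.toSpanSingleton]

lemma rhoL_apply (x : L) (p : PM K Λ) :
    rhoL b x p = (b.repr x).sum fun k c => c • rho b k p := by
  simp only [rhoL, LinearMap.comp_apply, LinearEquiv.coe_coe, Finsupp.lsum_apply]
  simp [Finsupp.sum, LinearMap.coe_sum, Finset.sum_apply, LinearMap.toSpanSingleton_apply,
    LinearMap.smul_apply]


lemma lin_comb (ψ : PM K Λ →ₗ[K] PM K Λ) (p : PM K Λ) :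
    ψ p = p.sum fun ν c => c • ψ (zz ν) := by
  conv_lhs => rw [← Finsupp.sum_single p]
  rw [map_finsuppSum]
  apply Finsupp.sum_congr
  intro ν hν
  rw [show Finsupp.single ν (p ν) = p ν • zz ν by rw [zz, Finsupp.smul_single_one], map_smul]

/-- (C1'): the fundamental commutation identity when j is minimal -/
lemma rho_comm_min {i j : Λ} (hji : j ≤ i) {μ : Multiset Λ} (hjμ : ∀ a ∈ μ, j ≤ a) :
    rho b i (rho b j (zz μ)) = rho b j (rho b i (zz μ)) + rhoL b ⁅b i, b j⁆ (zz μ) := by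
  rcases eq_or_lt_of_le hji with rfl | hlt
  · simp
  · have h1 : rho b j (zz μ) = zz (j ::ₘ μ) := rho_zz_min b hjμ
    have hsort : Multiset.sort (j ::ₘ μ) (· ≤ ·) = j :: Multiset.sort μ (· ≤ ·) :=
      sort_cons_min hjμ
    have hcoe : (↑(Multiset.sort μ (· ≤ ·)) : Multiset Λ) = μ := Multiset.sort_eq _ _
    have hij : ¬ i ≤ j := not_le.mpr hlt
    have hcard : Multiset.card (j ::ₘ μ) = Multiset.card μ + 1 := Multiset.card_cons _ _
    rw [h1, rho_zz, hcard, Gaux_succ_neg b hsort hij, hcoe]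
    -- identify the middle sum
    have hA : (Gaux b (Multiset.card μ) i μ - zz (i ::ₘ μ)).sum
        (fun ν c => c • Gaux b (Multiset.card μ) j ν)
        = rho b j (rho b i (zz μ)) - zz (i ::ₘ j ::ₘ μ) := by
      have hq : Gaux b (Multiset.card μ) i μ = rho b i (zz μ) := (rho_zz b i μ).symm
      rw [hq]
      have : (rho b i (zz μ) - zz (i ::ₘ μ)).sum (fun ν c => c • Gaux b (Multiset.card μ) j ν)
          = (rho b i (zz μ) - zz (i ::ₘ μ)).sum (fun ν c => c • rho b j (zz ν)) := by
        apply Finsupp.sum_congr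
        intro ν hν
        have hcν : Multiset.card ν ≤ Multiset.card μ :=
          mem_QQ_card (rho_sub_mem b i μ) hν
        rw [rho_zz, Gaux_eq_card b hcν]
        rw [rho_zz]
      rw [this, ← lin_comb, map_sub]
      congr 1
      have : rho b j (zz (i ::ₘ μ)) = zz (j ::ₘ i ::ₘ μ) := by
        apply rho_zz_min
        intro a ha
        rcases Multiset.mem_cons.mp ha with rfl | ha
        · exact hji
        · exact hjμ a ha
      rw [this, Multiset.cons_swap]
    have hB : (b.repr ⁅b i, b j⁆).sum (fun k c => c • Gaux b (Multiset.card μ) k μ)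
        = rhoL b ⁅b i, b j⁆ (zz μ) := by
      rw [rhoL_apply]
      apply Finsupp.sum_congr
      intro k hk
      rw [rho_zz]
    rw [hA, hB]
    abel


/-- the commutator defect, as a bilinear map -/
def CmMap (p : PM K Λ) : L →ₗ[K] L →ₗ[K] PM K Λ :=
  LinearMap.mk₂ K
    (fun x y => rhoL b x (rhoL b y p) - rhoL b y (rhoL b x p) - rhoL b ⁅x, y⁆ p)
    (by intro x x' y; simp only [map_add, LinearMap.add_apply, add_lie]; try abel)
    (by intro c x y; simp only [map_smul, LinearMap.smul_apply, smul_lie, smul_sub]; try abel)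
    (by intro x y y'; simp only [map_add, LinearMap.add_apply, lie_add]; try abel)
    (by intro c x y; simp only [map_smul, LinearMap.smul_apply, lie_smul, smul_sub]; try abel)

lemma CmMap_apply (p : PM K Λ) (x y : L) :
    CmMap b p x y = rhoL b x (rhoL b y p) - rhoL b y (rhoL b x p) - rhoL b ⁅x, y⁆ p := rfl

lemma Cm_ext (x y : L) (p : PM K Λ) (h : ∀ ν ∈ p.support, CmMap b (zz ν) = 0) :
    rhoL b x (rhoL b y p) - rhoL b y (rhoL b x p) - rhoL b ⁅x, y⁆ p = 0 := by
  have hψ : ((rhoL b x).comp (rhoL b y) - (rhoL b y).comp (rhoL b x) - rhoL b ⁅x, y⁆) p = 0 := by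
    rw [lin_comb, Finsupp.sum]
    apply Finset.sum_eq_zero
    intro ν hν
    have : ((rhoL b x).comp (rhoL b y) - (rhoL b y).comp (rhoL b x) - rhoL b ⁅x, y⁆) (zz ν)
        = CmMap b (zz ν) x y := by
      simp [CmMap_apply, LinearMap.sub_apply, LinearMap.comp_apply]
    rw [this, h ν hν]
    simp
  simpa [LinearMap.sub_apply, LinearMap.comp_apply] using hψ

lemma CmMap_antisymm (p : PM K Λ) (x y : L) : CmMap b p x y = - CmMap b p y x := by
  rw [CmMap_apply, CmMap_apply, ← lie_skew x y, map_neg, LinearMap.neg_apply]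
  abel

/-- the main commutator theorem on monomials, basis version -/
lemma CmMap_zz_eq_zero : ∀ (n : ℕ) (m : Multiset Λ), Multiset.card m = n →
    CmMap b (zz m) = 0 := by
  intro n
  induction n using Nat.strong_induction_on with
  | _ n IH =>
  intro m hm
  -- extension of the induction hypothesis to arbitrary x y and low-degree p
  have IH2 : ∀ (x y : L) (p : PM K Λ), (∀ ν ∈ p.support, Multiset.card ν < n) →
      rhoL b x (rhoL b y p) - rhoL b y (rhoL b x p) - rhoL b ⁅x, y⁆ p = 0 := by
    intro x y p hp
    exact Cm_ext b x y p fun ν hν => IH _ (hp ν hν) ν rfl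
  -- the key half, assuming j ≤ i
  have key : ∀ i j : Λ, j ≤ i → CmMap b (zz m) (b i) (b j) = 0 := by
    intro i j hji
    rw [CmMap_apply, rhoL_basis, rhoL_basis, sub_eq_zero, sub_eq_iff_eq_add]
    by_cases hA : ∀ a ∈ m, j ≤ a
    · rw [rho_comm_min b hji hA]; abel
    · rcases hs : Multiset.sort m (· ≤ ·) with _ | ⟨k, t⟩
      · exfalso
        apply hA
        have : m = 0 := by
          have := Multiset.sort_eq m (· ≤ ·)
          rw [hs] at this; exact this.symm
        subst this; intro a ha; simp at ha
      · have hm0 : m = k ::ₘ (↑t : Multiset Λ) := sort_decomp hs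
        have hkt : ∀ a ∈ (↑t : Multiset Λ), k ≤ a := sort_head_le hs
        have hkm : ∀ a ∈ m, k ≤ a := by
          intro a ha
          rw [hm0] at ha
          rcases Multiset.mem_cons.mp ha with rfl | ha
          · exact le_rfl
          · exact hkt a ha
        have hkj : k < j := by
          push_neg at hA
          obtain ⟨a, ha, haj⟩ := hA
          exact lt_of_le_of_lt (hkm a ha) haj
        have hki : k < i := lt_of_lt_of_le hkj hji
        set μ : Multiset Λ := (↑t : Multiset Λ) with hμ
        have hcμ : Multiset.card μ < n := by
          rw [← hm, hm0]; simp [hμ]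
        have e0 : zz m = rho b k (zz μ) := by
          rw [hm0]; exact (rho_zz_min b hkt).symm
        have hsupzz : ∀ ν ∈ (zz μ : PM K Λ).support, Multiset.card ν < n := by
          intro ν hν
          have := Finsupp.support_single_subset hν
          simp at this; subst this; exact hcμ
        -- the expansion, valid for any i' j' ≥ k
        have expand : ∀ i' j' : Λ, k ≤ i' → k ≤ j' →
            rho b i' (rho b j' (zz m)) =
              rho b k (rho b i' (rho b j' (zz μ)))
              + rhoL b ⁅b i', b k⁆ (rho b j' (zz μ))
              + rhoL b ⁅b j', b k⁆ (rho b i' (zz μ))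
              + rhoL b ⁅b i', ⁅b j', b k⁆⁆ (zz μ) := by
          intro i' j' hki' hkj'
          have step1 : rho b j' (zz m) = rho b k (rho b j' (zz μ)) + rhoL b ⁅b j', b k⁆ (zz μ) := by
            rw [e0]; exact rho_comm_min b hkj' hkt
          -- commute rho i' past rho k on (rho j' (zz μ))
          have comm1 : rho b i' (rho b k (rho b j' (zz μ)))
              = rho b k (rho b i' (rho b j' (zz μ))) + rhoL b ⁅b i', b k⁆ (rho b j' (zz μ)) := by
            have hw : rho b j' (zz μ) = zz (j' ::ₘ μ) + (rho b j' (zz μ) - zz (j' ::ₘ μ)) := by abel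
            have hwmem : rho b j' (zz μ) - zz (j' ::ₘ μ) ∈ QQ K Λ (Multiset.card μ) :=
              rho_sub_mem b j' μ
            set w : PM K Λ := rho b j' (zz μ) - zz (j' ::ₘ μ) with hwdef
            have t1 : rho b i' (rho b k (zz (j' ::ₘ μ)))
                = rho b k (rho b i' (zz (j' ::ₘ μ))) + rhoL b ⁅b i', b k⁆ (zz (j' ::ₘ μ)) := by
              apply rho_comm_min b hki'
              intro a ha
              rcases Multiset.mem_cons.mp ha with rfl | ha
              · exact hkj'
              · exact hkt a ha
            have t2 : rho b i' (rho b k w)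
                = rho b k (rho b i' w) + rhoL b ⁅b i', b k⁆ w := by
              have := IH2 (b i') (b k) w (fun ν hν => lt_of_le_of_lt (mem_QQ_card hwmem hν) hcμ)
              rw [rhoL_basis, rhoL_basis, sub_sub, sub_eq_zero] at this
              exact this
            set D : PM K Λ →ₗ[K] PM K Λ :=
              (rho b i') ∘ₗ (rho b k) - (rho b k) ∘ₗ (rho b i') - rhoL b ⁅b i', b k⁆ with hD
            have hD1 : D (zz (j' ::ₘ μ)) = 0 := by
              simp only [hD, LinearMap.sub_apply, LinearMap.comp_apply, t1]
              abel
            have hD2 : D w = 0 := by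
              simp only [hD, LinearMap.sub_apply, LinearMap.comp_apply, t2]
              abel
            have hDX : D (rho b j' (zz μ)) = 0 := by
              rw [hw, map_add, hD1, hD2, add_zero]
            simp only [hD, LinearMap.sub_apply, LinearMap.comp_apply, sub_sub, sub_eq_zero] at hDX
            rw [hDX]
          calc rho b i' (rho b j' (zz m))
              = rho b i' (rho b k (rho b j' (zz μ))) + rho b i' (rhoL b ⁅b j', b k⁆ (zz μ)) := by
                rw [step1, map_add]
            _ = rho b k (rho b i' (rho b j' (zz μ))) + rhoL b ⁅b i', b k⁆ (rho b j' (zz μ))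
                + (rhoL b ⁅b j', b k⁆ (rho b i' (zz μ)) + rhoL b ⁅b i', ⁅b j', b k⁆⁆ (zz μ)) := by
                rw [comm1]
                congr 1
                have := IH2 (b i') ⁅b j', b k⁆ (zz μ) hsupzz
                rw [rhoL_basis] at this
                rw [sub_sub, sub_eq_zero] at this
                rw [this]
            _ = _ := by abel
        have h4 : rhoL b ⁅b i, b j⁆ (zz m)
            = rho b k (rhoL b ⁅b i, b j⁆ (zz μ)) + rhoL b ⁅⁅b i, b j⁆, b k⁆ (zz μ) := by
          have := IH2 ⁅b i, b j⁆ (b k) (zz μ) hsupzz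
          rw [rhoL_basis, sub_sub, sub_eq_zero] at this
          rw [e0, this]
        have h5 : rho b i (rho b j (zz μ)) - rho b j (rho b i (zz μ)) = rhoL b ⁅b i, b j⁆ (zz μ) := by
          have := IH2 (b i) (b j) (zz μ) hsupzz
          rw [rhoL_basis, rhoL_basis, sub_sub, sub_eq_zero] at this
          rw [this]; abel
        have jac : ⁅⁅b i, b j⁆, b k⁆ = ⁅b i, ⁅b j, b k⁆⁆ - ⁅b j, ⁅b i, b k⁆⁆ := lie_lie _ _ _
        rw [expand i j hki.le hkj.le, expand j i hkj.le hki.le, h4, jac, map_sub,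
          LinearMap.sub_apply]
        rw [← h5, map_sub]
        abel
  -- deduce full statement from the half
  refine Module.Basis.ext b fun i => ?_
  refine Module.Basis.ext b fun j => ?_
  simp only [LinearMap.zero_apply]
  rcases le_total j i with h | h
  · exact key i j h
  · rw [CmMap_antisymm, key j i h, neg_zero]

lemma CmMap_zz (m : Multiset Λ) : CmMap b (zz m) = 0 :=
  CmMap_zz_eq_zero b (Multiset.card m) m rfl

/-- the PBW representation as a morphism of Lie algebras -/
def rhoLie : L →ₗ⁅K⁆ Module.End K (PM K Λ) :=
  { rhoL b with
    map_lie' := by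
      intro x y
      apply LinearMap.ext
      intro p
      have h := Cm_ext b x y p (fun ν _ => CmMap_zz b ν)
      rw [sub_sub, sub_eq_zero] at h
      simp only [LieRing.of_associative_ring_bracket, LinearMap.sub_apply, Module.End.mul_apply,
        LinearMap.coe_mk, AddHom.coe_mk]
      show rhoL b ⁅x, y⁆ p = rhoL b x (rhoL b y p) - rhoL b y (rhoL b x p)
      rw [h]
      abel }

lemma rhoLie_apply (x : L) : (rhoLie b x : PM K Λ →ₗ[K] PM K Λ) = rhoL b x := rfl



/-- evaluation of the induced `U(L)`-action at the unit monomial -/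
def ev : UniversalEnvelopingAlgebra K L →ₗ[K] PM K Λ :=
  (LinearMap.applyₗ (zz 0 : PM K Λ)).comp (lift K (rhoLie b)).toLinearMap

lemma ev_one : ev b (1 : UniversalEnvelopingAlgebra K L) = zz 0 := by
  simp [ev, LinearMap.applyₗ]; rfl

lemma ev_iota_mul (x : L) (u : UniversalEnvelopingAlgebra K L) :
    ev b (ι K x * u) = rhoL b x (ev b u) := by
  simp only [ev, LinearMap.comp_apply, AlgHom.toLinearMap_apply, map_mul, lift_ι_apply]
  rfl

/-- ordered monomials in `U(L)` -/
def Wd (l : List Λ) : UniversalEnvelopingAlgebra K L :=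
  (l.map fun i => ι K (b i)).prod

lemma Wd_nil : Wd b ([] : List Λ) = 1 := rfl

lemma Wd_cons (j : Λ) (t : List Λ) : Wd b (j :: t) = ι K (b j) * Wd b t := by
  simp [Wd]

lemma ev_Wd : ∀ l : List Λ, l.Pairwise (· ≤ ·) → ev b (Wd b l) = zz (↑l : Multiset Λ) := by
  intro l
  induction l with
  | nil => intro _; rw [Wd_nil, ev_one]; rfl
  | cons j t ihl =>
    intro hs
    rw [List.pairwise_cons] at hs
    rw [Wd_cons, ev_iota_mul, ihl hs.2, rhoL_basis]
    rw [rho_zz_min b (fun a ha => hs.1 a (by exact_mod_cast ha))]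
    rw [← Multiset.cons_coe]

/-- the canonical ordered monomials of `U(L)`, indexed by multisets -/
def Wm (m : Multiset Λ) : UniversalEnvelopingAlgebra K L :=
  Wd b (Multiset.sort m (· ≤ ·))

lemma ev_Wm (m : Multiset Λ) : ev b (Wm b m) = zz m := by
  rw [Wm, ev_Wd b _ (Multiset.pairwise_sort _ _), Multiset.sort_eq]




/-- induction principle for the universal enveloping algebra -/
lemma uea_induction {motive : UniversalEnvelopingAlgebra K L → Prop}
    (h_alg : ∀ c : K, motive (algebraMap K _ c))
    (h_iota : ∀ x : L, motive (ι K x))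
    (h_mul : ∀ a b, motive a → motive b → motive (a * b))
    (h_add : ∀ a b, motive a → motive b → motive (a + b))
    (u : UniversalEnvelopingAlgebra K L) : motive u := by
  obtain ⟨a, rfl⟩ := RingCon.mkₐ_surjective (α := K) (UniversalEnvelopingAlgebra.ringCon K L) u
  change motive (mkAlgHom K L a)
  induction a using TensorAlgebra.induction with
  | algebraMap c => rw [AlgHom.commutes]; exact h_alg c
  | ι x => exact h_iota x
  | mul a b ha hb => rw [map_mul]; exact h_mul _ _ ha hb
  | add a b ha hb => rw [map_add]; exact h_add _ _ ha hb

lemma sort_coe {l : List Λ} (h : l.Pairwise (· ≤ ·)) :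
    Multiset.sort (↑l : Multiset Λ) (· ≤ ·) = l := by
  apply List_eq_of_perm_of_sorted (r := (· ≤ · : Λ → Λ → Prop))
  · rw [← Multiset.coe_eq_coe, Multiset.sort_eq]
  · exact Multiset.pairwise_sort _ _
  · exact h

lemma Wm_zero : Wm b (0 : Multiset Λ) = 1 := by
  rw [Wm, Multiset.sort_zero, Wd_nil]

lemma Wm_cons_min {i : Λ} {m : Multiset Λ} (h : ∀ a ∈ m, i ≤ a) :
    Wm b (i ::ₘ m) = ι K (b i) * Wm b m := by
  rw [Wm, sort_cons_min h, Wd_cons, Wm]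

/-- the basic straightening relation in `U(L)` -/
lemma iota_swap (x y : L) :
    ι K x * ι K y = ι K y * ι K x + ι K ⁅x, y⁆ := by
  have h := (ι K : L →ₗ⁅K⁆ UniversalEnvelopingAlgebra K L).map_lie (x := x) (y := y)
  rw [LieRing.of_associative_ring_bracket] at h
  rw [h]
  abel

section Span

variable [WellFoundedLT Λ]

/-- span of ordered monomials of bounded degree -/
def Sd (n : ℕ) : Submodule K (UniversalEnvelopingAlgebra K L) :=
  Submodule.span K ((fun m => Wm b m) '' {m : Multiset Λ | Multiset.card m ≤ n})

lemma Sd_mono {n n' : ℕ} (h : n ≤ n') : Sd b n ≤ Sd b n' :=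
  Submodule.span_mono (Set.image_mono fun m hm => le_trans hm h)

lemma Wm_mem_Sd {m : Multiset Λ} {n : ℕ} (h : Multiset.card m ≤ n) : Wm b m ∈ Sd b n :=
  Submodule.subset_span ⟨m, h, rfl⟩

/-- straightening: multiplying an ordered monomial by a generator -/
lemma iota_mul_Wm_mem (i₀ : Λ) (m₀ : Multiset Λ) :
    ι K (b i₀) * Wm b m₀ ∈ Sd b (Multiset.card m₀ + 1) := by
  have main : ∀ q : ℕ ×ₗ Λ, ∀ m : Multiset Λ, Multiset.card m ≤ (ofLex q).1 →
      ι K (b (ofLex q).2) * Wm b m ∈ Sd b (Multiset.card m + 1) := by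
    intro q
    induction q using WellFoundedLT.induction with
    | _ q IHq =>
    obtain ⟨n, i⟩ := q
    intro m hm
    rcases Nat.lt_or_ge (Multiset.card m) n with hlt | hge
    · exact IHq (toLex (Multiset.card m, i))
        (Prod.Lex.lt_iff.mpr (Or.inl hlt)) m le_rfl
    have hn : Multiset.card m = n := le_antisymm hm hge
    subst hn
    show ι K (b i) * Wm b m ∈ Sd b (Multiset.card m + 1)
    rcases hs : Multiset.sort m (· ≤ ·) with _ | ⟨j, t⟩
    · have hm0 : m = 0 := by
        have := Multiset.sort_eq m (· ≤ ·)
        rw [hs] at this; exact this.symm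
      subst hm0
      rw [Wm_zero, mul_one, show ι K (b i) = Wm b {i} by
        rw [show ({i} : Multiset Λ) = i ::ₘ 0 from rfl,
          Wm_cons_min b (by intro a ha; simp at ha), Wm_zero, mul_one]]
      exact Wm_mem_Sd b (by simp)
    · have hm0 : m = j ::ₘ (↑t : Multiset Λ) := sort_decomp hs
      have hjt : ∀ a ∈ (↑t : Multiset Λ), j ≤ a := sort_head_le hs
      have htsorted : (t : List Λ).Pairwise (· ≤ ·) := by
        have := Multiset.pairwise_sort m (· ≤ ·)
        rw [hs, List.pairwise_cons] at this
        exact this.2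
      have hWm : Wm b m = ι K (b j) * Wm b ↑t := by
        rw [hm0, Wm_cons_min b hjt]
      have hct : Multiset.card (↑t : Multiset Λ) + 1 = Multiset.card m := (sort_card hs).symm
      by_cases hij : i ≤ j
      · have him : ∀ a ∈ m, i ≤ a := by
          intro a ha
          rw [hm0] at ha
          rcases Multiset.mem_cons.mp ha with rfl | ha
          · exact hij
          · exact le_trans hij (hjt a ha)
        rw [← Wm_cons_min b him]
        exact Wm_mem_Sd b (by simp)
      · -- straightening step
        have hji : j < i := not_le.mp hij
        -- memberships from the inductive hypothesis
        have hx : ∀ k : Λ, ι K (b k) * Wm b ↑t ∈ Sd b (Multiset.card m) := by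
          intro k
          have := IHq (toLex (Multiset.card (↑t : Multiset Λ), k))
            (Prod.Lex.lt_iff.mpr (Or.inl (by show Multiset.card (↑t : Multiset Λ) < Multiset.card m; omega))) ↑t le_rfl
          rw [hct] at this
          exact this
        have hgen : ∀ x : L, ι K x * Wm b ↑t ∈ Sd b (Multiset.card m) := by
          intro x
          have hexp : ι K x = (b.repr x).sum fun k c => c • ι K (b k) := by
            conv_lhs => rw [← Module.Basis.linearCombination_repr b x]
            rw [Finsupp.linearCombination_apply]
            show (ι K : L →ₗ⁅K⁆ _).toLinearMap _ = _
            rw [map_finsuppSum]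
            apply Finsupp.sum_congr
            intro k hk
            rw [map_smul]
            rfl
          rw [hexp, Finsupp.sum_mul]
          apply Submodule.finsuppSum_mem
          intro k hk
          rw [smul_mul_assoc]
          exact Submodule.smul_mem _ _ (hx k)
        have hmulj : ∀ p ∈ Sd b (Multiset.card m), ι K (b j) * p ∈ Sd b (Multiset.card m + 1) := by
          intro p hp
          induction hp using Submodule.span_induction with
          | mem p hp =>
            obtain ⟨ν, hν, rfl⟩ := hp
            have hν2 : Multiset.card ν ≤ Multiset.card m := hν
            have := IHq (toLex (Multiset.card m, j))
              (Prod.Lex.lt_iff.mpr (Or.inr ⟨rfl, hji⟩)) ν hν2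
            exact Sd_mono b (by omega) this
          | zero => rw [mul_zero]; exact Submodule.zero_mem _
          | add p p' _ _ hp hp' => rw [mul_add]; exact Submodule.add_mem _ hp hp'
          | smul c p _ hp => rw [mul_smul_comm]; exact Submodule.smul_mem _ _ hp
        -- the straightening identity
        have hkey : ι K (b i) * Wm b m
            = ι K (b j) * (ι K (b i) * Wm b ↑t) + ι K ⁅b i, b j⁆ * Wm b ↑t := by
          rw [hWm, ← mul_assoc, ← mul_assoc, iota_swap (b i) (b j), add_mul]
        rw [hkey]
        exact Submodule.add_mem _ (hmulj _ (hx i))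
          (Sd_mono b (by omega) (hgen ⁅b i, b j⁆))
  exact main (toLex (Multiset.card m₀, i₀)) m₀ le_rfl

/-- the ordered monomials span `U(L)` -/
lemma span_Wm_top :
    Submodule.span K (Set.range fun m : Multiset Λ => Wm b m) = ⊤ := by
  set S := Submodule.span K (Set.range fun m : Multiset Λ => Wm b m) with hS
  have hSd : ∀ n, Sd b n ≤ S := by
    intro n
    apply Submodule.span_le.mpr
    rintro _ ⟨ν, _, rfl⟩
    exact Submodule.subset_span ⟨ν, rfl⟩
  have hιS : ∀ (x : L) (p : UniversalEnvelopingAlgebra K L), p ∈ S → ι K x * p ∈ S := by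
    intro x p hp
    induction hp using Submodule.span_induction with
    | mem p hp =>
      obtain ⟨ν, rfl⟩ := hp
      -- expand x in the basis
      have hexp : ι K x = (b.repr x).sum fun k c => c • ι K (b k) := by
        conv_lhs => rw [← Module.Basis.linearCombination_repr b x]
        rw [Finsupp.linearCombination_apply]
        show (ι K : L →ₗ⁅K⁆ _).toLinearMap _ = _
        rw [map_finsuppSum]
        apply Finsupp.sum_congr
        intro k hk
        rw [map_smul]
        rfl
      rw [hexp, Finsupp.sum_mul]
      apply Submodule.finsuppSum_mem
      intro k hk
      rw [smul_mul_assoc]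
      exact Submodule.smul_mem _ _ (hSd _ (iota_mul_Wm_mem b k ν))
    | zero => rw [mul_zero]; exact Submodule.zero_mem _
    | add p p' _ _ hp hp' => rw [mul_add]; exact Submodule.add_mem _ hp hp'
    | smul c p _ hp => rw [mul_smul_comm]; exact Submodule.smul_mem _ _ hp
  rw [eq_top_iff]
  intro u _
  have h1 : (1 : UniversalEnvelopingAlgebra K L) ∈ S := by
    rw [← Wm_zero b]; exact Submodule.subset_span ⟨0, rfl⟩
  have : ∀ v : UniversalEnvelopingAlgebra K L, ∀ p ∈ S, v * p ∈ S := by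
    intro v
    induction v using uea_induction with
    | h_alg c => intro p hp; rw [← Algebra.smul_def]; exact Submodule.smul_mem _ _ hp
    | h_iota x => exact hιS x
    | h_mul a b' ha hb => intro p hp; rw [mul_assoc]; exact ha _ (hb _ hp)
    | h_add a b' ha hb => intro p hp; rw [add_mul]; exact Submodule.add_mem _ (ha _ hp) (hb _ hp)
  simpa using this u 1 h1

end Span

end PBW

open UniversalEnvelopingAlgebra

/-- if `f : 𝔤 → 𝔤'` is an injective homomorphism of Lie algebras over a
field `K`, then the induced map `U(f) : U(𝔤) → U(𝔤')` of universal enveloping algebras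
is injective. -/
theorem stmt13 {K 𝔤 𝔤' : Type*} [Field K]
    [LieRing 𝔤] [LieAlgebra K 𝔤] [LieRing 𝔤'] [LieAlgebra K 𝔤']
    (f : 𝔤 →ₗ⁅K⁆ 𝔤') (hf : Function.Injective f) :
    Function.Injective
      (UniversalEnvelopingAlgebra.lift K
        ((UniversalEnvelopingAlgebra.ι K).comp f :
          𝔤 →ₗ⁅K⁆ UniversalEnvelopingAlgebra K 𝔤')) := by
  classical
  -- well-ordered bases
  set ΛG := (Module.Basis.ofVectorSpaceIndex K 𝔤 : Type _) with hΛG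
  letI : LinearOrder ΛG := IsWellOrder.linearOrder WellOrderingRel
  haveI : WellFoundedLT ΛG :=
    ⟨(inferInstance : IsWellFounded ΛG WellOrderingRel).wf⟩
  set bG : Module.Basis ΛG K 𝔤 := Module.Basis.ofVectorSpace K 𝔤 with hbG
  -- complement of the image of f
  have hf' : Function.Injective f.toLinearMap := hf
  set p : Submodule K 𝔤' := LinearMap.range f.toLinearMap with hp
  set e : 𝔤 ≃ₗ[K] p := LinearEquiv.ofInjective f.toLinearMap hf' with he
  obtain ⟨q, hq⟩ := Submodule.exists_isCompl p
  set Λq := (Module.Basis.ofVectorSpaceIndex K q : Type _) with hΛq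
  letI : LinearOrder Λq := IsWellOrder.linearOrder WellOrderingRel
  set bQ : Module.Basis Λq K q := Module.Basis.ofVectorSpace K q with hbQ
  set Λ := Lex (ΛG ⊕ Λq) with hΛ
  set b : Module.Basis Λ K 𝔤' :=
    (((bG.map e).prod bQ).map (Submodule.prodEquivOfIsCompl p q hq)).reindex
      (toLex : (ΛG ⊕ Λq) ≃ Λ) with hb
  set emb : ΛG → Λ := fun a => toLex (Sum.inl a) with hemb
  have hembinj : Function.Injective emb := fun a a' h =>
    Sum.inl_injective (toLex.injective h)
  have hembmono : ∀ a a' : ΛG, a ≤ a' → emb a ≤ emb a' := fun a a' h =>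
    Sum.Lex.inl_le_inl_iff.mpr h
  have hbe : ∀ a : ΛG, b (emb a) = f (bG a) := by
    intro a
    rw [hb, Module.Basis.reindex_apply]
    have : (toLex : (ΛG ⊕ Λq) ≃ Λ).symm (emb a) = Sum.inl a := rfl
    rw [this, Module.Basis.map_apply, Module.Basis.prod_apply]
    simp only [Sum.elim_inl, Function.comp_apply, LinearMap.coe_inl]
    have : (Submodule.prodEquivOfIsCompl p q hq) ((bG.map e) a, (0 : q))
        = ((bG.map e) a : 𝔤') + ((0 : q) : 𝔤') := by
      have hco := Submodule.coe_prodEquivOfIsCompl p q hq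
      calc (Submodule.prodEquivOfIsCompl p q hq) ((bG.map e) a, (0 : q))
          = (p.subtype.coprod q.subtype) ((bG.map e) a, (0 : q)) := by rw [← hco]; rfl
        _ = _ := by rw [LinearMap.coprod_apply]; rfl
    rw [this]
    simp only [ZeroMemClass.coe_zero, add_zero, Module.Basis.map_apply]
    exact LinearEquiv.ofInjective_apply f.toLinearMap (bG a)
  set φ := UniversalEnvelopingAlgebra.lift K
    ((UniversalEnvelopingAlgebra.ι K).comp f :
      𝔤 →ₗ⁅K⁆ UniversalEnvelopingAlgebra K 𝔤') with hφ
  rw [injective_iff_map_eq_zero]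
  intro u hu
  -- u is a combination of ordered monomials
  have humem : u ∈ Submodule.span K (Set.range fun m : Multiset ΛG => Wm bG m) := by
    rw [span_Wm_top]; trivial
  obtain ⟨c, hc⟩ := Finsupp.mem_span_range_iff_exists_finsupp.mp humem
  -- φ maps ordered monomials to ordered monomials
  have hφW : ∀ m : Multiset ΛG, φ (Wm bG m) = Wm b (m.map emb) := by
    intro m
    have hsort : Multiset.sort (m.map emb) (· ≤ ·)
        = (Multiset.sort m (· ≤ ·)).map emb := by
      apply List_eq_of_perm_of_sorted (r := (· ≤ · : Λ → Λ → Prop))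
      · rw [← Multiset.coe_eq_coe, Multiset.sort_eq, ← Multiset.map_coe, Multiset.sort_eq]
      · exact Multiset.pairwise_sort _ _
      · exact List.Pairwise.map emb (fun a a' h => hembmono a a' h)
          (Multiset.pairwise_sort m (· ≤ ·))
    rw [Wm, Wm, hsort, Wd, Wd, map_list_prod, List.map_map, List.map_map]
    congr 1
    apply List.map_congr_left
    intro a _
    show φ (ι K (bG a)) = ι K (b (emb a))
    rw [hφ, lift_ι_apply, hbe]
    rfl
  -- evaluate
  have hev : ev b (φ u) = 0 := by rw [hu, map_zero]
  rw [← hc, map_finsuppSum, map_finsuppSum] at hev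
  have hev' : (c.sum fun m r => r • (zz (m.map emb) : PM K Λ)) = 0 := by
    rw [← hev]
    apply Finsupp.sum_congr
    intro m _
    rw [map_smul, map_smul, hφW, ev_Wm]
  -- linear independence of the image monomials
  have hind : LinearIndependent K fun m : Multiset ΛG => (zz (m.map emb) : PM K Λ) := by
    have h1 : LinearIndependent K fun ν : Multiset Λ => (zz ν : PM K Λ) := by
      have := (Finsupp.basisSingleOne (R := K) (ι := Multiset Λ)).linearIndependent
      simpa [zz, Finsupp.coe_basisSingleOne] using this
    exact h1.comp (fun m : Multiset ΛG => m.map emb) (Multiset.map_injective hembinj)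
  have hc0 : c = 0 := by
    apply linearIndependent_iff.mp hind
    rw [Finsupp.linearCombination_apply]
    exact hev'
  rw [← hc, hc0, Finsupp.sum_zero_index]
end

section
/- Let G be a group with N-series 𝒢, and let 𝒢 induce the 2-truncated structure maps. Then the sequence G^{AB} ∧ G^{AB} → (G_{(2)}/G_{(3)}) ⊕ (G^{AB} ⊗ G^{AB}) → Q_2^𝒢(G) → 0 is exact, where the first map is (c_2, −l_2) with c_2(ā ∧ b̄) = [a,b]G_{(3)} and l_2(ā ∧ b̄) = ā ⊗ b̄ − b̄ ⊗ ā, and the second map sends (aG_{(3)}, ā ⊗ b̄) to (a−1) + (a−1)(b−1) mod I_𝒢^3(G). -/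
open MonoidAlgebra TensorProduct
open scoped commutatorElement

/-- The filtration ideal `I_𝒢^n(G) ⊆ ℤ[G]` associated to an N-series `Gs`. -/
noncomputable def nIdeal (G : Type*) [Group G] (Gs : ℕ → Subgroup G) (n : ℕ) :
    Submodule ℤ (MonoidAlgebra ℤ G) :=
  Submodule.span ℤ
    {x | ∃ l : List (ℕ × G), l ≠ [] ∧ (∀ p ∈ l, 1 ≤ p.1 ∧ p.2 ∈ Gs p.1) ∧
      n ≤ (l.map Prod.fst).sum ∧
      x = (l.map fun p => MonoidAlgebra.of ℤ G p.2 - 1).prod}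

section Tw

variable {A C : Type*} [AddCommGroup A] [AddCommGroup C]

/-- Data of a symmetric 2-cocycle `ω` on `A` with values in `C`, together with a
bilinear map `μ`. -/
structure Cd (A C : Type*) [AddCommGroup A] [AddCommGroup C] where
  ω : A → A → C
  μ : A →+ A →+ C
  ω_zero : ∀ a, ω a 0 = 0
  zero_ω : ∀ a, ω 0 a = 0
  coc : ∀ a b d, ω a b + ω (a + b) d = ω b d + ω a (b + d)
  wsymm : ∀ a b, ω a b = ω b a

variable (D : Cd A C)

/-- The abelian group `C ⊕ A` with addition twisted by the cocycle `ω`. -/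
def TwW (_D : Cd A C) : Type _ := C × A

namespace TwW

instance : Add (TwW D) := ⟨fun x y => (x.1 + y.1 + D.ω x.2 y.2, x.2 + y.2)⟩
instance : Zero (TwW D) := ⟨((0 : C), (0 : A))⟩
instance : Neg (TwW D) := ⟨fun x => (-x.1 - D.ω (-x.2) x.2, -x.2)⟩

lemma add_def (x y : TwW D) : x + y = (x.1 + y.1 + D.ω x.2 y.2, x.2 + y.2) := rfl
lemma zero_def : (0 : TwW D) = ((0 : C), (0 : A)) := rfl

instance addGroup : AddGroup (TwW D) := by
  refine AddGroup.ofLeftAxioms ?_ ?_ ?_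
  · intro a b c
    refine Prod.ext ?_ ?_
    · show a.1 + b.1 + D.ω a.2 b.2 + c.1 + D.ω (a.2 + b.2) c.2 =
        a.1 + (b.1 + c.1 + D.ω b.2 c.2) + D.ω a.2 (b.2 + c.2)
      have := D.coc a.2 b.2 c.2
      rw [show a.1 + b.1 + D.ω a.2 b.2 + c.1 + D.ω (a.2 + b.2) c.2
          = a.1 + b.1 + c.1 + (D.ω a.2 b.2 + D.ω (a.2 + b.2) c.2) by abel, this]
      abel
    · exact add_assoc _ _ _
  · intro a
    refine Prod.ext ?_ ?_
    · show 0 + a.1 + D.ω 0 a.2 = a.1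
      rw [D.zero_ω]; abel
    · exact zero_add _
  · intro a
    refine Prod.ext ?_ ?_
    · show -a.1 - D.ω (-a.2) a.2 + a.1 + D.ω (-a.2) a.2 = 0
      abel
    · exact neg_add_cancel _

instance : AddCommGroup (TwW D) :=
  { (inferInstance : AddGroup (TwW D)) with
    add_comm := by
      intro a b
      refine Prod.ext ?_ ?_
      · show a.1 + b.1 + D.ω a.2 b.2 = b.1 + a.1 + D.ω b.2 a.2
        rw [D.wsymm a.2 b.2]; abel
      · exact add_comm _ _ }

/-- Projection to `A`, an additive homomorphism. -/
def pA : TwW D →+ A where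
  toFun w := w.2
  map_zero' := rfl
  map_add' _ _ := rfl

/-- Inclusion of `C`, an additive homomorphism. -/
def iC : C →+ TwW D where
  toFun q := (q, 0)
  map_zero' := rfl
  map_add' q q' := by
    refine Prod.ext ?_ ?_
    · show q + q' = q + q' + D.ω 0 0
      rw [D.zero_ω]; abel
    · show (0 : A) = 0 + 0
      rw [add_zero]

@[simp] lemma pA_iC (q : C) : pA D (iC D q) = 0 := rfl

lemma eq_iC (w : TwW D) (h : pA D w = 0) : w = iC D w.1 := by
  refine Prod.ext rfl ?_
  exact h

end TwW

/-- The truncated "group ring" `ℤ ⊕ W`. -/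
def TwR (_D : Cd A C) : Type _ := ℤ × TwW _D

namespace TwR

instance : AddCommGroup (TwR D) := inferInstanceAs (AddCommGroup (ℤ × TwW D))

instance : Mul (TwR D) :=
  ⟨fun x y => (x.1 * y.1,
    x.1 • y.2 + y.1 • x.2 + TwW.iC D (D.μ (TwW.pA D x.2) (TwW.pA D y.2)))⟩

instance : One (TwR D) := ⟨((1 : ℤ), (0 : TwW D))⟩

lemma mul_def (x y : TwR D) : x * y = (x.1 * y.1,
    x.1 • y.2 + y.1 • x.2 + TwW.iC D (D.μ (TwW.pA D x.2) (TwW.pA D y.2))) := rfl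

lemma one_def : (1 : TwR D) = ((1 : ℤ), (0 : TwW D)) := rfl

lemma add_fst (x y : TwR D) : (x + y).1 = x.1 + y.1 := rfl
lemma add_snd (x y : TwR D) : (x + y).2 = x.2 + y.2 := rfl
lemma zero_def : (0 : TwR D) = ((0 : ℤ), (0 : TwW D)) := rfl

instance : Ring (TwR D) where
  __ := (inferInstance : AddCommGroup (TwR D))
  mul := (· * ·)
  one := 1
  left_distrib x y z := by
    refine Prod.ext ?_ ?_
    · show x.1 * (y.1 + z.1) = x.1 * y.1 + x.1 * z.1
      ring
    · show x.1 • (y.2 + z.2) + (y.1 + z.1) • x.2 +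
          TwW.iC D (D.μ (TwW.pA D x.2) (TwW.pA D (y.2 + z.2))) = _
      rw [map_add (TwW.pA D), map_add (D.μ (TwW.pA D x.2)), map_add (TwW.iC D),
        smul_add, add_smul]
      show _ = (x.1 • y.2 + y.1 • x.2 + TwW.iC D (D.μ (TwW.pA D x.2) (TwW.pA D y.2)))
        + (x.1 • z.2 + z.1 • x.2 + TwW.iC D (D.μ (TwW.pA D x.2) (TwW.pA D z.2)))
      abel
  right_distrib x y z := by
    refine Prod.ext ?_ ?_
    · show (x.1 + y.1) * z.1 = x.1 * z.1 + y.1 * z.1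
      ring
    · show (x.1 + y.1) • z.2 + z.1 • (x.2 + y.2) +
          TwW.iC D (D.μ (TwW.pA D (x.2 + y.2)) (TwW.pA D z.2)) = _
      rw [map_add (TwW.pA D), map_add D.μ, AddMonoidHom.add_apply, map_add (TwW.iC D),
        smul_add, add_smul]
      show _ = (x.1 • z.2 + z.1 • x.2 + TwW.iC D (D.μ (TwW.pA D x.2) (TwW.pA D z.2)))
        + (y.1 • z.2 + z.1 • y.2 + TwW.iC D (D.μ (TwW.pA D y.2) (TwW.pA D z.2)))
      abel
  zero_mul x := by
    refine Prod.ext ?_ ?_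
    · show 0 * x.1 = 0; ring
    · show (0 : ℤ) • x.2 + x.1 • (0 : TwW D) +
          TwW.iC D (D.μ (TwW.pA D (0 : TwW D)) (TwW.pA D x.2)) = 0
      rw [zero_smul, smul_zero, map_zero (TwW.pA D), map_zero D.μ,
        AddMonoidHom.zero_apply, map_zero]
      abel
  mul_zero x := by
    refine Prod.ext ?_ ?_
    · show x.1 * 0 = 0; ring
    · show x.1 • (0 : TwW D) + (0 : ℤ) • x.2 +
          TwW.iC D (D.μ (TwW.pA D x.2) (TwW.pA D (0 : TwW D))) = 0
      rw [zero_smul, smul_zero, map_zero (TwW.pA D), map_zero (D.μ _), map_zero]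
      abel
  mul_assoc x y z := by
    refine Prod.ext ?_ ?_
    · show x.1 * y.1 * z.1 = x.1 * (y.1 * z.1); ring
    · show (x.1 * y.1) • z.2 + z.1 • (x.1 • y.2 + y.1 • x.2 +
          TwW.iC D (D.μ (TwW.pA D x.2) (TwW.pA D y.2))) +
          TwW.iC D (D.μ (TwW.pA D (x.1 • y.2 + y.1 • x.2 +
            TwW.iC D (D.μ (TwW.pA D x.2) (TwW.pA D y.2)))) (TwW.pA D z.2)) =
        x.1 • (y.1 • z.2 + z.1 • y.2 + TwW.iC D (D.μ (TwW.pA D y.2) (TwW.pA D z.2))) +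
          (y.1 * z.1) • x.2 +
          TwW.iC D (D.μ (TwW.pA D x.2) (TwW.pA D (y.1 • z.2 + z.1 • y.2 +
            TwW.iC D (D.μ (TwW.pA D y.2) (TwW.pA D z.2)))))
      simp only [map_add, map_zsmul, TwW.pA_iC, add_zero, AddMonoidHom.add_apply,
        AddMonoidHom.smul_apply, smul_add, smul_smul]
      rw [mul_comm z.1 x.1, mul_comm z.1 y.1]
      abel
  one_mul x := by
    refine Prod.ext ?_ ?_
    · show 1 * x.1 = x.1; ring
    · show (1 : ℤ) • x.2 + x.1 • (0 : TwW D) +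
          TwW.iC D (D.μ (TwW.pA D (0 : TwW D)) (TwW.pA D x.2)) = x.2
      rw [one_smul, smul_zero, map_zero (TwW.pA D), map_zero D.μ,
        AddMonoidHom.zero_apply, map_zero]
      abel
  mul_one x := by
    refine Prod.ext ?_ ?_
    · show x.1 * 1 = x.1; ring
    · show x.1 • (0 : TwW D) + (1 : ℤ) • x.2 +
          TwW.iC D (D.μ (TwW.pA D x.2) (TwW.pA D (0 : TwW D))) = x.2
      rw [one_smul, smul_zero, map_zero (TwW.pA D), map_zero (D.μ _), map_zero]
      abel

end TwR


namespace TwR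

/-- First projection as an additive homomorphism. -/
def fstHom (D : Cd A C) : TwR D →+ ℤ where
  toFun x := x.1
  map_zero' := rfl
  map_add' _ _ := rfl

/-- Second projection as an additive homomorphism. -/
def sndHom (D : Cd A C) : TwR D →+ TwW D where
  toFun x := x.2
  map_zero' := rfl
  map_add' _ _ := rfl

/-- `Qdeg n r` : the element `r` "has degree at least `n`" (truncated at 3). -/
def Qdeg (D : Cd A C) (n : ℕ) (r : TwR D) : Prop :=
  (1 ≤ n → r.1 = 0) ∧ (2 ≤ n → TwW.pA D r.2 = 0) ∧ (3 ≤ n → r = 0)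

lemma Qdeg_mono {m n : ℕ} (h : m ≤ n) {r : TwR D} (hr : Qdeg D n r) : Qdeg D m r :=
  ⟨fun h1 => hr.1 (le_trans h1 h), fun h2 => hr.2.1 (le_trans h2 h),
    fun h3 => hr.2.2 (le_trans h3 h)⟩

lemma Qdeg_zero (n : ℕ) : Qdeg D n 0 :=
  ⟨fun _ => rfl, fun _ => map_zero _, fun _ => rfl⟩

lemma Qdeg_add {n : ℕ} {x y : TwR D} (hx : Qdeg D n x) (hy : Qdeg D n y) :
    Qdeg D n (x + y) := by
  refine ⟨fun h => ?_, fun h => ?_, fun h => ?_⟩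
  · show x.1 + y.1 = 0
    rw [hx.1 h, hy.1 h, add_zero]
  · show TwW.pA D (x.2 + y.2) = 0
    rw [map_add, hx.2.1 h, hy.2.1 h, add_zero]
  · rw [hx.2.2 h, hy.2.2 h, add_zero]

lemma Qdeg_smul {n : ℕ} (z : ℤ) {x : TwR D} (hx : Qdeg D n x) : Qdeg D n (z • x) := by
  refine ⟨fun h => ?_, fun h => ?_, fun h => ?_⟩
  · show fstHom D (z • x) = 0
    rw [map_zsmul, show fstHom D x = x.1 from rfl, hx.1 h, smul_zero]
  · show TwW.pA D (sndHom D (z • x)) = 0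
    rw [map_zsmul, map_zsmul, show sndHom D x = x.2 from rfl, hx.2.1 h, smul_zero]
  · rw [hx.2.2 h, smul_zero]

lemma Qdeg_mul {i j : ℕ} {x y : TwR D} (hx : Qdeg D i x) (hy : Qdeg D j y) :
    Qdeg D (i + j) (x * y) := by
  obtain ⟨hx1, hx2, hx3⟩ := hx
  obtain ⟨hy1, hy2, hy3⟩ := hy
  refine ⟨fun h => ?_, fun h => ?_, fun h => ?_⟩
  · show x.1 * y.1 = 0
    by_cases h1 : 1 ≤ i
    · rw [hx1 h1, zero_mul]
    · rw [hy1 (by omega), mul_zero]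
  · show TwW.pA D (x.1 • y.2 + y.1 • x.2 + TwW.iC D (D.μ (TwW.pA D x.2) (TwW.pA D y.2))) = 0
    rw [map_add, map_add, TwW.pA_iC, map_zsmul, map_zsmul, add_zero]
    have h1 : x.1 • TwW.pA D y.2 = 0 := by
      by_cases hi : 1 ≤ i
      · rw [hx1 hi, zero_smul]
      · rw [hy2 (by omega), smul_zero]
    have h2 : y.1 • TwW.pA D x.2 = 0 := by
      by_cases hi : 2 ≤ i
      · rw [hx2 hi, smul_zero]
      · rw [hy1 (by omega), zero_smul]
    rw [h1, h2, add_zero]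
  · by_cases hi : 3 ≤ i
    · rw [hx3 hi, zero_mul]
    by_cases hj : 3 ≤ j
    · rw [hy3 hj, mul_zero]
    have hi1 : 1 ≤ i := by omega
    have hj1 : 1 ≤ j := by omega
    refine Prod.ext ?_ ?_
    · show x.1 * y.1 = 0
      rw [hx1 hi1, zero_mul]
    · show x.1 • y.2 + y.1 • x.2 + TwW.iC D (D.μ (TwW.pA D x.2) (TwW.pA D y.2)) = (0 : TwR D).2
      have hμ : D.μ (TwW.pA D x.2) (TwW.pA D y.2) = 0 := by
        by_cases hi2 : 2 ≤ i
        · rw [hx2 hi2, map_zero, AddMonoidHom.zero_apply]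
        · rw [hy2 (by omega), map_zero]
      rw [hx1 hi1, hy1 hj1, zero_smul, zero_smul, hμ, map_zero, add_zero, add_zero]
      rfl

lemma Qdeg_one : Qdeg D 0 1 :=
  ⟨fun h => by omega, fun h => by omega, fun h => by omega⟩

lemma Qdeg_list (l : List (ℕ × TwR D)) (h : ∀ p ∈ l, Qdeg D p.1 p.2) :
    Qdeg D ((l.map Prod.fst).sum) ((l.map Prod.snd).prod) := by
  induction l with
  | nil => simpa using Qdeg_one D
  | cons p l ih =>
    simp only [List.map_cons, List.sum_cons, List.prod_cons]
    exact Qdeg_mul D (h p (by simp)) (ih fun q hq => h q (by simp [hq]))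

end TwR

end Tw

set_option maxHeartbeats 2000000

/-- for an N-series `𝒢` of `G`, with `A` realizing `G^{AB} = G/G_{(2)}`
(via the surjection `α` with kernel `G_{(2)}`) and `B2` realizing `G_{(2)}/G_{(3)}`
(via `β`), the sequence
`G^{AB} ∧ G^{AB} → (G_{(2)}/G_{(3)}) ⊕ (G^{AB} ⊗ G^{AB}) → Q_2^𝒢(G) → 0`
is exact, where the first map `f` is `(c₂, −l₂)` with `c₂(ā∧b̄) = [a,b]G_{(3)}` and
`l₂(ā∧b̄) = ā⊗b̄ − b̄⊗ā`, and the second map `g₂` sends `(aG_{(3)}, x̄⊗ȳ)` to the class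
of `(a−1) + (x−1)(y−1)` in `Q_2^𝒢(G) = I_𝒢^2(G)/I_𝒢^3(G)`. -/
theorem stmt16 {G A B2 : Type*} [Group G] [AddCommGroup A] [AddCommGroup B2]
    (Gs : ℕ → Subgroup G) (hGs1 : Gs 1 = ⊤) (hdesc : ∀ i, Gs (i + 1) ≤ Gs i)
    (hcomm : ∀ i j, ∀ a ∈ Gs i, ∀ b ∈ Gs j, ⁅a, b⁆ ∈ Gs (i + j))
    (α : G → A) (hαadd : ∀ g h : G, α (g * h) = α g + α h)
    (hαsurj : Function.Surjective α) (hαker : ∀ g : G, α g = 0 ↔ g ∈ Gs 2)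
    (β : ↥(Gs 2) → B2) (hβadd : ∀ a b : ↥(Gs 2), β (a * b) = β a + β b)
    (hβsurj : Function.Surjective β) (hβker : ∀ a : ↥(Gs 2), β a = 0 ↔ (a : G) ∈ Gs 3)
    (f : ↥(⋀[ℤ]^2 A) →ₗ[ℤ] B2 × (A ⊗[ℤ] A))
    (hf : ∀ (g h : G) (hgh : ⁅g, h⁆ ∈ Gs 2)
      (hm : ExteriorAlgebra.ιMulti ℤ 2 ![α g, α h] ∈ ⋀[ℤ]^2 A),
      f ⟨ExteriorAlgebra.ιMulti ℤ 2 ![α g, α h], hm⟩ =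
        (β ⟨⁅g, h⁆, hgh⟩, -(α g ⊗ₜ[ℤ] α h - α h ⊗ₜ[ℤ] α g)))
    (g₂ : (B2 × (A ⊗[ℤ] A)) →ₗ[ℤ]
      (↥(nIdeal G Gs 2) ⧸ (nIdeal G Gs 3).comap (nIdeal G Gs 2).subtype))
    (hg₂a : ∀ (a : ↥(Gs 2)) (hm : MonoidAlgebra.of ℤ G (a : G) - 1 ∈ nIdeal G Gs 2),
      g₂ (β a, 0) = Submodule.Quotient.mk
        (⟨MonoidAlgebra.of ℤ G (a : G) - 1, hm⟩ : ↥(nIdeal G Gs 2)))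
    (hg₂b : ∀ (x y : G)
      (hm : (MonoidAlgebra.of ℤ G x - 1) * (MonoidAlgebra.of ℤ G y - 1) ∈ nIdeal G Gs 2),
      g₂ (0, α x ⊗ₜ[ℤ] α y) = Submodule.Quotient.mk
        (⟨(MonoidAlgebra.of ℤ G x - 1) * (MonoidAlgebra.of ℤ G y - 1), hm⟩ :
          ↥(nIdeal G Gs 2))) :
    Function.Exact f g₂ ∧ Function.Surjective g₂ := by
  classical
  -- ## Basic consequences of the hypotheses
  have hα1 : α 1 = 0 := by
    have h : α 1 = α 1 + α 1 := by rw [← hαadd, mul_one]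
    exact (left_eq_add.mp h)
  have hαinv : ∀ g : G, α g⁻¹ = -α g := by
    intro g
    have h : α g⁻¹ + α g = 0 := by rw [← hαadd, inv_mul_cancel, hα1]
    exact eq_neg_of_add_eq_zero_left h
  have hβ1 : β 1 = 0 := by
    have h : β 1 = β 1 + β 1 := by rw [← hβadd, mul_one]
    exact (left_eq_add.mp h)
  have hGsanti : ∀ {m n : ℕ}, m ≤ n → Gs n ≤ Gs m := by
    intro m n h
    induction n, h using Nat.le_induction with
    | base => exact le_rfl
    | succ n hn ih => exact (hdesc n).trans ih
  have hmemtop : ∀ g : G, g ∈ Gs 1 := by intro g; rw [hGs1]; trivial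
  have hβ3 : ∀ (u : ↥(Gs 2)), (u : G) ∈ Gs 3 → β u = 0 := fun u h => (hβker u).mpr h
  have hcomm2 : ∀ g h : G, ⁅g, h⁆ ∈ Gs 2 := by
    intro g h
    have := hcomm 1 1 g (hmemtop g) h (hmemtop h)
    simpa using this
  have hconjmem : ∀ (x : G) (u : ↥(Gs 2)), x * ↑u * x⁻¹ ∈ Gs 2 := by
    intro x u
    have h3 : ⁅x, (u : G)⁆ ∈ Gs 3 := by
      have := hcomm 1 2 x (hmemtop x) u u.2
      simpa using this
    have : x * ↑u * x⁻¹ = ⁅x, (u : G)⁆ * u := by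
      rw [commutatorElement_def]; group
    rw [this]
    exact mul_mem (hGsanti (by omega) h3) u.2
  have hβconj : ∀ (x : G) (u : ↥(Gs 2)) (h : x * ↑u * x⁻¹ ∈ Gs 2),
      β ⟨x * ↑u * x⁻¹, h⟩ = β u := by
    intro x u h
    have h3 : ⁅x, (u : G)⁆ ∈ Gs 3 := by
      have := hcomm 1 2 x (hmemtop x) u u.2
      simpa using this
    have h2 : ⁅x, (u : G)⁆ ∈ Gs 2 := hGsanti (by omega) h3
    have he : (⟨x * ↑u * x⁻¹, h⟩ : ↥(Gs 2)) = ⟨⁅x, (u : G)⁆, h2⟩ * u := by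
      ext
      show x * ↑u * x⁻¹ = ⁅x, (u : G)⁆ * u
      rw [commutatorElement_def]; group
    rw [he, hβadd, hβ3 _ h3, zero_add]
  -- ## The set-theoretic section `s` of `α`
  set s : A → G := fun a => if a = 0 then 1 else Classical.choose (hαsurj a) with hs_def
  have hs : ∀ a, α (s a) = a := by
    intro a
    by_cases h : a = 0
    · simp [hs_def, h, hα1]
    · simpa [hs_def, h] using Classical.choose_spec (hαsurj a)
  have hs0 : s 0 = 1 := by simp [hs_def]
  have hmemt : ∀ g : G, g * (s (α g))⁻¹ ∈ Gs 2 := by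
    intro g
    rw [← hαker, hαadd, hαinv, hs, add_neg_cancel]
  set tg : G → ↥(Gs 2) := fun g => ⟨g * (s (α g))⁻¹, hmemt g⟩ with htg_def
  have hmemc : ∀ a b : A, s a * s b * (s (a + b))⁻¹ ∈ Gs 2 := by
    intro a b
    rw [← hαker, hαadd, hαadd, hαinv, hs, hs, hs]
    abel
  set c2 : A → A → ↥(Gs 2) := fun a b => ⟨s a * s b * (s (a + b))⁻¹, hmemc a b⟩ with hc2_def
  -- ## The cokernel of `f`
  set rf : Submodule ℤ (B2 × (A ⊗[ℤ] A)) := LinearMap.range f with hrf_def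
  set mkC : (B2 × (A ⊗[ℤ] A)) →ₗ[ℤ] ((B2 × (A ⊗[ℤ] A)) ⧸ rf) := rf.mkQ with hmkC_def
  have hmk0 : ∀ y, mkC y = 0 ↔ y ∈ rf := by
    intro y
    rw [hmkC_def, Submodule.mkQ_apply, Submodule.Quotient.mk_eq_zero]
  have hfc : ∀ (g h : G),
      mkC (β ⟨⁅g, h⁆, hcomm2 g h⟩, -(α g ⊗ₜ[ℤ] α h - α h ⊗ₜ[ℤ] α g)) = 0 := by
    intro g h
    rw [hmk0]
    have hm : ExteriorAlgebra.ιMulti ℤ 2 ![α g, α h] ∈ ⋀[ℤ]^2 A :=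
      ExteriorAlgebra.ιMulti_range ℤ 2 ⟨![α g, α h], rfl⟩
    exact ⟨_, hf g h (hcomm2 g h) hm⟩
  -- ## The bilinear map μ and the cocycle ω
  have hpair_add : ∀ (b b' : B2) (t t' : A ⊗[ℤ] A),
      ((b, t) : B2 × (A ⊗[ℤ] A)) + (b', t') = (b + b', t + t') := fun _ _ _ _ => rfl
  set μ2 : A →+ A →+ ((B2 × (A ⊗[ℤ] A)) ⧸ rf) :=
    { toFun := fun a =>
      { toFun := fun b => mkC (0, a ⊗ₜ[ℤ] b)
        map_zero' := by
          show mkC (0, a ⊗ₜ[ℤ] (0 : A)) = 0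
          rw [TensorProduct.tmul_zero]; exact map_zero mkC
        map_add' := by
          intro b b'
          show mkC (0, a ⊗ₜ[ℤ] (b + b')) = mkC (0, a ⊗ₜ[ℤ] b) + mkC (0, a ⊗ₜ[ℤ] b')
          rw [TensorProduct.tmul_add, ← map_add, hpair_add, add_zero] }
      map_zero' := by
        ext b
        show mkC (0, (0 : A) ⊗ₜ[ℤ] b) = 0
        rw [TensorProduct.zero_tmul]; exact map_zero mkC
      map_add' := by
        intro a a'
        ext b
        show mkC (0, (a + a') ⊗ₜ[ℤ] b) = mkC (0, a ⊗ₜ[ℤ] b) + mkC (0, a' ⊗ₜ[ℤ] b)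
        rw [TensorProduct.add_tmul, ← map_add, hpair_add, add_zero] } with hμ2_def
  set ω : A → A → ((B2 × (A ⊗[ℤ] A)) ⧸ rf) :=
    fun a b => mkC (β (c2 a b), -(a ⊗ₜ[ℤ] b)) with hω_def
  have hc2_one_r : ∀ a, c2 a 0 = 1 := by
    intro a
    ext
    show s a * s 0 * (s (a + 0))⁻¹ = 1
    rw [hs0, add_zero, mul_one, mul_inv_cancel]
  have hc2_one_l : ∀ a, c2 0 a = 1 := by
    intro a
    ext
    show s 0 * s a * (s (0 + a))⁻¹ = 1
    rw [hs0, zero_add, one_mul, mul_inv_cancel]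
  have hω_zero : ∀ a, ω a 0 = 0 := by
    intro a
    rw [hω_def]
    show mkC (β (c2 a 0), -(a ⊗ₜ[ℤ] (0 : A))) = 0
    rw [hc2_one_r, hβ1, TensorProduct.tmul_zero, neg_zero]
    exact map_zero mkC
  have hzero_ω : ∀ a, ω 0 a = 0 := by
    intro a
    show mkC (β (c2 0 a), -((0 : A) ⊗ₜ[ℤ] a)) = 0
    rw [hc2_one_l, hβ1, TensorProduct.zero_tmul, neg_zero]
    exact map_zero mkC
  have hβc2_coc : ∀ a b d : A,
      β (c2 a b) + β (c2 (a + b) d) = β (c2 b d) + β (c2 a (b + d)) := by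
    intro a b d
    have key : c2 a b * c2 (a + b) d =
        (⟨s a * ↑(c2 b d) * (s a)⁻¹, hconjmem (s a) (c2 b d)⟩ : ↥(Gs 2)) * c2 a (b + d) := by
      ext
      show (s a * s b * (s (a + b))⁻¹) * (s (a + b) * s d * (s (a + b + d))⁻¹) =
        (s a * (s b * s d * (s (b + d))⁻¹) * (s a)⁻¹) * (s a * s (b + d) * (s (a + (b + d)))⁻¹)
      rw [← add_assoc]
      group
    have := congrArg β key
    rw [hβadd, hβadd, hβconj] at this
    rw [this]
  have hβc2_symm : ∀ a b : A,
      β (c2 a b) = β ⟨⁅s a, s b⁆, hcomm2 (s a) (s b)⟩ + β (c2 b a) := by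
    intro a b
    have key : c2 a b = (⟨⁅s a, s b⁆, hcomm2 (s a) (s b)⟩ : ↥(Gs 2)) * c2 b a := by
      ext
      show s a * s b * (s (a + b))⁻¹ = ⁅s a, s b⁆ * (s b * s a * (s (b + a))⁻¹)
      rw [commutatorElement_def, add_comm a b]
      group
    rw [key, hβadd]
  have hω_symm : ∀ a b : A, ω a b = ω b a := by
    intro a b
    have h1 : ω a b - ω b a =
        mkC (β ⟨⁅s a, s b⁆, hcomm2 (s a) (s b)⟩, -(a ⊗ₜ[ℤ] b - b ⊗ₜ[ℤ] a)) := by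
      rw [hω_def]
      show mkC (β (c2 a b), -(a ⊗ₜ[ℤ] b)) - mkC (β (c2 b a), -(b ⊗ₜ[ℤ] a)) = _
      rw [← map_sub, hβc2_symm a b]
      congr 1
      refine Prod.ext ?_ ?_
      · show β ⟨⁅s a, s b⁆, hcomm2 (s a) (s b)⟩ + β (c2 b a) - β (c2 b a) = _
        abel
      · show -(a ⊗ₜ[ℤ] b) - -(b ⊗ₜ[ℤ] a) = -(a ⊗ₜ[ℤ] b - b ⊗ₜ[ℤ] a)
        abel
    have h2 := hfc (s a) (s b)
    rw [hs, hs] at h2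
    rw [h2] at h1
    exact sub_eq_zero.mp h1
  have hω_coc : ∀ a b d : A, ω a b + ω (a + b) d = ω b d + ω a (b + d) := by
    intro a b d
    show mkC (β (c2 a b), -(a ⊗ₜ[ℤ] b)) + mkC (β (c2 (a + b) d), -((a + b) ⊗ₜ[ℤ] d)) =
      mkC (β (c2 b d), -(b ⊗ₜ[ℤ] d)) + mkC (β (c2 a (b + d)), -(a ⊗ₜ[ℤ] (b + d)))
    rw [← map_add, ← map_add, hpair_add, hpair_add]
    congr 1
    refine Prod.ext ?_ ?_
    · exact hβc2_coc a b d
    · show -(a ⊗ₜ[ℤ] b) + -((a + b) ⊗ₜ[ℤ] d) = -(b ⊗ₜ[ℤ] d) + -(a ⊗ₜ[ℤ] (b + d))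
      rw [TensorProduct.add_tmul, TensorProduct.tmul_add]
      abel
  set D : Cd A ((B2 × (A ⊗[ℤ] A)) ⧸ rf) :=
    { ω := ω, μ := μ2, ω_zero := hω_zero, zero_ω := hzero_ω,
      coc := hω_coc, wsymm := hω_symm } with hD_def
  -- ## The multiplicative map into the truncated ring
  set η : G → TwW D := fun g => (mkC (β (tg g), 0), α g) with hη_def
  have hβt : ∀ g h : G, β (tg (g * h)) = β (tg g) + β (tg h) + β (c2 (α g) (α h)) := by
    intro g h
    have key : tg (g * h) = tg g *
        ((⟨s (α g) * ↑(tg h) * (s (α g))⁻¹, hconjmem (s (α g)) (tg h)⟩ : ↥(Gs 2)) *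
          c2 (α g) (α h)) := by
      ext
      show g * h * (s (α (g * h)))⁻¹ =
        (g * (s (α g))⁻¹) * ((s (α g) * (h * (s (α h))⁻¹) * (s (α g))⁻¹) *
          (s (α g) * s (α h) * (s (α g + α h))⁻¹))
      rw [hαadd]
      group
    have := congrArg β key
    rw [hβadd, hβadd, hβconj] at this
    rw [this, add_assoc]
  set Φ : G →* TwR D :=
    { toFun := fun g => ((1 : ℤ), η g)
      map_one' := by
        have ht1 : tg 1 = 1 := by
          ext
          show (1 : G) * (s (α 1))⁻¹ = 1
          rw [hα1, hs0]; group
        refine Prod.ext rfl ?_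
        show η 1 = (0 : TwW D)
        rw [hη_def]
        show (mkC (β (tg 1), 0), α 1) = ((0 : (B2 × (A ⊗[ℤ] A)) ⧸ rf), (0 : A))
        rw [ht1, hβ1, hα1]
        refine Prod.ext ?_ rfl
        show mkC (0, 0) = 0
        exact map_zero mkC
      map_mul' := by
        intro g h
        refine Prod.ext ?_ ?_
        · show (1 : ℤ) = 1 * 1
          norm_num
        · show η (g * h) = (1 : ℤ) • η h + (1 : ℤ) • η g +
            TwW.iC D (D.μ (TwW.pA D (η g)) (TwW.pA D (η h)))
          rw [one_smul, one_smul, add_comm (η h) (η g)]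
          refine Prod.ext ?_ ?_
          · show mkC (β (tg (g * h)), 0) =
              mkC (β (tg g), 0) + mkC (β (tg h), 0) +
                mkC (β (c2 (α g) (α h)), -(α g ⊗ₜ[ℤ] α h)) +
                mkC (0, α g ⊗ₜ[ℤ] α h) +
                mkC (β (c2 (α g + α h) 0), -((α g + α h) ⊗ₜ[ℤ] (0 : A)))
            rw [hc2_one_r, hβ1, TensorProduct.tmul_zero, neg_zero,
              show ((0 : B2), (0 : A ⊗[ℤ] A)) = (0 : B2 × (A ⊗[ℤ] A)) from rfl,
              map_zero, add_zero, ← map_add, ← map_add, ← map_add]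
            congr 1
            rw [Prod.ext_iff]
            refine ⟨?_, ?_⟩ <;>
              simp [Prod.fst_add, Prod.snd_add, hβt g h]
          · show α (g * h) = α g + α h + 0
            rw [add_zero]
            exact hαadd g h } with hΦ_def
  set Θ : MonoidAlgebra ℤ G →ₐ[ℤ] TwR D := MonoidAlgebra.lift ℤ (TwR D) G Φ with hΘ_def
  have hΘof : ∀ g : G, Θ (MonoidAlgebra.of ℤ G g) = ((1 : ℤ), η g) := by
    intro g
    rw [hΘ_def, MonoidAlgebra.lift_of]
    rfl
  have hΘgen : ∀ g : G, Θ (MonoidAlgebra.of ℤ G g - 1) = ((0 : ℤ), η g) := by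
    intro g
    rw [map_sub, map_one, hΘof]
    refine Prod.ext ?_ ?_
    · show (1 : ℤ) - 1 = 0
      norm_num
    · show η g - (0 : TwW D) = η g
      rw [sub_zero]
  -- ## Degree estimates
  have hQsingle : ∀ (k : ℕ) (u : G), 1 ≤ k → u ∈ Gs k →
      TwR.Qdeg D k (Θ (MonoidAlgebra.of ℤ G u - 1)) := by
    intro k u hk hu
    rw [hΘgen]
    refine ⟨fun _ => rfl, fun h2 => ?_, fun h3 => ?_⟩
    · show α u = 0
      exact (hαker u).mpr (hGsanti h2 hu)
    · have hu2 : u ∈ Gs 2 := hGsanti (by omega) hu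
      have hu3 : u ∈ Gs 3 := hGsanti h3 hu
      have hau : α u = 0 := (hαker u).mpr hu2
      have htgu : tg u = ⟨u, hu2⟩ := by
        ext
        show u * (s (α u))⁻¹ = u
        rw [hau, hs0]; group
      refine Prod.ext rfl ?_
      show η u = (0 : TwW D)
      refine Prod.ext ?_ ?_
      · show mkC (β (tg u), 0) = 0
        rw [htgu, hβ3 ⟨u, hu2⟩ hu3,
          show ((0 : B2), (0 : A ⊗[ℤ] A)) = (0 : B2 × (A ⊗[ℤ] A)) from rfl]
        exact map_zero mkC
      · exact hau
  have hdeg : ∀ (n : ℕ) (x : MonoidAlgebra ℤ G), x ∈ nIdeal G Gs n →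
      TwR.Qdeg D n (Θ x) := by
    intro n x hx
    unfold nIdeal at hx
    induction hx using Submodule.span_induction with
    | mem y hy =>
      obtain ⟨l, hne, hcond, hsum, rfl⟩ := hy
      have hall : ∀ q ∈ l.map (fun p => (p.1, Θ (MonoidAlgebra.of ℤ G p.2 - 1))),
          TwR.Qdeg D q.1 q.2 := by
        intro q hq
        obtain ⟨p, hp, rfl⟩ := List.mem_map.mp hq
        exact hQsingle p.1 p.2 (hcond p hp).1 (hcond p hp).2
      have hQ := TwR.Qdeg_list D _ hall
      rw [List.map_map, List.map_map] at hQ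
      rw [map_list_prod, List.map_map]
      refine TwR.Qdeg_mono D hsum ?_
      simpa [Function.comp_def, map_sub, map_one] using hQ
    | zero =>
      rw [map_zero]; exact TwR.Qdeg_zero D n
    | add x y hx hy ihx ihy =>
      rw [map_add]; exact TwR.Qdeg_add D ihx ihy
    | smul z x hx ih =>
      rw [map_smul]; exact TwR.Qdeg_smul D z ih
  -- ## Membership helpers
  have mem_single : ∀ (k : ℕ) (u : G), 1 ≤ k → u ∈ Gs k →
      MonoidAlgebra.of ℤ G u - 1 ∈ nIdeal G Gs k := by
    intro k u hk hu
    refine Submodule.subset_span ⟨[(k, u)], by simp, ?_, by simp, by simp⟩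
    intro p hp
    rw [List.mem_singleton] at hp
    subst hp
    exact ⟨hk, hu⟩
  have mem_double : ∀ x y : G,
      (MonoidAlgebra.of ℤ G x - 1) * (MonoidAlgebra.of ℤ G y - 1) ∈ nIdeal G Gs 2 := by
    intro x y
    refine Submodule.subset_span ⟨[(1, x), (1, y)], by simp, ?_, by simp, by simp⟩
    intro p hp
    simp only [List.mem_cons, List.mem_singleton, List.not_mem_nil, or_false] at hp
    rcases hp with rfl | rfl
    · exact ⟨le_rfl, hmemtop x⟩
    · exact ⟨le_rfl, hmemtop y⟩
  have mem_triple : ∀ x y z : G,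
      (MonoidAlgebra.of ℤ G x - 1) * ((MonoidAlgebra.of ℤ G y - 1) *
        (MonoidAlgebra.of ℤ G z - 1)) ∈ nIdeal G Gs 3 := by
    intro x y z
    refine Submodule.subset_span ⟨[(1, x), (1, y), (1, z)], by simp, ?_, by simp, by simp [mul_assoc]⟩
    intro p hp
    simp only [List.mem_cons, List.mem_singleton, List.not_mem_nil, or_false] at hp
    rcases hp with rfl | rfl | rfl
    · exact ⟨le_rfl, hmemtop x⟩
    · exact ⟨le_rfl, hmemtop y⟩
    · exact ⟨le_rfl, hmemtop z⟩
  -- ## The map ψ on `I²` and the induced map on the quotient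
  have hθ2 : ∀ x : MonoidAlgebra ℤ G, x ∈ nIdeal G Gs 2 → TwW.pA D (Θ x).2 = 0 :=
    fun x hx => (hdeg 2 x hx).2.1 (le_refl 2)
  set ψ : ↥(nIdeal G Gs 2) →ₗ[ℤ] ((B2 × (A ⊗[ℤ] A)) ⧸ rf) :=
    { toFun := fun x => (Θ x.1).2.1
      map_add' := by
        intro x y
        show (Θ ((x : MonoidAlgebra ℤ G) + y)).2.1 = (Θ x.1).2.1 + (Θ y.1).2.1
        rw [map_add]
        show (Θ x.1).2.1 + (Θ y.1).2.1 +
          D.ω (TwW.pA D (Θ x.1).2) (TwW.pA D (Θ y.1).2) = _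
        rw [hθ2 x.1 x.2, hθ2 y.1 y.2, show D.ω = ω from rfl, hzero_ω 0, add_zero]
      map_smul' := by
        intro z x
        show (Θ (z • (x : MonoidAlgebra ℤ G))).2.1 = z • (Θ x.1).2.1
        rw [map_smul]
        have h1 : (z • Θ x.1).2 = z • (Θ x.1).2 := map_zsmul (TwR.sndHom D) z (Θ x.1)
        rw [h1, TwW.eq_iC D (Θ x.1).2 (hθ2 x.1 x.2), ← map_zsmul (TwW.iC D)]
        rfl } with hψ_def
  have hle : (nIdeal G Gs 3).comap (nIdeal G Gs 2).subtype ≤ LinearMap.ker ψ := by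
    intro x hx
    have h3 : (x : MonoidAlgebra ℤ G) ∈ nIdeal G Gs 3 := hx
    have h0 := (hdeg 3 x.1 h3).2.2 (le_refl 3)
    show ψ x = 0
    show (Θ x.1).2.1 = 0
    rw [h0]
    rfl
  set ψbar := Submodule.liftQ _ ψ hle with hψbar_def
  have hψmk : ∀ (z : MonoidAlgebra ℤ G) (hz : z ∈ nIdeal G Gs 2),
      ψbar (Submodule.Quotient.mk ⟨z, hz⟩) = (Θ z).2.1 := by
    intro z hz
    rw [hψbar_def]
    exact Submodule.liftQ_apply _ ψ _
  have hψa : ∀ u : ↥(Gs 2), ψbar (g₂ (β u, 0)) = mkC (β u, 0) := by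
    intro u
    rw [hg₂a u (mem_single 2 u.1 (by omega) u.2), hψmk, hΘgen]
    show mkC (β (tg (u : G)), 0) = mkC (β u, 0)
    have htgu : tg (u : G) = u := by
      ext
      show (u : G) * (s (α u))⁻¹ = u
      rw [(hαker _).mpr u.2, hs0]; group
    rw [htgu]
  have hψb : ∀ x y : G, ψbar (g₂ (0, α x ⊗ₜ[ℤ] α y)) = mkC (0, α x ⊗ₜ[ℤ] α y) := by
    intro x y
    rw [hg₂b x y (mem_double x y), hψmk, map_mul, hΘgen, hΘgen]
    show ((0 : ℤ) • η y + (0 : ℤ) • η x +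
      TwW.iC D (D.μ (TwW.pA D (η x)) (TwW.pA D (η y)))).1 = _
    rw [zero_smul, zero_smul, zero_add, zero_add]
    rfl
  have hcompose : ∀ y, ψbar (g₂ y) = mkC y := by
    set L : (B2 × (A ⊗[ℤ] A)) →ₗ[ℤ] ((B2 × (A ⊗[ℤ] A)) ⧸ rf) :=
      (ψbar ∘ₗ g₂) - mkC with hL_def
    have hL1 : ∀ b : B2, L (b, 0) = 0 := by
      intro b
      obtain ⟨u, rfl⟩ := hβsurj b
      show ψbar (g₂ (β u, 0)) - mkC (β u, 0) = 0
      rw [hψa u, sub_self]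
    have hL2 : ∀ t : A ⊗[ℤ] A, L (0, t) = 0 := by
      intro t
      have hsub : Submodule.span ℤ {t : A ⊗[ℤ] A | ∃ m n, m ⊗ₜ n = t} ≤
          LinearMap.ker (L ∘ₗ LinearMap.inr ℤ B2 (A ⊗[ℤ] A)) := by
        rw [Submodule.span_le]
        rintro _ ⟨m, n, rfl⟩
        obtain ⟨x, rfl⟩ := hαsurj m
        obtain ⟨y, rfl⟩ := hαsurj n
        show L (0, α x ⊗ₜ[ℤ] α y) = 0
        show ψbar (g₂ (0, α x ⊗ₜ[ℤ] α y)) - mkC (0, α x ⊗ₜ[ℤ] α y) = 0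
        rw [hψb, sub_self]
      have hker : LinearMap.ker (L ∘ₗ LinearMap.inr ℤ B2 (A ⊗[ℤ] A)) = ⊤ := by
        rw [← top_le_iff]; refine (TensorProduct.span_tmul_eq_top (R := ℤ) (M := A) (N := A)).symm.trans_le ?_
        exact hsub
      have hmem : t ∈ LinearMap.ker (L ∘ₗ LinearMap.inr ℤ B2 (A ⊗[ℤ] A)) := by
        rw [hker]; trivial
      exact LinearMap.mem_ker.mp hmem
    intro y
    have hy : y = ((y.1, 0) : B2 × (A ⊗[ℤ] A)) + (0, y.2) := by
      refine Prod.ext ?_ ?_ <;> simp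
    have h0 : L y = 0 := by
      rw [hy, map_add, hL1, hL2, add_zero]
    have h0' : ψbar (g₂ y) - mkC y = 0 := h0
    exact sub_eq_zero.mp h0'
  -- ## The commutator identity modulo `I³`
  have hcommid : ∀ g h : G,
      (MonoidAlgebra.of ℤ G ⁅g, h⁆ - 1) -
        (MonoidAlgebra.of ℤ G g - 1) * (MonoidAlgebra.of ℤ G h - 1) +
        (MonoidAlgebra.of ℤ G h - 1) * (MonoidAlgebra.of ℤ G g - 1) ∈ nIdeal G Gs 3 := by
    intro g h
    set X := MonoidAlgebra.of ℤ G g with hX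
    set Y := MonoidAlgebra.of ℤ G h with hY
    set K := MonoidAlgebra.of ℤ G (h * g)⁻¹ with hK
    have e1 : Y * X * K = 1 := by
      rw [hX, hY, hK, ← map_mul, ← map_mul, mul_inv_cancel, map_one]
    have e2 : MonoidAlgebra.of ℤ G ⁅g, h⁆ = X * Y * K := by
      rw [hX, hY, hK, ← map_mul, ← map_mul]
      congr 1
      rw [commutatorElement_def]
      group
    have e3 : (X * Y * K - 1) - (X - 1) * (Y - 1) + (Y - 1) * (X - 1)
        = (X - 1) * ((Y - 1) * (K - 1)) - (Y - 1) * ((X - 1) * (K - 1))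
          + (Y * X * K - 1) := by
      noncomm_ring
    rw [e1, sub_self, add_zero] at e3
    rw [e2, e3]
    exact sub_mem (mem_triple g h (h * g)⁻¹) (mem_triple h g (h * g)⁻¹)
  constructor
  · -- ## Exactness
    intro y
    constructor
    · intro h0
      have hc := hcompose y
      rw [h0, map_zero] at hc
      obtain ⟨x, hx⟩ := (hmk0 y).mp hc.symm
      exact ⟨x, hx⟩
    · rintro ⟨x, rfl⟩
      have main : ∀ (z : ExteriorAlgebra ℤ A),
          z ∈ Submodule.span ℤ (Set.range (ExteriorAlgebra.ιMulti ℤ 2 (M := A))) →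
          ∀ (hz : z ∈ ⋀[ℤ]^2 A), g₂ (f ⟨z, hz⟩) = 0 := by
        intro z hzspan
        induction hzspan using Submodule.span_induction with
        | mem w hw =>
          obtain ⟨v, rfl⟩ := hw
          intro hz
          obtain ⟨g, hg⟩ := hαsurj (v 0)
          obtain ⟨h, hh⟩ := hαsurj (v 1)
          have hv : v = ![α g, α h] := by
            funext i
            fin_cases i <;> simp [hg, hh]
          have hm : ExteriorAlgebra.ιMulti ℤ 2 ![α g, α h] ∈ ⋀[ℤ]^2 A :=
            ExteriorAlgebra.ιMulti_range ℤ 2 ⟨![α g, α h], rfl⟩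
          have key : (⟨ExteriorAlgebra.ιMulti ℤ 2 v, hz⟩ : ↥(⋀[ℤ]^2 A)) = ⟨_, hm⟩ :=
            Subtype.ext (by
              show ExteriorAlgebra.ιMulti ℤ 2 v = ExteriorAlgebra.ιMulti ℤ 2 ![α g, α h]
              rw [hv])
          have main2 : g₂ (f ⟨ExteriorAlgebra.ιMulti ℤ 2 ![α g, α h], hm⟩) = 0 := ?_
          · exact (congrArg (fun t => g₂ (f t)) key).trans main2
          rw [hf g h (hcomm2 g h) hm]
          have split : ((β ⟨⁅g, h⁆, hcomm2 g h⟩ : B2),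
                -(α g ⊗ₜ[ℤ] α h - α h ⊗ₜ[ℤ] α g)) =
              ((β ⟨⁅g, h⁆, hcomm2 g h⟩, 0) : B2 × (A ⊗[ℤ] A)) -
                (0, α g ⊗ₜ[ℤ] α h) + (0, α h ⊗ₜ[ℤ] α g) := by
            refine Prod.ext ?_ ?_
            · simp
            · simp
              abel
          rw [split, map_add, map_sub,
            hg₂a ⟨⁅g, h⁆, hcomm2 g h⟩ (mem_single 2 _ (by omega) (hcomm2 g h)),
            hg₂b g h (mem_double g h), hg₂b h g (mem_double h g),
            ← Submodule.Quotient.mk_sub, ← Submodule.Quotient.mk_add,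
            Submodule.Quotient.mk_eq_zero, Submodule.mem_comap]
          simpa using hcommid g h
        | zero =>
          intro hz
          have h0 : (⟨0, hz⟩ : ↥(⋀[ℤ]^2 A)) = 0 := rfl
          rw [h0, map_zero, map_zero]
        | add w₁ w₂ hsp₁ hsp₂ ih₁ ih₂ =>
          intro hz
          have hw₁ : w₁ ∈ ⋀[ℤ]^2 A := by
            rw [← ExteriorAlgebra.ιMulti_span_fixedDegree]; exact hsp₁
          have hw₂ : w₂ ∈ ⋀[ℤ]^2 A := by
            rw [← ExteriorAlgebra.ιMulti_span_fixedDegree]; exact hsp₂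
          have h0 : (⟨w₁ + w₂, hz⟩ : ↥(⋀[ℤ]^2 A)) = ⟨w₁, hw₁⟩ + ⟨w₂, hw₂⟩ := rfl
          rw [h0, map_add, map_add, ih₁ hw₁, ih₂ hw₂, add_zero]
        | smul a w hsp ih =>
          intro hz
          have hw : w ∈ ⋀[ℤ]^2 A := by
            rw [← ExteriorAlgebra.ιMulti_span_fixedDegree]; exact hsp
          have h0 : (⟨a • w, hz⟩ : ↥(⋀[ℤ]^2 A)) = a • ⟨w, hw⟩ := rfl
          rw [h0, map_smul, map_smul, ih hw, smul_zero]
      have hsp : (x : ExteriorAlgebra ℤ A) ∈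
          Submodule.span ℤ (Set.range (ExteriorAlgebra.ιMulti ℤ 2 (M := A))) := by
        rw [ExteriorAlgebra.ιMulti_span_fixedDegree]; exact x.2
      exact main x.1 hsp x.2
  · -- ## Surjectivity
    intro q
    obtain ⟨x, rfl⟩ := Submodule.Quotient.mk_surjective _ q
    have main : ∀ (z : MonoidAlgebra ℤ G), z ∈ nIdeal G Gs 2 →
        ∀ (hz : z ∈ nIdeal G Gs 2), ∃ w, g₂ w = Submodule.Quotient.mk ⟨z, hz⟩ := by
      intro z hzspan
      unfold nIdeal at hzspan
      induction hzspan using Submodule.span_induction with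
      | mem y hy =>
        obtain ⟨l, hne, hcond, hsum, rfl⟩ := hy
        intro hz
        by_cases h3 : 3 ≤ (l.map Prod.fst).sum
        · refine ⟨0, ?_⟩
          rw [map_zero]
          symm
          rw [Submodule.Quotient.mk_eq_zero, Submodule.mem_comap]
          exact Submodule.subset_span ⟨l, hne, hcond, h3, rfl⟩
        · have h2 : (l.map Prod.fst).sum = 2 := by omega
          rcases l with _ | ⟨p, l'⟩
          · exact absurd rfl hne
          rcases l' with _ | ⟨p', l''⟩
          · have hp1 : p.1 = 2 := by simpa using h2
            have hp2 : p.2 ∈ Gs 2 := by rw [← hp1]; exact (hcond p (by simp)).2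
            refine ⟨(β ⟨p.2, hp2⟩, 0), ?_⟩
            rw [hg₂a ⟨p.2, hp2⟩ (mem_single 2 p.2 (by omega) hp2)]
            congr 1
            apply Subtype.ext
            simp
          rcases l'' with _ | ⟨p'', r⟩
          · have hc1 := (hcond p (by simp)).1
            have hc2 := (hcond p' (by simp)).1
            refine ⟨(0, α p.2 ⊗ₜ[ℤ] α p'.2), ?_⟩
            rw [hg₂b p.2 p'.2 (mem_double p.2 p'.2)]
            congr 1
            apply Subtype.ext
            simp
          · exfalso
            have hc1 := (hcond p (by simp)).1
            have hc2 := (hcond p' (by simp)).1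
            have hc3 := (hcond p'' (by simp)).1
            simp only [List.map_cons, List.sum_cons] at h2
            omega
      | zero =>
        intro hz
        refine ⟨0, ?_⟩
        rw [map_zero]
        symm
        rw [Submodule.Quotient.mk_eq_zero, Submodule.mem_comap]
        exact zero_mem _
      | add y z hy hz ihy ihz =>
        intro h
        obtain ⟨w1, e1⟩ := ihy hy
        obtain ⟨w2, e2⟩ := ihz hz
        refine ⟨w1 + w2, ?_⟩
        rw [map_add, e1, e2, ← Submodule.Quotient.mk_add]
        rfl
      | smul a y hy ih =>
        intro h
        obtain ⟨w, e⟩ := ih hy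
        refine ⟨a • w, ?_⟩
        rw [map_smul, e, ← Submodule.Quotient.mk_smul]
        rfl
    obtain ⟨w, e⟩ := main x.1 x.2 x.2
    exact ⟨w, by rw [e]⟩
end

section
/- Let G = N ⋊ T. Then Q_2(G,T) := I(G)I(T)/I(G)^2 I(T) is naturally isomorphic to U_2L(T) ⊕ (N^{AB} ⊗ T^{ab}), where U_2L(T) is the degree-2 part of the enveloping algebra of the Lie ring of T associated with its lower central series, N^{AB} = N/[N,G], and T^{ab} = T/[T,T]. -/
open MonoidAlgebra TensorProduct Pointwise
open scoped commutatorElement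

namespace Stmt17

variable {G : Type*} [Group G]

lemma of_sub_one_mem (g : G) : MonoidAlgebra.of ℤ G g - 1 ∈ augI G :=
  Submodule.subset_span ⟨g, rfl⟩

lemma of_sub_one_mem_rel {T : Subgroup G} {t : G} (ht : t ∈ T) :
    MonoidAlgebra.of ℤ G t - 1 ∈ relAug G T :=
  Submodule.subset_span ⟨t, ht, rfl⟩

lemma relAug_le_augI (T : Subgroup G) : relAug G T ≤ augI G := by
  apply Submodule.span_mono
  rintro x ⟨t, -, rfl⟩
  exact ⟨t, rfl⟩

lemma mul_of_mem {u : MonoidAlgebra ℤ G} (hu : u ∈ augI G) (g : G) :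
    u * MonoidAlgebra.of ℤ G g ∈ augI G := by
  rw [augI] at hu
  induction hu using Submodule.span_induction with
  | mem x hx =>
    obtain ⟨y, rfl⟩ := hx
    have h : (MonoidAlgebra.of ℤ G y - 1) * MonoidAlgebra.of ℤ G g
        = (MonoidAlgebra.of ℤ G (y * g) - 1) - (MonoidAlgebra.of ℤ G g - 1) := by
      rw [map_mul]; noncomm_ring
    rw [h]
    exact sub_mem (of_sub_one_mem _) (of_sub_one_mem _)
  | zero => simp
  | add x y hx hy ihx ihy => rw [add_mul]; exact add_mem ihx ihy
  | smul a x hx ih => rw [smul_mul_assoc]; exact Submodule.smul_mem _ _ ih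

lemma sq_mul_of_mem {v : MonoidAlgebra ℤ G} (hv : v ∈ augI G * augI G) (g : G) :
    v * MonoidAlgebra.of ℤ G g ∈ augI G * augI G := by
  refine Submodule.mul_induction_on hv (fun m hm n hn => ?_) (fun x y hx hy => ?_)
  · rw [mul_assoc]
    exact Submodule.mul_mem_mul hm (mul_of_mem hn g)
  · rw [add_mul]; exact add_mem hx hy

lemma commutator_sub_one_mem {H K : Subgroup G} {x : G} (hx : x ∈ ⁅H, K⁆) :
    MonoidAlgebra.of ℤ G x - 1 ∈ augI G * augI G := by
  rw [Subgroup.commutator_def] at hx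
  induction hx using Subgroup.closure_induction with
  | mem y hy =>
    obtain ⟨a, -, b, -, rfl⟩ := hy
    have h1 : (MonoidAlgebra.of ℤ G a - 1) * (MonoidAlgebra.of ℤ G b - 1)
        - (MonoidAlgebra.of ℤ G b - 1) * (MonoidAlgebra.of ℤ G a - 1)
        = MonoidAlgebra.of ℤ G (a * b) - MonoidAlgebra.of ℤ G (b * a) := by
      rw [map_mul, map_mul]; noncomm_ring
    have h2 : (MonoidAlgebra.of ℤ G (a * b) - MonoidAlgebra.of ℤ G (b * a))
        * MonoidAlgebra.of ℤ G (a⁻¹ * b⁻¹) = MonoidAlgebra.of ℤ G ⁅a, b⁆ - 1 := by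
      rw [sub_mul, ← map_mul, ← map_mul]
      congr 1
      · congr 1
        simp [commutatorElement_def, mul_assoc]
      · rw [show b * a * (a⁻¹ * b⁻¹) = 1 by group, map_one]
    rw [← h2, ← h1]
    exact sq_mul_of_mem (sub_mem
      (Submodule.mul_mem_mul (of_sub_one_mem _) (of_sub_one_mem _))
      (Submodule.mul_mem_mul (of_sub_one_mem _) (of_sub_one_mem _))) _
  | one => rw [map_one, sub_self]; exact zero_mem _
  | mul x y hx hy ihx ihy =>
    have h : MonoidAlgebra.of ℤ G (x * y) - 1
        = (MonoidAlgebra.of ℤ G x - 1) * (MonoidAlgebra.of ℤ G y - 1)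
          + (MonoidAlgebra.of ℤ G x - 1) + (MonoidAlgebra.of ℤ G y - 1) := by
      rw [map_mul]; noncomm_ring
    rw [h]
    exact add_mem (add_mem (Submodule.mul_mem_mul (of_sub_one_mem _) (of_sub_one_mem _)) ihx) ihy
  | inv x hx ihx =>
    have h0 : MonoidAlgebra.of ℤ G x⁻¹ * MonoidAlgebra.of ℤ G x = 1 := by
      rw [← map_mul, inv_mul_cancel, map_one]
    have h : MonoidAlgebra.of ℤ G x⁻¹ - 1
        = -(MonoidAlgebra.of ℤ G x - 1)
          - (MonoidAlgebra.of ℤ G x⁻¹ - 1) * (MonoidAlgebra.of ℤ G x - 1) := by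
      rw [sub_mul, mul_sub, h0]; noncomm_ring
    rw [h]
    exact sub_mem (neg_mem ihx)
      (Submodule.mul_mem_mul (of_sub_one_mem _) (of_sub_one_mem _))

section Decomp

variable {N T : Subgroup G} [N.Normal]

lemma exists_decomp (hjoin : N ⊔ T = ⊤) (g : G) :
    ∃ p : G × G, p.1 ∈ N ∧ p.2 ∈ T ∧ p.1 * p.2 = g := by
  have hg : g ∈ ((N : Set G) * (T : Set G)) := by
    rw [← Subgroup.normal_mul, hjoin]
    simp
  obtain ⟨n, hn, t, ht, h⟩ := hg
  exact ⟨(n, t), hn, ht, h⟩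

lemma decomp_unique (hdisj : N ⊓ T = ⊥) {n t n' t' : G} (hn : n ∈ N) (ht : t ∈ T)
    (hn' : n' ∈ N) (ht' : t' ∈ T) (h : n * t = n' * t') : n = n' ∧ t = t' := by
  have key : n'⁻¹ * n = t' * t⁻¹ := by
    have h2 : n'⁻¹ * (n * t) * t⁻¹ = n'⁻¹ * (n' * t') * t⁻¹ := by rw [h]
    calc n'⁻¹ * n = n'⁻¹ * (n * t) * t⁻¹ := by group
    _ = n'⁻¹ * (n' * t') * t⁻¹ := h2
    _ = t' * t⁻¹ := by group
  have hmem : n'⁻¹ * n ∈ N ⊓ T := by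
    rw [Subgroup.mem_inf]
    refine ⟨mul_mem (inv_mem hn') hn, ?_⟩
    rw [key]; exact mul_mem ht' (inv_mem ht)
  rw [hdisj, Subgroup.mem_bot] at hmem
  have hn'' : n = n' := by
    have h3 := congrArg (n' * ·) hmem
    simp only [mul_one] at h3
    rw [← mul_assoc, mul_inv_cancel, one_mul] at h3
    exact h3
  refine ⟨hn'', ?_⟩
  rw [hn''] at h
  exact mul_left_cancel h

noncomputable def nu (hjoin : N ⊔ T = ⊤) (g : G) : G :=
  (Classical.choose (exists_decomp hjoin g)).1

noncomputable def th (hjoin : N ⊔ T = ⊤) (g : G) : G :=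
  (Classical.choose (exists_decomp hjoin g)).2

lemma nu_mem (hjoin : N ⊔ T = ⊤) (g : G) : nu hjoin g ∈ N :=
  (Classical.choose_spec (exists_decomp hjoin g)).1

lemma th_mem (hjoin : N ⊔ T = ⊤) (g : G) : th hjoin g ∈ T :=
  (Classical.choose_spec (exists_decomp hjoin g)).2.1

lemma nu_mul_th (hjoin : N ⊔ T = ⊤) (g : G) : nu hjoin g * th hjoin g = g :=
  (Classical.choose_spec (exists_decomp hjoin g)).2.2

variable (hdisj : N ⊓ T = ⊥) (hjoin : N ⊔ T = ⊤)
include hdisj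

lemma nu_th_spec {n t : G} (hn : n ∈ N) (ht : t ∈ T) :
    nu hjoin (n * t) = n ∧ th hjoin (n * t) = t :=
  decomp_unique hdisj (nu_mem hjoin _) (th_mem hjoin _) hn ht (nu_mul_th hjoin _)

lemma th_mul (g g' : G) : th hjoin (g * g') = th hjoin g * th hjoin g' := by
  have h : g * g' = (nu hjoin g * (th hjoin g * nu hjoin g' * (th hjoin g)⁻¹))
      * (th hjoin g * th hjoin g') := by
    conv_lhs => rw [← nu_mul_th hjoin g, ← nu_mul_th hjoin g']
    group
  rw [h]
  exact (nu_th_spec hdisj hjoin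
    (mul_mem (nu_mem hjoin g) (Subgroup.Normal.conj_mem ‹N.Normal› _ (nu_mem hjoin g') _))
    (mul_mem (th_mem hjoin g) (th_mem hjoin g'))).2

lemma nu_mul (g g' : G) : nu hjoin (g * g')
    = nu hjoin g * (th hjoin g * nu hjoin g' * (th hjoin g)⁻¹) := by
  have h : g * g' = (nu hjoin g * (th hjoin g * nu hjoin g' * (th hjoin g)⁻¹))
      * (th hjoin g * th hjoin g') := by
    conv_lhs => rw [← nu_mul_th hjoin g, ← nu_mul_th hjoin g']
    group
  rw [h]
  exact (nu_th_spec hdisj hjoin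
    (mul_mem (nu_mem hjoin g) (Subgroup.Normal.conj_mem ‹N.Normal› _ (nu_mem hjoin g') _))
    (mul_mem (th_mem hjoin g) (th_mem hjoin g'))).1

lemma th_of_mem_T {t : G} (ht : t ∈ T) : th hjoin t = t := by
  have := (nu_th_spec hdisj hjoin (one_mem N) ht).2
  rwa [one_mul] at this

lemma nu_of_mem_T {t : G} (ht : t ∈ T) : nu hjoin t = 1 := by
  have := (nu_th_spec hdisj hjoin (one_mem N) ht).1
  rwa [one_mul] at this

lemma th_of_mem_N {n : G} (hn : n ∈ N) : th hjoin n = 1 := by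
  have := (nu_th_spec hdisj hjoin hn (one_mem T)).2
  rwa [mul_one] at this

lemma nu_of_mem_N {n : G} (hn : n ∈ N) : nu hjoin n = n := by
  have := (nu_th_spec hdisj hjoin hn (one_mem T)).1
  rwa [mul_one] at this

/-- The projection `G →* G` onto the `T`-component. -/
noncomputable def thetaHom : G →* G :=
  MonoidHom.mk' (th hjoin) (th_mul hdisj hjoin)

/-- `ℤ[G] → ℤ[G]`, killing the `N`-part. -/
noncomputable def algE : MonoidAlgebra ℤ G →ₐ[ℤ] MonoidAlgebra ℤ G :=
  MonoidAlgebra.mapDomainAlgHom ℤ ℤ (thetaHom hdisj hjoin)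

lemma algE_of (g : G) :
    algE hdisj hjoin (MonoidAlgebra.of ℤ G g) = MonoidAlgebra.of ℤ G (th hjoin g) := by
  simp [algE, MonoidAlgebra.of_apply, thetaHom]

lemma map_relAug_le :
    (relAug G T).map (algE hdisj hjoin).toLinearMap ≤ relAug G T := by
  rw [relAug, Submodule.map_span, Submodule.span_le]
  rintro x ⟨y, ⟨t, ht, rfl⟩, rfl⟩
  have h : (algE hdisj hjoin).toLinearMap (MonoidAlgebra.of ℤ G t - 1)
      = MonoidAlgebra.of ℤ G t - 1 := by
    simp only [AlgHom.toLinearMap_apply, map_sub, map_one]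
    rw [algE_of, th_of_mem_T hdisj hjoin ht]
  rw [h]
  exact Submodule.subset_span ⟨t, ht, rfl⟩

lemma map_augI_le :
    (augI G).map (algE hdisj hjoin).toLinearMap ≤ relAug G T := by
  rw [augI, Submodule.map_span, Submodule.span_le]
  rintro x ⟨y, ⟨g, rfl⟩, rfl⟩
  have h : (algE hdisj hjoin).toLinearMap (MonoidAlgebra.of ℤ G g - 1)
      = MonoidAlgebra.of ℤ G (th hjoin g) - 1 := by
    simp only [AlgHom.toLinearMap_apply, map_sub, map_one]
    rw [algE_of]
  rw [h]
  exact Submodule.subset_span ⟨th hjoin g, th_mem hjoin g, rfl⟩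

lemma map_IGT_le :
    (augI G * relAug G T).map (algE hdisj hjoin).toLinearMap ≤ relAug G T ^ 2 := by
  rw [Submodule.map_mul, pow_two]
  exact mul_le_mul' (map_augI_le hdisj hjoin) (map_relAug_le hdisj hjoin)

lemma map_IG2T_le :
    ((augI G ^ 2) * relAug G T).map (algE hdisj hjoin).toLinearMap ≤ relAug G T ^ 3 := by
  have h3 : relAug G T ^ 3 = relAug G T * relAug G T * relAug G T := by
    rw [pow_succ, pow_two]
  rw [Submodule.map_mul, pow_two, Submodule.map_mul, h3]
  exact mul_le_mul'
    (mul_le_mul' (map_augI_le hdisj hjoin) (map_augI_le hdisj hjoin))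
    (map_relAug_le hdisj hjoin)

lemma algE_fix_rel {w : MonoidAlgebra ℤ G} (hw : w ∈ relAug G T) :
    algE hdisj hjoin w = w := by
  rw [relAug] at hw
  induction hw using Submodule.span_induction with
  | mem x hx =>
    obtain ⟨t, ht, rfl⟩ := hx
    rw [map_sub, map_one, algE_of, th_of_mem_T hdisj hjoin ht]
  | zero => simp
  | add x y hx hy ihx ihy => rw [map_add, ihx, ihy]
  | smul a x hx ih => rw [map_smul, ih]

lemma algE_fix_IT2 {v : MonoidAlgebra ℤ G} (hv : v ∈ relAug G T * relAug G T) :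
    algE hdisj hjoin v = v := by
  refine Submodule.mul_induction_on hv (fun m hm n hn => ?_) (fun x y hx hy => ?_)
  · rw [map_mul, algE_fix_rel hdisj hjoin hm, algE_fix_rel hdisj hjoin hn]
  · rw [map_add, hx, hy]

end Decomp

/-- The canonical map `T → T^{ab}` (written additively). -/
noncomputable def tau {T : Subgroup G} (t : ↥T) : Additive (Abelianization ↥T) :=
  Additive.ofMul (Abelianization.of t)

lemma tau_mul {T : Subgroup G} (s t : ↥T) : tau (s * t) = tau s + tau t := by
  simp only [tau, map_mul]
  rfl

lemma tau_surj {T : Subgroup G} : Function.Surjective (tau (T := T)) := by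
  intro x
  obtain ⟨t, ht⟩ := QuotientGroup.mk_surjective (Additive.toMul x)
  exact ⟨t, congrArg Additive.ofMul ht⟩

section Main

variable {N T : Subgroup G} [N.Normal]

noncomputable def nuN (hjoin : N ⊔ T = ⊤) (g : G) : ↥N := ⟨nu hjoin g, nu_mem hjoin g⟩

noncomputable def thT (hjoin : N ⊔ T = ⊤) (g : G) : ↥T := ⟨th hjoin g, th_mem hjoin g⟩

variable {A : Type*} [AddCommGroup A]

lemma alpha_one (α : ↥N → A) (hαadd : ∀ a b : ↥N, α (a * b) = α a + α b) : α 1 = 0 := by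
  have h := hαadd 1 1
  rw [one_mul] at h
  have h2 : α 1 + 0 = α 1 + α 1 := by rw [add_zero, ← h]
  exact (add_left_cancel h2).symm

lemma alpha_inv (α : ↥N → A) (hαadd : ∀ a b : ↥N, α (a * b) = α a + α b) (n : ↥N) :
    α n⁻¹ = -α n := by
  have h := hαadd n⁻¹ n
  rw [inv_mul_cancel, alpha_one α hαadd] at h
  exact eq_neg_of_add_eq_zero_left h.symm

lemma alpha_conj (α : ↥N → A) (hαadd : ∀ a b : ↥N, α (a * b) = α a + α b)
    (hαker : ∀ a : ↥N, α a = 0 ↔ (a : G) ∈ ⁅N, (⊤ : Subgroup G)⁆)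
    (n : ↥N) (g : G) (hc : g * (n : G) * g⁻¹ ∈ N) : α ⟨g * (n : G) * g⁻¹, hc⟩ = α n := by
  have hmem : ((⟨g * (n : G) * g⁻¹, hc⟩ * n⁻¹ : ↥N) : G) ∈ ⁅N, (⊤ : Subgroup G)⁆ := by
    have heq : ((⟨g * (n : G) * g⁻¹, hc⟩ * n⁻¹ : ↥N) : G) = ⁅g, (n : G)⁆ := by
      simp [commutatorElement_def, mul_assoc]
    rw [heq]
    have hmem2 := Subgroup.commutator_mem_commutator (Subgroup.mem_top g) n.2
    rwa [Subgroup.commutator_comm] at hmem2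
  have h0 : α (⟨g * (n : G) * g⁻¹, hc⟩ * n⁻¹) = 0 := (hαker _).2 hmem
  rw [hαadd, alpha_inv α hαadd] at h0
  exact add_neg_eq_zero.mp h0

lemma alphaNu_mul (hdisj : N ⊓ T = ⊥) (hjoin : N ⊔ T = ⊤) (α : ↥N → A)
    (hαadd : ∀ a b : ↥N, α (a * b) = α a + α b)
    (hαker : ∀ a : ↥N, α a = 0 ↔ (a : G) ∈ ⁅N, (⊤ : Subgroup G)⁆) (g g' : G) :
    α (nuN hjoin (g * g')) = α (nuN hjoin g) + α (nuN hjoin g') := by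
  have hc : th hjoin g * nu hjoin g' * (th hjoin g)⁻¹ ∈ N :=
    Subgroup.Normal.conj_mem ‹N.Normal› _ (nu_mem hjoin g') _
  have h1 : nuN hjoin (g * g') = nuN hjoin g * ⟨_, hc⟩ :=
    Subtype.ext (nu_mul hdisj hjoin g g')
  rw [h1, hαadd]
  congr 1
  exact alpha_conj α hαadd hαker (nuN hjoin g') (th hjoin g) hc

lemma alphaNu_of_mem_T (hdisj : N ⊓ T = ⊥) (hjoin : N ⊔ T = ⊤) (α : ↥N → A)
    (hαadd : ∀ a b : ↥N, α (a * b) = α a + α b) {t : G} (ht : t ∈ T) :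
    α (nuN hjoin t) = 0 := by
  have h : nuN hjoin t = 1 := Subtype.ext (nu_of_mem_T hdisj hjoin ht)
  rw [h]
  exact alpha_one α hαadd

lemma alphaNu_of_mem_N (hdisj : N ⊓ T = ⊥) (hjoin : N ⊔ T = ⊤) (α : ↥N → A) {n : G}
    (hn : n ∈ N) : α (nuN hjoin n) = α ⟨n, hn⟩ := by
  have h : nuN hjoin n = ⟨n, hn⟩ := Subtype.ext (nu_of_mem_N hdisj hjoin hn)
  rw [h]

/-- The auxiliary linear map `ℤ[G] → A ⊗ T^{ab}`, `g = nt ↦ α(n) ⊗ [t]`. -/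
noncomputable def Psi (hjoin : N ⊔ T = ⊤) (α : ↥N → A) :
    MonoidAlgebra ℤ G →ₗ[ℤ] A ⊗[ℤ] Additive (Abelianization ↥T) :=
  Finsupp.linearCombination ℤ (fun g : G => α (nuN hjoin g) ⊗ₜ[ℤ] tau (thT hjoin g))
    ∘ₗ (MonoidAlgebra.coeffLinearEquiv ℤ).toLinearMap

lemma Psi_of (hjoin : N ⊔ T = ⊤) (α : ↥N → A) (g : G) :
    Psi hjoin α (MonoidAlgebra.of ℤ G g)
      = α (nuN hjoin g) ⊗ₜ[ℤ] tau (thT hjoin g) := by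
  rw [Psi, MonoidAlgebra.of_apply, LinearMap.comp_apply]
  erw [Finsupp.linearCombination_single]
  rw [one_smul]

lemma Psi_of_mul (hdisj : N ⊓ T = ⊥) (hjoin : N ⊔ T = ⊤) (α : ↥N → A) (x : G)
    {t : G} (ht : t ∈ T) :
    Psi hjoin α (MonoidAlgebra.of ℤ G x * (MonoidAlgebra.of ℤ G t - 1))
      = α (nuN hjoin x) ⊗ₜ[ℤ] tau ⟨t, ht⟩ := by
  rw [mul_sub, mul_one, ← map_mul, map_sub, Psi_of, Psi_of]
  have h1 : nuN hjoin (x * t) = nuN hjoin x := by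
    apply Subtype.ext
    show nu hjoin (x * t) = nu hjoin x
    rw [nu_mul hdisj hjoin, nu_of_mem_T hdisj hjoin ht, mul_one, mul_inv_cancel, mul_one]
  have h2 : thT hjoin (x * t) = thT hjoin x * ⟨t, ht⟩ := by
    apply Subtype.ext
    show th hjoin (x * t) = th hjoin x * t
    rw [th_mul hdisj hjoin, th_of_mem_T hdisj hjoin ht]
  rw [h1, h2, tau_mul, tmul_add]
  abel

lemma Psi_triple (hdisj : N ⊓ T = ⊥) (hjoin : N ⊔ T = ⊤) (α : ↥N → A)
    (hαadd : ∀ a b : ↥N, α (a * b) = α a + α b)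
    (hαker : ∀ a : ↥N, α a = 0 ↔ (a : G) ∈ ⁅N, (⊤ : Subgroup G)⁆)
    (g g' : G) {t : G} (ht : t ∈ T) :
    Psi hjoin α ((MonoidAlgebra.of ℤ G g - 1) * (MonoidAlgebra.of ℤ G g' - 1)
      * (MonoidAlgebra.of ℤ G t - 1)) = 0 := by
  have expand : (MonoidAlgebra.of ℤ G g - 1) * (MonoidAlgebra.of ℤ G g' - 1)
        * (MonoidAlgebra.of ℤ G t - 1)
      = MonoidAlgebra.of ℤ G (g * g') * (MonoidAlgebra.of ℤ G t - 1)
        - MonoidAlgebra.of ℤ G g * (MonoidAlgebra.of ℤ G t - 1)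
        - MonoidAlgebra.of ℤ G g' * (MonoidAlgebra.of ℤ G t - 1)
        + MonoidAlgebra.of ℤ G 1 * (MonoidAlgebra.of ℤ G t - 1) := by
    rw [map_mul, map_one]; noncomm_ring
  rw [expand, map_add, map_sub, map_sub,
    Psi_of_mul hdisj hjoin α (g * g') ht, Psi_of_mul hdisj hjoin α g ht,
    Psi_of_mul hdisj hjoin α g' ht, Psi_of_mul hdisj hjoin α 1 ht,
    alphaNu_mul hdisj hjoin α hαadd hαker,
    alphaNu_of_mem_T hdisj hjoin α hαadd (one_mem T), add_tmul, zero_tmul]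
  abel

lemma Psi_aug_mul (hdisj : N ⊓ T = ⊥) (hjoin : N ⊔ T = ⊤) (α : ↥N → A)
    (hαadd : ∀ a b : ↥N, α (a * b) = α a + α b)
    (hαker : ∀ a : ↥N, α a = 0 ↔ (a : G) ∈ ⁅N, (⊤ : Subgroup G)⁆)
    {u : MonoidAlgebra ℤ G} (hu : u ∈ augI G) (g' : G) {t : G} (ht : t ∈ T) :
    Psi hjoin α (u * (MonoidAlgebra.of ℤ G g' - 1) * (MonoidAlgebra.of ℤ G t - 1)) = 0 := by
  rw [augI] at hu
  induction hu using Submodule.span_induction with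
  | mem x hx =>
    obtain ⟨g, rfl⟩ := hx
    exact Psi_triple hdisj hjoin α hαadd hαker g g' ht
  | zero => rw [zero_mul, zero_mul, map_zero]
  | add x y hx hy ihx ihy => rw [add_mul, add_mul, map_add, ihx, ihy, add_zero]
  | smul a x hx ih => rw [smul_mul_assoc, smul_mul_assoc, map_smul, ih, smul_zero]

lemma Psi_sq_mul (hdisj : N ⊓ T = ⊥) (hjoin : N ⊔ T = ⊤) (α : ↥N → A)
    (hαadd : ∀ a b : ↥N, α (a * b) = α a + α b)
    (hαker : ∀ a : ↥N, α a = 0 ↔ (a : G) ∈ ⁅N, (⊤ : Subgroup G)⁆)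
    {v : MonoidAlgebra ℤ G} (hv : v ∈ augI G * augI G) {t : G} (ht : t ∈ T) :
    Psi hjoin α (v * (MonoidAlgebra.of ℤ G t - 1)) = 0 := by
  refine Submodule.mul_induction_on hv (fun m hm n hn => ?_) (fun x y hx hy => ?_)
  · rw [augI] at hn
    induction hn using Submodule.span_induction with
    | mem x hx =>
      obtain ⟨g', rfl⟩ := hx
      exact Psi_aug_mul hdisj hjoin α hαadd hαker hm g' ht
    | zero => rw [mul_zero, zero_mul, map_zero]
    | add x y hx hy ihx ihy => rw [mul_add, add_mul, map_add, ihx, ihy, add_zero]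
    | smul a x hx ih => rw [mul_smul_comm, smul_mul_assoc, map_smul, ih, smul_zero]
  · rw [add_mul, map_add, hx, hy, add_zero]

lemma Psi_I2T_le (hdisj : N ⊓ T = ⊥) (hjoin : N ⊔ T = ⊤) (α : ↥N → A)
    (hαadd : ∀ a b : ↥N, α (a * b) = α a + α b)
    (hαker : ∀ a : ↥N, α a = 0 ↔ (a : G) ∈ ⁅N, (⊤ : Subgroup G)⁆) :
    (augI G) ^ 2 * relAug G T ≤ LinearMap.ker (Psi hjoin α) := by
  rw [pow_two, Submodule.mul_le]
  intro v hv w hw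
  rw [LinearMap.mem_ker]
  rw [relAug] at hw
  induction hw using Submodule.span_induction with
  | mem x hx =>
    obtain ⟨t, ht, rfl⟩ := hx
    exact Psi_sq_mul hdisj hjoin α hαadd hαker hv ht
  | zero => rw [mul_zero, map_zero]
  | add x y hx hy ihx ihy => rw [mul_add, map_add, ihx, ihy, add_zero]
  | smul a x hx ih => rw [mul_smul_comm, map_smul, ih, smul_zero]

lemma Psi_relT_mul (hdisj : N ⊓ T = ⊥) (hjoin : N ⊔ T = ⊤) (α : ↥N → A)
    (hαadd : ∀ a b : ↥N, α (a * b) = α a + α b)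
    {s : G} (hs : s ∈ T) {t : G} (ht : t ∈ T) :
    Psi hjoin α ((MonoidAlgebra.of ℤ G s - 1) * (MonoidAlgebra.of ℤ G t - 1)) = 0 := by
  have h : (MonoidAlgebra.of ℤ G s - 1) * (MonoidAlgebra.of ℤ G t - 1)
      = MonoidAlgebra.of ℤ G s * (MonoidAlgebra.of ℤ G t - 1)
        - MonoidAlgebra.of ℤ G 1 * (MonoidAlgebra.of ℤ G t - 1) := by
    rw [map_one]; noncomm_ring
  rw [h, map_sub, Psi_of_mul hdisj hjoin α s ht, Psi_of_mul hdisj hjoin α 1 ht,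
    alphaNu_of_mem_T hdisj hjoin α hαadd hs,
    alphaNu_of_mem_T hdisj hjoin α hαadd (one_mem T), zero_tmul]
  exact sub_zero 0

lemma Psi_IT2 (hdisj : N ⊓ T = ⊥) (hjoin : N ⊔ T = ⊤) (α : ↥N → A)
    (hαadd : ∀ a b : ↥N, α (a * b) = α a + α b)
    {v : MonoidAlgebra ℤ G} (hv : v ∈ relAug G T * relAug G T) :
    Psi hjoin α v = 0 := by
  refine Submodule.mul_induction_on hv (fun m hm n hn => ?_) (fun x y hx hy => ?_)
  · rw [relAug] at hm hn
    induction hn using Submodule.span_induction with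
    | mem x hx =>
      obtain ⟨t, ht, rfl⟩ := hx
      induction hm using Submodule.span_induction with
      | mem y hy =>
        obtain ⟨s, hs, rfl⟩ := hy
        exact Psi_relT_mul hdisj hjoin α hαadd hs ht
      | zero => rw [zero_mul, map_zero]
      | add x y hx hy ihx ihy => rw [add_mul, map_add, ihx, ihy, add_zero]
      | smul a x hx ih => rw [smul_mul_assoc, map_smul, ih, smul_zero]
    | zero => rw [mul_zero, map_zero]
    | add x y hx hy ihx ihy => rw [mul_add, map_add, ihx, ihy, add_zero]
    | smul a x hx ih => rw [mul_smul_comm, map_smul, ih, smul_zero]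
  · rw [map_add, hx, hy, add_zero]

lemma IT2_le_IGT : relAug G T ^ 2 ≤ augI G * relAug G T := by
  rw [pow_two]
  exact mul_le_mul' (relAug_le_augI T) le_rfl

lemma IT3_le_I2T : relAug G T ^ 3 ≤ augI G ^ 2 * relAug G T := by
  have h3 : relAug G T ^ 3 = relAug G T * relAug G T * relAug G T := by rw [pow_succ, pow_two]
  rw [h3, pow_two]
  exact mul_le_mul'
    (mul_le_mul' (relAug_le_augI T) (relAug_le_augI T)) le_rfl

/-- The class of `x` in `Q₂ = I(G)I(T)/I(G)²I(T)`. -/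
noncomputable def mkk (x : MonoidAlgebra ℤ G) (hx : x ∈ augI G * relAug G T) :
    ↥(augI G * relAug G T) ⧸
      ((augI G) ^ 2 * relAug G T).comap (augI G * relAug G T).subtype :=
  Submodule.Quotient.mk ⟨x, hx⟩

lemma mkk_add {x y : MonoidAlgebra ℤ G} (hx : x ∈ augI G * relAug G T)
    (hy : y ∈ augI G * relAug G T) :
    mkk x hx + mkk y hy = mkk (x + y) (add_mem hx hy) := rfl

lemma mkk_eq_zero {x : MonoidAlgebra ℤ G} (hx : x ∈ augI G * relAug G T)
    (h : x ∈ augI G ^ 2 * relAug G T) : mkk x hx = 0 := by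
  rw [mkk, Submodule.Quotient.mk_eq_zero, Submodule.mem_comap]
  exact h

lemma mkk_eq {x y : MonoidAlgebra ℤ G} (hx : x ∈ augI G * relAug G T)
    (hy : y ∈ augI G * relAug G T) (h : x - y ∈ augI G ^ 2 * relAug G T) :
    mkk x hx = mkk y hy := by
  rw [mkk, mkk, Submodule.Quotient.eq]
  simpa [Submodule.mem_comap] using h

/-- `I(T)²/I(T)³ → Q₂`, induced by the inclusion. -/
noncomputable def Bone :
    (↥(relAug G T ^ 2) ⧸ (relAug G T ^ 3).comap (relAug G T ^ 2).subtype) →ₗ[ℤ]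
      (↥(augI G * relAug G T) ⧸
        ((augI G) ^ 2 * relAug G T).comap (augI G * relAug G T).subtype) :=
  Submodule.liftQ _
    ((Submodule.mkQ _).comp (Submodule.inclusion IT2_le_IGT)) (by
      intro y hy
      rw [Submodule.mem_comap] at hy
      rw [LinearMap.mem_ker, LinearMap.comp_apply, Submodule.mkQ_apply,
        Submodule.Quotient.mk_eq_zero, Submodule.mem_comap]
      exact IT3_le_I2T hy)

lemma Bone_mk {y : MonoidAlgebra ℤ G} (hy : y ∈ relAug G T ^ 2) :
    Bone (Submodule.Quotient.mk ⟨y, hy⟩) = mkk y (IT2_le_IGT hy) := by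
  rw [Bone, Submodule.liftQ_apply]
  rfl

/-- For fixed `n ∈ N`, the map `T →* Q₂`, `t ↦ (n-1)(t-1)`. -/
noncomputable def cT (n : ↥N) :
    ↥T →* Multiplicative (↥(augI G * relAug G T) ⧸
      ((augI G) ^ 2 * relAug G T).comap (augI G * relAug G T).subtype) :=
  MonoidHom.mk'
    (fun t => Multiplicative.ofAdd (mkk
      ((MonoidAlgebra.of ℤ G (n : G) - 1) * (MonoidAlgebra.of ℤ G (t : ↥T) - 1))
      (Submodule.mul_mem_mul (of_sub_one_mem _) (of_sub_one_mem_rel t.2))))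
    (fun t t' => by
      rw [← ofAdd_add]
      congr 1
      rw [mkk_add]
      apply mkk_eq
      have hid : (MonoidAlgebra.of ℤ G (n : G) - 1)
            * (MonoidAlgebra.of ℤ G ((t * t' : ↥T) : G) - 1)
          - ((MonoidAlgebra.of ℤ G (n : G) - 1) * (MonoidAlgebra.of ℤ G (t : ↥T) - 1)
            + (MonoidAlgebra.of ℤ G (n : G) - 1) * (MonoidAlgebra.of ℤ G (t' : ↥T) - 1))
          = (MonoidAlgebra.of ℤ G (n : G) - 1) * (MonoidAlgebra.of ℤ G (t : ↥T) - 1)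
            * (MonoidAlgebra.of ℤ G (t' : ↥T) - 1) := by
        rw [Subgroup.coe_mul, map_mul]; noncomm_ring
      rw [hid, pow_two]
      exact Submodule.mul_mem_mul
        (Submodule.mul_mem_mul (of_sub_one_mem _) (of_sub_one_mem _))
        (of_sub_one_mem_rel t'.2))

/-- For fixed `n ∈ N`, the linear map `T^{ab} → Q₂`. -/
noncomputable def cL (n : ↥N) :
    Additive (Abelianization ↥T) →ₗ[ℤ]
      (↥(augI G * relAug G T) ⧸
        ((augI G) ^ 2 * relAug G T).comap (augI G * relAug G T).subtype) :=
  (MonoidHom.toAdditiveLeft (Abelianization.lift (cT n))).toIntLinearMap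

lemma cL_tau (n : ↥N) (t : ↥T) :
    cL n (tau t) = mkk
      ((MonoidAlgebra.of ℤ G (n : G) - 1) * (MonoidAlgebra.of ℤ G (t : ↥T) - 1))
      (Submodule.mul_mem_mul (of_sub_one_mem _) (of_sub_one_mem_rel t.2)) := by
  simp [cL, tau, cT, MonoidHom.coe_toAdditiveLeft, Abelianization.lift_apply_of]

lemma cL_mul (n n' : ↥N) : cL (T := T) (n * n') = cL n + cL n' := by
  apply LinearMap.ext
  intro x
  obtain ⟨t, rfl⟩ := tau_surj x
  rw [LinearMap.add_apply, cL_tau, cL_tau, cL_tau, mkk_add]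
  apply mkk_eq
  have hid : (MonoidAlgebra.of ℤ G ((n * n' : ↥N) : G) - 1)
        * (MonoidAlgebra.of ℤ G (t : ↥T) - 1)
      - ((MonoidAlgebra.of ℤ G (n : G) - 1) * (MonoidAlgebra.of ℤ G (t : ↥T) - 1)
        + (MonoidAlgebra.of ℤ G (n' : G) - 1) * (MonoidAlgebra.of ℤ G (t : ↥T) - 1))
      = (MonoidAlgebra.of ℤ G (n : G) - 1) * (MonoidAlgebra.of ℤ G (n' : G) - 1)
        * (MonoidAlgebra.of ℤ G (t : ↥T) - 1) := by
    rw [Subgroup.coe_mul, map_mul]; noncomm_ring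
  rw [hid, pow_two]
  exact Submodule.mul_mem_mul
    (Submodule.mul_mem_mul (of_sub_one_mem _) (of_sub_one_mem _))
    (of_sub_one_mem_rel t.2)

lemma cL_ker {n : ↥N} (hc : (n : G) ∈ ⁅N, (⊤ : Subgroup G)⁆) : cL (T := T) n = 0 := by
  apply LinearMap.ext
  intro x
  obtain ⟨t, rfl⟩ := tau_surj x
  rw [cL_tau, LinearMap.zero_apply]
  apply mkk_eq_zero
  rw [pow_two]
  exact Submodule.mul_mem_mul (commutator_sub_one_mem hc) (of_sub_one_mem_rel t.2)

lemma cL_congr (α : ↥N → A) (hαadd : ∀ a b : ↥N, α (a * b) = α a + α b)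
    (hαker : ∀ a : ↥N, α a = 0 ↔ (a : G) ∈ ⁅N, (⊤ : Subgroup G)⁆)
    {n n' : ↥N} (h : α n = α n') : cL (T := T) n = cL n' := by
  have h0 : cL (T := T) (n * n'⁻¹) = 0 :=
    cL_ker ((hαker _).1 (by rw [hαadd, alpha_inv α hαadd, h, add_neg_cancel]))
  have h1 : cL (T := T) n = cL ((n * n'⁻¹) * n') := by rw [inv_mul_cancel_right]
  rw [h1, cL_mul, h0, zero_add]

/-- The map `A → Hom(T^{ab}, Q₂)` induced by `cL` via the surjection `α`. -/
noncomputable def Cbar (α : ↥N → A) (hαsurj : Function.Surjective α) (a : A) :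
    Additive (Abelianization ↥T) →ₗ[ℤ]
      (↥(augI G * relAug G T) ⧸
        ((augI G) ^ 2 * relAug G T).comap (augI G * relAug G T).subtype) :=
  cL (Classical.choose (hαsurj a))

lemma Cbar_alpha (α : ↥N → A) (hαadd : ∀ a b : ↥N, α (a * b) = α a + α b)
    (hαker : ∀ a : ↥N, α a = 0 ↔ (a : G) ∈ ⁅N, (⊤ : Subgroup G)⁆)
    (hαsurj : Function.Surjective α) (n : ↥N) :
    Cbar (T := T) α hαsurj (α n) = cL n :=
  cL_congr α hαadd hαker (Classical.choose_spec (hαsurj (α n)))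

lemma Cbar_add (α : ↥N → A) (hαadd : ∀ a b : ↥N, α (a * b) = α a + α b)
    (hαker : ∀ a : ↥N, α a = 0 ↔ (a : G) ∈ ⁅N, (⊤ : Subgroup G)⁆)
    (hαsurj : Function.Surjective α) (a b : A) :
    Cbar (T := T) α hαsurj (a + b) = Cbar α hαsurj a + Cbar α hαsurj b := by
  have hspec : ∀ c : A, α (Classical.choose (hαsurj c)) = c :=
    fun c => Classical.choose_spec (hαsurj c)
  have hab : α (Classical.choose (hαsurj a) * Classical.choose (hαsurj b)) = a + b := by
    rw [hαadd, hspec, hspec]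
  calc Cbar (T := T) α hαsurj (a + b)
      = cL (Classical.choose (hαsurj a) * Classical.choose (hαsurj b)) :=
        cL_congr α hαadd hαker (by rw [hspec, hab])
    _ = Cbar α hαsurj a + Cbar α hαsurj b := cL_mul _ _

/-- The map `A ⊗ T^{ab} → Q₂`. -/
noncomputable def Btwo (α : ↥N → A) (hαadd : ∀ a b : ↥N, α (a * b) = α a + α b)
    (hαker : ∀ a : ↥N, α a = 0 ↔ (a : G) ∈ ⁅N, (⊤ : Subgroup G)⁆)
    (hαsurj : Function.Surjective α) :
    (A ⊗[ℤ] Additive (Abelianization ↥T)) →ₗ[ℤ]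
      (↥(augI G * relAug G T) ⧸
        ((augI G) ^ 2 * relAug G T).comap (augI G * relAug G T).subtype) :=
  TensorProduct.lift
    ((AddMonoidHom.mk' (Cbar α hαsurj) (Cbar_add α hαadd hαker hαsurj)).toIntLinearMap)

lemma Btwo_tmul (α : ↥N → A) (hαadd : ∀ a b : ↥N, α (a * b) = α a + α b)
    (hαker : ∀ a : ↥N, α a = 0 ↔ (a : G) ∈ ⁅N, (⊤ : Subgroup G)⁆)
    (hαsurj : Function.Surjective α) (n : ↥N) (t : ↥T) :
    Btwo α hαadd hαker hαsurj (α n ⊗ₜ[ℤ] tau t)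
      = mkk ((MonoidAlgebra.of ℤ G (n : G) - 1) * (MonoidAlgebra.of ℤ G (t : ↥T) - 1))
        (Submodule.mul_mem_mul (of_sub_one_mem _) (of_sub_one_mem_rel t.2)) := by
  rw [Btwo]
  erw [TensorProduct.lift.tmul]
  show Cbar α hαsurj (α n) (tau t) = _
  rw [Cbar_alpha α hαadd hαker hαsurj, cL_tau]

lemma mkk_congr {x y : MonoidAlgebra ℤ G} (hx : x ∈ augI G * relAug G T)
    (hy : y ∈ augI G * relAug G T) (h : x = y) : mkk x hx = mkk y hy := by
  subst h; rfl

lemma mkk_zero : mkk (0 : MonoidAlgebra ℤ G) (zero_mem _)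
    = (0 : ↥(augI G * relAug G T) ⧸
        ((augI G) ^ 2 * relAug G T).comap (augI G * relAug G T).subtype) := rfl

lemma mkk_smul (a : ℤ) {x : MonoidAlgebra ℤ G} (hx : x ∈ augI G * relAug G T) :
    mkk (a • x) (Submodule.smul_mem _ a hx) = a • mkk x hx := rfl

lemma algE_gen (hdisj : N ⊓ T = ⊥) (hjoin : N ⊔ T = ⊤) (g : G) {t : G} (ht : t ∈ T) :
    algE hdisj hjoin ((MonoidAlgebra.of ℤ G g - 1) * (MonoidAlgebra.of ℤ G t - 1))
      = (MonoidAlgebra.of ℤ G (th hjoin g) - 1) * (MonoidAlgebra.of ℤ G t - 1) := by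
  rw [map_mul, map_sub, map_sub, map_one, algE_of, algE_of, th_of_mem_T hdisj hjoin ht]

/-- `Q₂ → I(T)²/I(T)³`, induced by `algE`. -/
noncomputable def Fone (hdisj : N ⊓ T = ⊥) (hjoin : N ⊔ T = ⊤) :
    (↥(augI G * relAug G T) ⧸
      ((augI G) ^ 2 * relAug G T).comap (augI G * relAug G T).subtype) →ₗ[ℤ]
    (↥(relAug G T ^ 2) ⧸ (relAug G T ^ 3).comap (relAug G T ^ 2).subtype) :=
  Submodule.liftQ _
    ((Submodule.mkQ _).comp ((algE hdisj hjoin).toLinearMap.restrict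
      (p := augI G * relAug G T) (q := relAug G T ^ 2)
      (fun x hx => map_IGT_le hdisj hjoin ⟨x, hx, rfl⟩)))
    (by
      intro y hy
      rw [Submodule.mem_comap] at hy
      rw [LinearMap.mem_ker, LinearMap.comp_apply, Submodule.mkQ_apply,
        Submodule.Quotient.mk_eq_zero, Submodule.mem_comap]
      rw [Submodule.subtype_apply, LinearMap.restrict_apply]
      exact map_IG2T_le hdisj hjoin ⟨(y : MonoidAlgebra ℤ G), hy, rfl⟩)

lemma Fone_mkk (hdisj : N ⊓ T = ⊥) (hjoin : N ⊔ T = ⊤) {x : MonoidAlgebra ℤ G}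
    (hx : x ∈ augI G * relAug G T) :
    Fone hdisj hjoin (mkk x hx)
      = Submodule.Quotient.mk
          ⟨algE hdisj hjoin x, map_IGT_le hdisj hjoin ⟨x, hx, rfl⟩⟩ := by
  rw [Fone, mkk, Submodule.liftQ_apply]
  rfl

/-- `Q₂ → A ⊗ T^{ab}`, induced by `Psi`. -/
noncomputable def Ftwo (hdisj : N ⊓ T = ⊥) (hjoin : N ⊔ T = ⊤) (α : ↥N → A)
    (hαadd : ∀ a b : ↥N, α (a * b) = α a + α b)
    (hαker : ∀ a : ↥N, α a = 0 ↔ (a : G) ∈ ⁅N, (⊤ : Subgroup G)⁆) :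
    (↥(augI G * relAug G T) ⧸
      ((augI G) ^ 2 * relAug G T).comap (augI G * relAug G T).subtype) →ₗ[ℤ]
    (A ⊗[ℤ] Additive (Abelianization ↥T)) :=
  Submodule.liftQ _ ((Psi hjoin α).comp (augI G * relAug G T).subtype)
    (by
      intro y hy
      rw [Submodule.mem_comap] at hy
      rw [LinearMap.mem_ker, LinearMap.comp_apply, Submodule.subtype_apply]
      exact LinearMap.mem_ker.mp (Psi_I2T_le hdisj hjoin α hαadd hαker hy))

lemma Ftwo_mkk (hdisj : N ⊓ T = ⊥) (hjoin : N ⊔ T = ⊤) (α : ↥N → A)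
    (hαadd : ∀ a b : ↥N, α (a * b) = α a + α b)
    (hαker : ∀ a : ↥N, α a = 0 ↔ (a : G) ∈ ⁅N, (⊤ : Subgroup G)⁆)
    {x : MonoidAlgebra ℤ G} (hx : x ∈ augI G * relAug G T) :
    Ftwo hdisj hjoin α hαadd hαker (mkk x hx) = Psi hjoin α x := by
  rw [Ftwo, mkk, Submodule.liftQ_apply]
  rfl

lemma Psi_gen (hdisj : N ⊓ T = ⊥) (hjoin : N ⊔ T = ⊤) (α : ↥N → A)
    (hαadd : ∀ a b : ↥N, α (a * b) = α a + α b) (g : G) {t : G} (ht : t ∈ T) :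
    Psi hjoin α ((MonoidAlgebra.of ℤ G g - 1) * (MonoidAlgebra.of ℤ G t - 1))
      = α (nuN hjoin g) ⊗ₜ[ℤ] tau ⟨t, ht⟩ := by
  have h : (MonoidAlgebra.of ℤ G g - 1) * (MonoidAlgebra.of ℤ G t - 1)
      = MonoidAlgebra.of ℤ G g * (MonoidAlgebra.of ℤ G t - 1)
        - MonoidAlgebra.of ℤ G 1 * (MonoidAlgebra.of ℤ G t - 1) := by
    rw [map_one]; noncomm_ring
  rw [h, map_sub, Psi_of_mul hdisj hjoin α g ht, Psi_of_mul hdisj hjoin α 1 ht,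
    alphaNu_of_mem_T hdisj hjoin α hαadd (one_mem T), zero_tmul, sub_zero]

lemma FB_left1 (hdisj : N ⊓ T = ⊥) (hjoin : N ⊔ T = ⊤) (y : ↥(relAug G T ^ 2)) :
    Fone hdisj hjoin (Bone (Submodule.Quotient.mk y)) = Submodule.Quotient.mk y := by
  have h2 : (y : MonoidAlgebra ℤ G) ∈ relAug G T * relAug G T := by
    rw [← pow_two]; exact y.2
  rw [show (Submodule.Quotient.mk y : ↥(relAug G T ^ 2) ⧸ _) = Submodule.Quotient.mk ⟨y.1, y.2⟩
      from rfl,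
    Bone_mk y.2, Fone_mkk]
  exact congrArg _ (Subtype.ext (algE_fix_IT2 hdisj hjoin h2))

lemma FB_left2 (hdisj : N ⊓ T = ⊥) (hjoin : N ⊔ T = ⊤) (α : ↥N → A)
    (hαadd : ∀ a b : ↥N, α (a * b) = α a + α b)
    (hαker : ∀ a : ↥N, α a = 0 ↔ (a : G) ∈ ⁅N, (⊤ : Subgroup G)⁆)
    (y : ↥(relAug G T ^ 2)) :
    Ftwo hdisj hjoin α hαadd hαker (Bone (Submodule.Quotient.mk y)) = 0 := by
  have h2 : (y : MonoidAlgebra ℤ G) ∈ relAug G T * relAug G T := by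
    rw [← pow_two]; exact y.2
  rw [show (Submodule.Quotient.mk y : ↥(relAug G T ^ 2) ⧸ _) = Submodule.Quotient.mk ⟨y.1, y.2⟩
      from rfl,
    Bone_mk y.2, Ftwo_mkk]
  exact Psi_IT2 hdisj hjoin α hαadd h2

lemma FB_right1 (hdisj : N ⊓ T = ⊥) (hjoin : N ⊔ T = ⊤) (α : ↥N → A)
    (hαadd : ∀ a b : ↥N, α (a * b) = α a + α b)
    (hαker : ∀ a : ↥N, α a = 0 ↔ (a : G) ∈ ⁅N, (⊤ : Subgroup G)⁆)
    (hαsurj : Function.Surjective α) (n : ↥N) (t : ↥T) :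
    Fone hdisj hjoin (Btwo α hαadd hαker hαsurj (α n ⊗ₜ[ℤ] tau t)) = 0 := by
  rw [Btwo_tmul α hαadd hαker hαsurj, Fone_mkk]
  have heq : algE hdisj hjoin
      ((MonoidAlgebra.of ℤ G (n : G) - 1) * (MonoidAlgebra.of ℤ G (t : ↥T) - 1)) = 0 := by
    rw [algE_gen hdisj hjoin (n : G) t.2, th_of_mem_N hdisj hjoin n.2, map_one, sub_self,
      zero_mul]
  rw [show (⟨algE hdisj hjoin
        ((MonoidAlgebra.of ℤ G (n : G) - 1) * (MonoidAlgebra.of ℤ G (t : ↥T) - 1)), _⟩ :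
      ↥(relAug G T ^ 2)) = 0 from Subtype.ext heq]
  exact (Submodule.Quotient.mk_eq_zero _).2 (zero_mem _)

lemma FB_right2 (hdisj : N ⊓ T = ⊥) (hjoin : N ⊔ T = ⊤) (α : ↥N → A)
    (hαadd : ∀ a b : ↥N, α (a * b) = α a + α b)
    (hαker : ∀ a : ↥N, α a = 0 ↔ (a : G) ∈ ⁅N, (⊤ : Subgroup G)⁆)
    (hαsurj : Function.Surjective α) (n : ↥N) (t : ↥T) :
    Ftwo hdisj hjoin α hαadd hαker (Btwo α hαadd hαker hαsurj (α n ⊗ₜ[ℤ] tau t))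
      = α n ⊗ₜ[ℤ] tau t := by
  rw [Btwo_tmul α hαadd hαker hαsurj, Ftwo_mkk, Psi_gen hdisj hjoin α hαadd (n : G) t.2]
  have h1 : α (nuN hjoin (n : G)) = α n := alphaNu_of_mem_N hdisj hjoin α n.2
  rw [h1]

lemma BF_gen (hdisj : N ⊓ T = ⊥) (hjoin : N ⊔ T = ⊤) (α : ↥N → A)
    (hαadd : ∀ a b : ↥N, α (a * b) = α a + α b)
    (hαker : ∀ a : ↥N, α a = 0 ↔ (a : G) ∈ ⁅N, (⊤ : Subgroup G)⁆)
    (hαsurj : Function.Surjective α) (g : G) {t : G} (ht : t ∈ T)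
    (h : (MonoidAlgebra.of ℤ G g - 1) * (MonoidAlgebra.of ℤ G t - 1)
      ∈ augI G * relAug G T) :
    Bone (Fone hdisj hjoin (mkk _ h))
      + Btwo α hαadd hαker hαsurj (Ftwo hdisj hjoin α hαadd hαker (mkk _ h))
      = mkk _ h := by
  rw [Fone_mkk, Ftwo_mkk]
  have hmem2 : (MonoidAlgebra.of ℤ G (th hjoin g) - 1) * (MonoidAlgebra.of ℤ G t - 1)
      ∈ relAug G T ^ 2 := by
    rw [pow_two]
    exact Submodule.mul_mem_mul (of_sub_one_mem_rel (th_mem hjoin g)) (of_sub_one_mem_rel ht)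
  have e1 : (⟨algE hdisj hjoin ((MonoidAlgebra.of ℤ G g - 1) * (MonoidAlgebra.of ℤ G t - 1)),
        map_IGT_le hdisj hjoin ⟨_, h, rfl⟩⟩ : ↥(relAug G T ^ 2))
      = ⟨(MonoidAlgebra.of ℤ G (th hjoin g) - 1) * (MonoidAlgebra.of ℤ G t - 1), hmem2⟩ :=
    Subtype.ext (algE_gen hdisj hjoin g ht)
  rw [e1, Bone_mk hmem2, Psi_gen hdisj hjoin α hαadd g ht,
    Btwo_tmul α hαadd hαker hαsurj (nuN hjoin g) ⟨t, ht⟩, mkk_add]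
  apply mkk_eq
  have hco : ((nuN hjoin g : ↥N) : G) = nu hjoin g := rfl
  have hg : MonoidAlgebra.of ℤ G g
      = MonoidAlgebra.of ℤ G (nu hjoin g) * MonoidAlgebra.of ℤ G (th hjoin g) := by
    rw [← map_mul, nu_mul_th]
  have hid : (MonoidAlgebra.of ℤ G (th hjoin g) - 1) * (MonoidAlgebra.of ℤ G t - 1)
        + (MonoidAlgebra.of ℤ G ((nuN hjoin g : ↥N) : G) - 1) * (MonoidAlgebra.of ℤ G t - 1)
        - (MonoidAlgebra.of ℤ G g - 1) * (MonoidAlgebra.of ℤ G t - 1)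
      = -((MonoidAlgebra.of ℤ G (nu hjoin g) - 1)
          * (MonoidAlgebra.of ℤ G (th hjoin g) - 1) * (MonoidAlgebra.of ℤ G t - 1)) := by
    rw [hco, hg]; noncomm_ring
  rw [hid]
  refine neg_mem ?_
  rw [pow_two]
  exact Submodule.mul_mem_mul
    (Submodule.mul_mem_mul (of_sub_one_mem _) (of_sub_one_mem _)) (of_sub_one_mem_rel ht)

set_option maxHeartbeats 1000000 in
lemma BF_main (hdisj : N ⊓ T = ⊥) (hjoin : N ⊔ T = ⊤) (α : ↥N → A)
    (hαadd : ∀ a b : ↥N, α (a * b) = α a + α b)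
    (hαker : ∀ a : ↥N, α a = 0 ↔ (a : G) ∈ ⁅N, (⊤ : Subgroup G)⁆)
    (hαsurj : Function.Surjective α) {v : MonoidAlgebra ℤ G}
    (hv : v ∈ augI G * relAug G T) :
    ∀ h : v ∈ augI G * relAug G T,
      Bone (Fone hdisj hjoin (mkk v h))
        + Btwo α hαadd hαker hαsurj (Ftwo hdisj hjoin α hαadd hαker (mkk v h))
      = mkk v h := by
  induction hv using Submodule.mul_induction_on' with
  | mem_mul_mem m hm w hw =>
    rw [relAug] at hw
    induction hw using Submodule.span_induction with
    | mem x hx =>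
      obtain ⟨t, ht, rfl⟩ := hx
      rw [augI] at hm
      induction hm using Submodule.span_induction with
      | mem y hy =>
        obtain ⟨g, rfl⟩ := hy
        intro h
        exact BF_gen hdisj hjoin α hαadd hαker hαsurj g ht h
      | zero =>
        intro h
        rw [mkk_congr h (zero_mem _) (zero_mul _), mkk_zero, map_zero, map_zero, map_zero,
          map_zero, add_zero]
      | add x y hx hy ihx ihy =>
        intro h
        have hxm : x * (MonoidAlgebra.of ℤ G t - 1) ∈ augI G * relAug G T :=
          Submodule.mul_mem_mul hx (of_sub_one_mem_rel ht)
        have hym : y * (MonoidAlgebra.of ℤ G t - 1) ∈ augI G * relAug G T :=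
          Submodule.mul_mem_mul hy (of_sub_one_mem_rel ht)
        rw [mkk_congr h (add_mem hxm hym) (add_mul _ _ _), ← mkk_add hxm hym, map_add,
          map_add, map_add, map_add]
        have := ihx hxm
        have := ihy hym
        calc _ = (Bone (Fone hdisj hjoin (mkk _ hxm))
              + Btwo α hαadd hαker hαsurj (Ftwo hdisj hjoin α hαadd hαker (mkk _ hxm)))
            + (Bone (Fone hdisj hjoin (mkk _ hym))
              + Btwo α hαadd hαker hαsurj (Ftwo hdisj hjoin α hαadd hαker (mkk _ hym))) := by
              abel
        _ = mkk _ hxm + mkk _ hym := by rw [ihx hxm, ihy hym]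
      | smul a x hx ih =>
        intro h
        have hxm : x * (MonoidAlgebra.of ℤ G t - 1) ∈ augI G * relAug G T :=
          Submodule.mul_mem_mul hx (of_sub_one_mem_rel ht)
        rw [mkk_congr h (Submodule.smul_mem _ a hxm) (smul_mul_assoc _ _ _), mkk_smul,
          map_smul, map_smul, map_smul, map_smul, ← smul_add, ih hxm]
    | zero =>
      intro h
      rw [mkk_congr h (zero_mem _) (mul_zero _), mkk_zero, map_zero, map_zero, map_zero,
        map_zero, add_zero]
    | add x y hx hy ihx ihy =>
      intro h
      have hxm : m * x ∈ augI G * relAug G T := Submodule.mul_mem_mul hm hx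
      have hym : m * y ∈ augI G * relAug G T := Submodule.mul_mem_mul hm hy
      rw [mkk_congr h (add_mem hxm hym) (mul_add _ _ _), ← mkk_add hxm hym, map_add,
        map_add, map_add, map_add]
      calc _ = (Bone (Fone hdisj hjoin (mkk _ hxm))
            + Btwo α hαadd hαker hαsurj (Ftwo hdisj hjoin α hαadd hαker (mkk _ hxm)))
          + (Bone (Fone hdisj hjoin (mkk _ hym))
            + Btwo α hαadd hαker hαsurj (Ftwo hdisj hjoin α hαadd hαker (mkk _ hym))) := by
            abel
      _ = mkk _ hxm + mkk _ hym := by rw [ihx hxm, ihy hym]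
    | smul a x hx ih =>
      intro h
      have hxm : m * x ∈ augI G * relAug G T := Submodule.mul_mem_mul hm hx
      rw [mkk_congr h (Submodule.smul_mem _ a hxm) (mul_smul_comm _ _ _), mkk_smul,
        map_smul, map_smul, map_smul, map_smul, ← smul_add, ih hxm]
  | add x hx y hy ihx ihy =>
    intro h
    rw [mkk_congr h (add_mem hx hy) rfl, ← mkk_add hx hy, map_add, map_add, map_add, map_add]
    calc _ = (Bone (Fone hdisj hjoin (mkk _ hx))
          + Btwo α hαadd hαker hαsurj (Ftwo hdisj hjoin α hαadd hαker (mkk _ hx)))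
        + (Bone (Fone hdisj hjoin (mkk _ hy))
          + Btwo α hαadd hαker hαsurj (Ftwo hdisj hjoin α hαadd hαker (mkk _ hy))) := by
          abel
    _ = mkk _ hx + mkk _ hy := by rw [ihx hx, ihy hy]

end Main

end Stmt17

/-- for `G = N ⋊ T`, `Q₂(G,T) = I(G)I(T)/I(G)²I(T)` is naturally
isomorphic to `U₂L(T) ⊕ (N^{AB} ⊗ T^{ab})`.  Here `A` realizes `N^{AB} = N/[N,G]` (via
the surjection `α` with kernel `[N,G]`), `T^{ab}` is the abelianization of `T`, and the
degree-2 part `U₂L(T)` of the enveloping algebra of the Lie ring of `T` is taken in its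
canonical realization `I(T)²/I(T)³` (Bachmann–Gruenenfelder: `θ₂ : U₂L(T) ≅ I(T)²/I(T)³`
for every group `T`). -/
theorem stmt17 {G A : Type*} [Group G] [AddCommGroup A]
    (N T : Subgroup G) [N.Normal] (hdisj : N ⊓ T = ⊥) (hjoin : N ⊔ T = ⊤)
    (α : ↥N → A) (hαadd : ∀ a b : ↥N, α (a * b) = α a + α b)
    (hαsurj : Function.Surjective α)
    (hαker : ∀ a : ↥N, α a = 0 ↔ (a : G) ∈ ⁅N, (⊤ : Subgroup G)⁆) :
    Nonempty
      ((↥(augI G * relAug G T) ⧸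
          ((augI G) ^ 2 * relAug G T).comap (augI G * relAug G T).subtype) ≃ₗ[ℤ]
        ((↥((relAug G T) ^ 2) ⧸
            ((relAug G T) ^ 3).comap ((relAug G T) ^ 2).subtype) ×
          (A ⊗[ℤ] Additive (Abelianization ↥T)))) := by
  classical
  refine ⟨LinearEquiv.ofLinear
    ((Stmt17.Fone hdisj hjoin).prod (Stmt17.Ftwo hdisj hjoin α hαadd hαker))
    ((Stmt17.Bone).coprod (Stmt17.Btwo α hαadd hαker hαsurj)) ?_ ?_⟩
  · rw [LinearMap.comp_coprod, ← LinearMap.coprod_inl_inr]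
    congr 1
    · apply LinearMap.ext
      intro q
      obtain ⟨y, rfl⟩ := Submodule.mkQ_surjective _ q
      rw [LinearMap.comp_apply, Submodule.mkQ_apply, LinearMap.prod_apply]
      refine Prod.ext ?_ ?_
      · simpa using Stmt17.FB_left1 hdisj hjoin y
      · simpa using Stmt17.FB_left2 hdisj hjoin α hαadd hαker y
    · apply TensorProduct.ext'
      intro a b
      obtain ⟨n, rfl⟩ := hαsurj a
      obtain ⟨t, rfl⟩ := Stmt17.tau_surj b
      erw [LinearMap.comp_apply, LinearMap.prod_apply, LinearMap.inr_apply]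
      refine Prod.ext ?_ ?_
      · simpa using Stmt17.FB_right1 hdisj hjoin α hαadd hαker hαsurj n t
      · simpa using Stmt17.FB_right2 hdisj hjoin α hαadd hαker hαsurj n t
  · apply LinearMap.ext
    intro q
    obtain ⟨y, rfl⟩ := Submodule.mkQ_surjective _ q
    rw [LinearMap.comp_apply, LinearMap.id_apply, LinearMap.prod_apply,
      Submodule.mkQ_apply, LinearMap.coprod_apply]
    exact Stmt17.BF_main hdisj hjoin α hαadd hαker hαsurj y.2 y.2
end
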